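/- arXiv:2006.15737 — 8 statements merged into one kernel-verified Lean document; each statement's English description precedes it below -/
import Mathlib

section
/- If G is a finite p-group and N is a normal subgroup of G of index p^i with i ≥ 2, then K_i(G) ≤ N, where K_i(G) is the i-th term of the lower central series. -/
lemma aux_class_bound {p : ℕ} (hp : Fact p.Prime) :
    ∀ i : ℕ, ∀ (Q : Type u) (_ : Group Q) (_ : Finite Q),
      Nat.card Q = p ^ i → (⊤ : Subgroup Q).lowerCentralSeries (max (i - 1) 1) = ⊥ := by
  intro i
  induction i using Nat.strong_induction_on with
  | _ i ih =>
    intro Q _ _ hcard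
    haveI : IsPGroup p Q := IsPGroup.of_card hcard
    haveI : _root_.Group.IsNilpotent Q := IsPGroup.isNilpotent ‹IsPGroup p Q›
    rw [lowerCentralSeries_eq_bot_iff_nilpotencyClass_le]
    rcases Nat.eq_zero_or_pos i with rfl | hi0
    · haveI : Subsingleton Q := by
        have h1 : Nat.card Q = 1 := by simpa using hcard
        exact (Nat.card_eq_one_iff_unique.mp h1).1
      have := nilpotencyClass_zero_iff_subsingleton (G := Q) |>.mpr ‹_›
      omega
    -- i ≥ 1
    obtain ⟨k, hk0, hkcard⟩ := IsPGroup.card_center_eq_prime_pow hcard hi0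
    have hdvd : p ^ k ∣ p ^ i := hkcard ▸ (hcard ▸ Subgroup.card_subgroup_dvd_card _)
    have hki : k ≤ i := (Nat.pow_dvd_pow_iff_le_right hp.out.one_lt).mp hdvd
    have hqcard : Nat.card (Q ⧸ Subgroup.center Q) = p ^ (i - k) := by
      have h1 : (Subgroup.center Q).index * Nat.card (Subgroup.center Q) = Nat.card Q :=
        Subgroup.index_mul_card _
      have h2 : Nat.card (Q ⧸ Subgroup.center Q) = (Subgroup.center Q).index := rfl
      rw [h2]
      have hppos : 0 < p ^ k := pow_pos hp.out.pos k
      have : (Subgroup.center Q).index * p ^ k = p ^ i := by rw [← hkcard, h1, hcard]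
      have h3 : p ^ (i - k) * p ^ k = p ^ i := by
        rw [← pow_add]; congr 1; omega
      exact Nat.eq_of_mul_eq_mul_right hppos (by rw [this, h3])
    rcases le_or_gt (i - k) 1 with hle | hgt
    · -- quotient by center is cyclic
      haveI : IsCyclic (Q ⧸ Subgroup.center Q) := by
        rcases Nat.lt_or_ge (i - k) 1 with h | h
        · have : Nat.card (Q ⧸ Subgroup.center Q) = 1 := by
            rw [hqcard]; interval_cases (i - k) <;> simp
          haveI : Subsingleton (Q ⧸ Subgroup.center Q) :=
            (Nat.card_eq_one_iff_unique.mp this).1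
          infer_instance
        · have hik : i - k = 1 := le_antisymm hle h
          exact isCyclic_of_prime_card (p := p) (by rw [hqcard, hik, pow_one])
      have hcomm : ∀ a b : Q, a * b = b * a :=
        commutative_of_cyclic_center_quotient (QuotientGroup.mk' (Subgroup.center Q))
          (by rw [QuotientGroup.ker_mk'])
      letI : CommGroup Q := { ‹Group Q› with mul_comm := hcomm }
      have := CommGroup.nilpotencyClass_le_one (G := Q)
      omega
    · -- i - k ≥ 2, use induction
      have hlt : i - k < i := by omega
      have hih := ih (i - k) hlt (Q ⧸ Subgroup.center Q) inferInstance inferInstance hqcard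
      rw [lowerCentralSeries_eq_bot_iff_nilpotencyClass_le] at hih
      have hqc : Group.nilpotencyClass (Q ⧸ Subgroup.center Q) =
          Group.nilpotencyClass Q - 1 := nilpotencyClass_quotient_center
      omega

/-- If `G` is a finite `p`-group and `N ⊴ G` has index `p ^ i` with `i ≥ 2`, then
`K_i(G) ≤ N`, where `K_i(G)` (with `K_1(G) = G`) is the `i`-th term of the lower
central series, i.e. `K_i(G) = lowerCentralSeries G (i - 1)`. -/
theorem stmt_3 {p : ℕ} (hp : p.Prime) (G : Type*) [Group G] [Finite G]
    (hpG : IsPGroup p G) (N : Subgroup G) (hN : N.Normal) (i : ℕ) (hi : 2 ≤ i)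
    (hidx : N.index = p ^ i) :
    (⊤ : Subgroup G).lowerCentralSeries (i - 1) ≤ N := by
  haveI := Fact.mk hp
  have hqcard : Nat.card (G ⧸ N) = p ^ i := by rw [← hidx]; rfl
  have hclass := aux_class_bound ‹Fact p.Prime› i (G ⧸ N) inferInstance inferInstance hqcard
  have hbot : (⊤ : Subgroup (G ⧸ N)).lowerCentralSeries (i - 1) = ⊥ := by
    have : max (i - 1) 1 = i - 1 := by omega
    rwa [this] at hclass
  have hmap := lowerCentralSeries.map (QuotientGroup.mk' N) (i - 1)
  rw [hbot, le_bot_iff, Subgroup.map_eq_bot_iff, QuotientGroup.ker_mk'] at hmap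
  exact hmap
end

section
/- Let G be a p-group of maximal class and order p^m. If N is a normal subgroup of G of index p^i with 2 ≤ i ≤ m, then N = K_i(G). In particular, for each 1 ≤ i < m−1, G has exactly one normal subgroup of order p^i. -/
section Helpers

open Subgroup

variable {Q : Type*} [Group Q]

private lemma lcs_const_of_eq {n : ℕ}
    (h : Subgroup.lowerCentralSeries (⊤ : Subgroup Q) (n + 1) = Subgroup.lowerCentralSeries (⊤ : Subgroup Q) n) :
    ∀ j, Subgroup.lowerCentralSeries (⊤ : Subgroup Q) (n + j) = Subgroup.lowerCentralSeries (⊤ : Subgroup Q) n := by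
  intro j
  induction j with
  | zero => rfl
  | succ j ih =>
    have : Subgroup.lowerCentralSeries (⊤ : Subgroup Q) (n + (j + 1)) = ⁅Subgroup.lowerCentralSeries (⊤ : Subgroup Q) (n + j), ⊤⁆ := rfl
    rw [this, ih]
    have h2 : Subgroup.lowerCentralSeries (⊤ : Subgroup Q) (n + 1) = ⁅Subgroup.lowerCentralSeries (⊤ : Subgroup Q) n, ⊤⁆ := rfl
    rw [← h2, h]

private lemma lcs_lt_of_ne_bot [Group.IsNilpotent Q] {n : ℕ}
    (h : Subgroup.lowerCentralSeries (⊤ : Subgroup Q) n ≠ ⊥) :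
    Subgroup.lowerCentralSeries (⊤ : Subgroup Q) (n + 1) < Subgroup.lowerCentralSeries (⊤ : Subgroup Q) n := by
  refine lt_of_le_of_ne (Subgroup.lowerCentralSeries_antitone ⊤ n.le_succ) (fun he => h ?_)
  have h2 := lcs_const_of_eq he (Group.nilpotencyClass Q)
  have h3 : Subgroup.lowerCentralSeries (⊤ : Subgroup Q) (n + Group.nilpotencyClass Q) ≤
      Subgroup.lowerCentralSeries (⊤ : Subgroup Q) (Group.nilpotencyClass Q) :=
    Subgroup.lowerCentralSeries_antitone ⊤ (Nat.le_add_left _ _)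
  rw [h2, Subgroup.lowerCentralSeries_nilpotencyClass] at h3
  exact le_bot_iff.mp h3

private lemma class_le_one_of_comm [Group.IsNilpotent Q] (h : ∀ a b : Q, a * b = b * a) :
    Group.nilpotencyClass Q ≤ 1 := by
  apply Subgroup.upperCentralSeries_eq_top_iff_nilpotencyClass_le.mp
  rw [Subgroup.upperCentralSeries_one, eq_top_iff]
  exact fun x _ => Subgroup.mem_center_iff.mpr fun y => h y x

private lemma class_le_one_of_isCyclic [Group.IsNilpotent Q] [IsCyclic Q] :
    Group.nilpotencyClass Q ≤ 1 := by
  refine class_le_one_of_comm (commutative_of_cyclic_center_quotient (MonoidHom.id Q) ?_)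
  intro x hx
  rw [MonoidHom.mem_ker, MonoidHom.id_apply] at hx
  subst hx
  exact Subgroup.one_mem _

/-- A finite `p`-group of order `p ^ a` with `a ≥ 2` has nilpotency class at most `a - 1`. -/
private lemma maxclass_bound {p : ℕ} (hp : p.Prime) :
    ∀ a : ℕ, ∀ (Q : Type*) [Group Q] [Finite Q] [Group.IsNilpotent Q], Nat.card Q = p ^ a → 2 ≤ a →
      Group.nilpotencyClass Q ≤ a - 1 := by
  intro a
  induction a using Nat.strong_induction_on with
  | _ a ih =>
    intro Q _ _ _ hQ ha
    haveI : Fact p.Prime := ⟨hp⟩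
    have hpg : IsPGroup p Q := IsPGroup.of_card hQ
    haveI : Nontrivial Q := Finite.one_lt_card_iff_nontrivial.mp
      (by rw [hQ]; exact Nat.one_lt_pow (by omega) hp.one_lt)
    haveI : Nontrivial (Subgroup.center Q) := hpg.center_nontrivial
    obtain ⟨k, hk, hZ⟩ := (Nat.dvd_prime_pow hp).mp
      (hQ ▸ Subgroup.card_subgroup_dvd_card (Subgroup.center Q))
    have hk1 : 1 ≤ k := by
      by_contra h
      have h0 : k = 0 := by omega
      rw [h0, pow_zero] at hZ
      exact absurd hZ (Finite.one_lt_card_iff_nontrivial.mpr ‹_›).ne'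
    have hq : Nat.card (Q ⧸ Subgroup.center Q) = p ^ (a - k) := by
      have h := Subgroup.card_eq_card_quotient_mul_card_subgroup (Subgroup.center Q)
      rw [hQ, hZ] at h
      have h2 : Nat.card (Q ⧸ Subgroup.center Q) * p ^ k = p ^ (a - k) * p ^ k := by
        rw [← h, ← pow_add]
        congr 1
        omega
      exact Nat.eq_of_mul_eq_mul_right (pow_pos hp.pos k) h2
    by_cases hc : IsCyclic (Q ⧸ Subgroup.center Q)
    · have hcomm := commutative_of_cyclic_center_quotient
        (QuotientGroup.mk' (Subgroup.center Q)) (le_of_eq (QuotientGroup.ker_mk' _))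
      have h1 := class_le_one_of_comm hcomm
      omega
    · have hak : 2 ≤ a - k := by
        by_contra h
        apply hc
        rcases (by omega : a - k = 0 ∨ a - k = 1) with h0 | h1
        · rw [h0, pow_zero] at hq
          haveI : Subsingleton (Q ⧸ Subgroup.center Q) :=
            (Nat.card_eq_one_iff_unique.mp hq).1
          infer_instance
        · exact isCyclic_of_prime_card (hq.trans (by rw [h1, pow_one]))
      have hih := ih (a - k) (by omega) (Q ⧸ Subgroup.center Q) hq hak
      rw [Group.nilpotencyClass_eq_quotient_center_plus_one]
      omega

end Helpers

open scoped commutatorElement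

/-- Let `G` be a `p`-group of maximal class and order `p ^ m`. If `N ⊴ G` has index
`p ^ i` with `2 ≤ i ≤ m`, then `N = K_i(G) = Subgroup.lowerCentralSeries (⊤ : Subgroup G) (i - 1)`.
In particular, for each `1 ≤ i < m - 1`, `G` has exactly one normal subgroup of
order `p ^ i`. -/
theorem stmt_5 {p m : ℕ} (hp : p.Prime) (hm : 3 ≤ m) (G : Type*) [Group G]
    (hG : Nat.card G = p ^ m)
    (hcl : upperCentralSeries G (m - 1) = ⊤) (hcl' : upperCentralSeries G (m - 2) ≠ ⊤) :
    (∀ N : Subgroup G, N.Normal → ∀ i : ℕ, 2 ≤ i → i ≤ m → N.index = p ^ i →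
        N = Subgroup.lowerCentralSeries (⊤ : Subgroup G) (i - 1)) ∧
    (∀ i : ℕ, 1 ≤ i → i < m - 1 →
        ∃! N : Subgroup G, N.Normal ∧ Nat.card N = p ^ i) := by
  haveI : Fact p.Prime := ⟨hp⟩
  have hp1 : 1 < p := hp.one_lt
  haveI hfin : Finite G := Nat.finite_of_card_ne_zero (by
    rw [hG]; exact (pow_pos hp.pos m).ne')
  haveI hnil : Group.IsNilpotent G := ⟨m - 1, hcl⟩
  have hclass : Group.nilpotencyClass G = m - 1 := by
    refine le_antisymm (upperCentralSeries_eq_top_iff_nilpotencyClass_le.mp hcl) ?_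
    by_contra h
    push_neg at h
    exact hcl' (upperCentralSeries_eq_top_iff_nilpotencyClass_le.mpr (by omega))
  have hlcs_top : Subgroup.lowerCentralSeries (⊤ : Subgroup G) (m - 1) = ⊥ :=
    lowerCentralSeries_eq_bot_iff_nilpotencyClass_le.mpr hclass.le
  have hlcs_ne : ∀ n, n ≤ m - 2 → Subgroup.lowerCentralSeries (⊤ : Subgroup G) n ≠ ⊥ := by
    intro n hn h
    have := lowerCentralSeries_eq_bot_iff_nilpotencyClass_le.mp h
    omega
  -- lower bound on cards of the lower central series
  have hlow0 : ∀ j, j ≤ m - 1 → p ^ j ≤ Nat.card (Subgroup.lowerCentralSeries (⊤ : Subgroup G) (m - 1 - j)) := by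
    intro j
    induction j with
    | zero => intro _; rw [pow_zero]; exact Nat.card_pos
    | succ j ih =>
      intro hj
      have ihj := ih (by omega)
      have hst : Subgroup.lowerCentralSeries (⊤ : Subgroup G) (m - 1 - j) < Subgroup.lowerCentralSeries (⊤ : Subgroup G) (m - 1 - (j + 1)) := by
        have h := lcs_lt_of_ne_bot (Q := G) (hlcs_ne (m - 1 - (j + 1)) (by omega))
        rwa [show m - 1 - (j + 1) + 1 = m - 1 - j by omega] at h
      obtain ⟨s, hs, hcs⟩ := (Nat.dvd_prime_pow hp).mp
        (hG ▸ Subgroup.card_subgroup_dvd_card (Subgroup.lowerCentralSeries (⊤ : Subgroup G) (m - 1 - (j + 1))))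
      obtain ⟨t, ht, hct⟩ := (Nat.dvd_prime_pow hp).mp
        (hG ▸ Subgroup.card_subgroup_dvd_card (Subgroup.lowerCentralSeries (⊤ : Subgroup G) (m - 1 - j)))
      have hjt : p ^ j ≤ p ^ t := hct ▸ ihj
      have hjt' : j ≤ t := (Nat.pow_le_pow_iff_right hp1).mp hjt
      have hts : p ^ t ≤ p ^ s := by
        rw [← hcs, ← hct]
        exact Subgroup.card_le_of_le hst.le
      have hne : Nat.card (Subgroup.lowerCentralSeries (⊤ : Subgroup G) (m - 1 - j)) ≠
          Nat.card (Subgroup.lowerCentralSeries (⊤ : Subgroup G) (m - 1 - (j + 1))) := by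
        intro h
        exact hst.ne (Subgroup.eq_of_le_of_card_ge hst.le h.ge)
      have hts' : t < s := by
        have h1 : t ≤ s := (Nat.pow_le_pow_iff_right hp1).mp hts
        rcases lt_or_eq_of_le h1 with h | h
        · exact h
        · exact absurd (hct.trans ((h ▸ hcs).symm)) hne
      calc p ^ (j + 1) ≤ p ^ s := Nat.pow_le_pow_right hp.pos (by omega)
        _ = _ := hcs.symm
  have hlow : ∀ k, k ≤ m - 1 → p ^ (m - 1 - k) ≤ Nat.card (Subgroup.lowerCentralSeries (⊤ : Subgroup G) k) := by
    intro k hk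
    have := hlow0 (m - 1 - k) (by omega)
    rwa [show m - 1 - (m - 1 - k) = k by omega] at this
  -- G / γ₁ is not cyclic
  have hQ1 : ¬IsCyclic (G ⧸ Subgroup.lowerCentralSeries (⊤ : Subgroup G) 1) := by
    intro hcyc
    have hle : Subgroup.lowerCentralSeries (⊤ : Subgroup G) 2 ≤ Subgroup.lowerCentralSeries (⊤ : Subgroup G) 1 :=
      lowerCentralSeries_antitone ⊤ one_le_two
    let f : (G ⧸ Subgroup.lowerCentralSeries (⊤ : Subgroup G) 2) →* (G ⧸ Subgroup.lowerCentralSeries (⊤ : Subgroup G) 1) :=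
      QuotientGroup.map _ _ (MonoidHom.id G) (by simpa using hle)
    have hker : f.ker ≤ Subgroup.center (G ⧸ Subgroup.lowerCentralSeries (⊤ : Subgroup G) 2) := by
      intro q hq
      obtain ⟨x, rfl⟩ := QuotientGroup.mk_surjective q
      rw [MonoidHom.mem_ker] at hq
      have hx : x ∈ Subgroup.lowerCentralSeries (⊤ : Subgroup G) 1 := by
        rwa [show f (QuotientGroup.mk x) = QuotientGroup.mk x from rfl,
          QuotientGroup.eq_one_iff] at hq
      rw [Subgroup.mem_center_iff]
      intro q'
      obtain ⟨y, rfl⟩ := QuotientGroup.mk_surjective q'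
      have hcom : ⁅y, x⁆ ∈ Subgroup.lowerCentralSeries (⊤ : Subgroup G) 2 := by
        have h2 : Subgroup.lowerCentralSeries (⊤ : Subgroup G) 2 = ⁅Subgroup.lowerCentralSeries (⊤ : Subgroup G) 1, (⊤ : Subgroup G)⁆ := rfl
        rw [h2, Subgroup.commutator_comm]
        exact Subgroup.commutator_mem_commutator (Subgroup.mem_top y) hx
      have : ((⁅y, x⁆ : G) : G ⧸ Subgroup.lowerCentralSeries (⊤ : Subgroup G) 2) = 1 :=
        (QuotientGroup.eq_one_iff _).mpr hcom
      rw [show ((⁅y, x⁆ : G) : G ⧸ Subgroup.lowerCentralSeries (⊤ : Subgroup G) 2) =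
          ⁅(y : G ⧸ Subgroup.lowerCentralSeries (⊤ : Subgroup G) 2), (x : G ⧸ Subgroup.lowerCentralSeries (⊤ : Subgroup G) 2)⁆ from
          map_commutatorElement (QuotientGroup.mk' _) y x] at this
      exact commutatorElement_eq_one_iff_mul_comm.mp this
    have hcomm := commutative_of_cyclic_center_quotient f hker
    have hle12 : Subgroup.lowerCentralSeries (⊤ : Subgroup G) 1 ≤ Subgroup.lowerCentralSeries (⊤ : Subgroup G) 2 := by
      rw [lowerCentralSeries_one]
      rw [commutator]
      rw [Subgroup.commutator_le]
      intro g1 _ g2 _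
      have h1 : ((⁅g1, g2⁆ : G) : G ⧸ Subgroup.lowerCentralSeries (⊤ : Subgroup G) 2) =
          ⁅(g1 : G ⧸ Subgroup.lowerCentralSeries (⊤ : Subgroup G) 2), (g2 : G ⧸ Subgroup.lowerCentralSeries (⊤ : Subgroup G) 2)⁆ :=
        map_commutatorElement (QuotientGroup.mk' _) g1 g2
      have h2 : (⁅(g1 : G ⧸ Subgroup.lowerCentralSeries (⊤ : Subgroup G) 2), (g2 : G ⧸ Subgroup.lowerCentralSeries (⊤ : Subgroup G) 2)⁆ :
          G ⧸ Subgroup.lowerCentralSeries (⊤ : Subgroup G) 2) = 1 :=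
        commutatorElement_eq_one_iff_mul_comm.mpr (hcomm _ _)
      exact (QuotientGroup.eq_one_iff _).mp (h1.trans h2)
    have heq : Subgroup.lowerCentralSeries (⊤ : Subgroup G) 2 = Subgroup.lowerCentralSeries (⊤ : Subgroup G) 1 := le_antisymm hle hle12
    have hconst := lcs_const_of_eq (n := 1) heq (m - 2)
    rw [show 1 + (m - 2) = m - 1 by omega, hlcs_top] at hconst
    exact hlcs_ne 1 (by omega) hconst.symm
  -- upper bound: the index of γ_k is at least p^(k+1), for 1 ≤ k ≤ m-1
  have hcard : ∀ k, 1 ≤ k → k ≤ m - 1 →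
      Nat.card (Subgroup.lowerCentralSeries (⊤ : Subgroup G) k) = p ^ (m - 1 - k) := by
    intro k hk1 hk2
    set N := Subgroup.lowerCentralSeries (⊤ : Subgroup G) k with hN
    obtain ⟨a, ha, hca⟩ := (Nat.dvd_prime_pow hp).mp (hG ▸ Subgroup.index_dvd_card (H := N))
    have hcaQ : Nat.card (G ⧸ N) = p ^ a := by rw [← Subgroup.index_eq_card, hca]
    haveI : Finite (G ⧸ N) := Finite.of_surjective _ (QuotientGroup.mk'_surjective N)
    -- the quotient has nilpotency class at least k
    have hclQ : ¬ Group.nilpotencyClass (G ⧸ N) ≤ k - 1 := by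
      intro hle
      have hbot : Subgroup.lowerCentralSeries (⊤ : Subgroup (G ⧸ N)) (k - 1) = ⊥ :=
        lowerCentralSeries_eq_bot_iff_nilpotencyClass_le.mpr hle
      have hsub : Subgroup.lowerCentralSeries (⊤ : Subgroup G) (k - 1) ≤ N := by
        intro x hx
        have hmem := lowerCentralSeries.map (QuotientGroup.mk' N) (k - 1)
          (Subgroup.mem_map_of_mem _ hx)
        rw [hbot, Subgroup.mem_bot] at hmem
        exact (QuotientGroup.eq_one_iff x).mp hmem
      have hstrict : Subgroup.lowerCentralSeries (⊤ : Subgroup G) k < Subgroup.lowerCentralSeries (⊤ : Subgroup G) (k - 1) := by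
        have h := lcs_lt_of_ne_bot (Q := G) (hlcs_ne (k - 1) (by omega))
        rwa [show k - 1 + 1 = k by omega] at h
      exact (lt_irrefl _ (lt_of_lt_of_le hstrict hsub))
    have ha2 : 2 ≤ a := by
      by_contra h
      have hcyc : IsCyclic (G ⧸ N) := by
        rcases (by omega : a = 0 ∨ a = 1) with h0 | h1
        · rw [h0, pow_zero] at hcaQ
          haveI : Subsingleton (G ⧸ N) := (Nat.card_eq_one_iff_unique.mp hcaQ).1
          infer_instance
        · exact isCyclic_of_prime_card (hcaQ.trans (by rw [h1, pow_one]))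
      rcases Nat.lt_or_ge k 2 with hk | hk
      · have hk' : k = 1 := by omega
        subst hk'
        exact hQ1 hcyc
      · haveI := hcyc
        haveI : Group.IsNilpotent (G ⧸ N) :=
          (IsPGroup.of_card hcaQ).isNilpotent
        have := class_le_one_of_isCyclic (Q := G ⧸ N)
        exact hclQ (by omega)
    have hka : k + 1 ≤ a := by
      haveI : Group.IsNilpotent (G ⧸ N) := (IsPGroup.of_card hcaQ).isNilpotent
      have := maxclass_bound hp a (G ⧸ N) hcaQ ha2
      omega
    -- now compute the card of N
    have hmul := Subgroup.card_mul_index N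
    rw [hca, hG] at hmul
    have hcard_eq : Nat.card N = p ^ (m - a) := by
      have h2 : Nat.card N * p ^ a = p ^ (m - a) * p ^ a := by
        rw [hmul, ← pow_add]
        congr 1
        have : a ≤ m := by
          by_contra hh
          push_neg at hh
          have : p ^ m < p ^ a := Nat.pow_lt_pow_right hp1 hh
          have hle := Nat.le_of_dvd (pow_pos hp.pos m) (hca ▸ (hG ▸ Subgroup.index_dvd_card (H := N)))
          omega
        omega
      exact Nat.eq_of_mul_eq_mul_right (pow_pos hp.pos a) h2
    have hupper : Nat.card N ≤ p ^ (m - 1 - k) := by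
      rw [hcard_eq]
      exact Nat.pow_le_pow_right hp.pos (by omega)
    exact le_antisymm hupper (hlow k hk2)
  -- Part 1
  have part1 : ∀ N : Subgroup G, N.Normal → ∀ i : ℕ, 2 ≤ i → i ≤ m → N.index = p ^ i →
      N = Subgroup.lowerCentralSeries (⊤ : Subgroup G) (i - 1) := by
    intro N hNnormal i hi2 him hidx
    haveI := hNnormal
    have hcardN : Nat.card N = p ^ (m - i) := by
      have hmul := Subgroup.card_mul_index N
      rw [hidx, hG] at hmul
      have h2 : Nat.card N * p ^ i = p ^ (m - i) * p ^ i := by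
        rw [hmul, ← pow_add]
        congr 1
        omega
      exact Nat.eq_of_mul_eq_mul_right (pow_pos hp.pos i) h2
    have hcardQ : Nat.card (G ⧸ N) = p ^ i := by rw [← Subgroup.index_eq_card, hidx]
    haveI : Finite (G ⧸ N) := Finite.of_surjective _ (QuotientGroup.mk'_surjective N)
    haveI : Group.IsNilpotent (G ⧸ N) := (IsPGroup.of_card hcardQ).isNilpotent
    have hclQ : Group.nilpotencyClass (G ⧸ N) ≤ i - 1 :=
      maxclass_bound hp i (G ⧸ N) hcardQ hi2
    have hbot : Subgroup.lowerCentralSeries (⊤ : Subgroup (G ⧸ N)) (i - 1) = ⊥ :=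
      lowerCentralSeries_eq_bot_iff_nilpotencyClass_le.mpr hclQ
    have hle : Subgroup.lowerCentralSeries (⊤ : Subgroup G) (i - 1) ≤ N := by
      intro x hx
      have hmem := lowerCentralSeries.map (QuotientGroup.mk' N) (i - 1)
        (Subgroup.mem_map_of_mem _ hx)
      rw [hbot, Subgroup.mem_bot] at hmem
      exact (QuotientGroup.eq_one_iff x).mp hmem
    refine (Subgroup.eq_of_le_of_card_ge hle ?_).symm
    rw [hcardN, hcard (i - 1) (by omega) (by omega),
      show m - 1 - (i - 1) = m - i by omega]
  refine ⟨part1, ?_⟩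
  -- Part 2
  intro i hi1 him
  refine ⟨Subgroup.lowerCentralSeries (⊤ : Subgroup G) (m - 1 - i), ⟨inferInstance, ?_⟩, ?_⟩
  · rw [hcard (m - 1 - i) (by omega) (by omega), show m - 1 - (m - 1 - i) = i by omega]
  · rintro N ⟨hNnormal, hcardN⟩
    have hidx : N.index = p ^ (m - i) := by
      have hmul := Subgroup.card_mul_index N
      rw [hcardN, hG] at hmul
      have h2 : p ^ i * N.index = p ^ i * p ^ (m - i) := by
        rw [hmul, ← pow_add]
        congr 1
        omega
      exact Nat.eq_of_mul_eq_mul_left (pow_pos hp.pos i) h2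
    have := part1 N hNnormal (m - i) (by omega) (by omega) hidx
    rw [this, show m - i - 1 = m - 1 - i by omega]
end

section
/- Let G be a p-group of maximal class. If N is a normal subgroup of G of index at least p^3 in G, then the quotient G/N is also a p-group of maximal class. -/
/-- A finite `p`-group is of *maximal class* if it has order `p ^ m` for some `m ≥ 2`
and its nilpotency class is exactly `m - 1`. -/
def IsMaximalClass (p : ℕ) (G : Type*) [Group G] : Prop :=
  ∃ m : ℕ, 2 ≤ m ∧ Nat.card G = p ^ m ∧
    upperCentralSeries G (m - 1) = ⊤ ∧ upperCentralSeries G (m - 2) ≠ ⊤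


open scoped commutatorElement

section Aux
variable {H : Type*} [Group H]

lemma ucs_stab {k : ℕ} (h : Subgroup.upperCentralSeries H k = Subgroup.upperCentralSeries H (k + 1)) :
    ∀ j, Subgroup.upperCentralSeries H (k + j) = Subgroup.upperCentralSeries H k := by
  intro j
  induction j with
  | zero => rfl
  | succ j ih =>
    have h2 : Subgroup.upperCentralSeries H (k + j + 1) = Subgroup.upperCentralSeries H (k + 1) := by
      ext x
      simp only [mem_upperCentralSeries_succ_iff, ih]
    calc Subgroup.upperCentralSeries H (k + (j + 1)) = Subgroup.upperCentralSeries H (k + 1) := h2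
      _ = Subgroup.upperCentralSeries H k := h.symm

lemma lcs_stab {k : ℕ} (h : (⊤ : Subgroup H).lowerCentralSeries k = (⊤ : Subgroup H).lowerCentralSeries (k + 1)) :
    ∀ j, (⊤ : Subgroup H).lowerCentralSeries (k + j) = (⊤ : Subgroup H).lowerCentralSeries k := by
  intro j
  induction j with
  | zero => rfl
  | succ j ih =>
    rw [show k + (j + 1) = (k + j) + 1 from rfl, lowerCentralSeries_succ, ih,
      ← lowerCentralSeries_succ, ← h]

/-- If `H ⧸ Z_{k+1}` is cyclic then `Z_{k+1} = ⊤`. -/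
lemma ucs_eq_top_of_quotient_cyclic {k : ℕ}
    (hcyc : IsCyclic (H ⧸ Subgroup.upperCentralSeries H (k + 1))) :
    Subgroup.upperCentralSeries H (k + 1) = ⊤ := by
  set Z1 := Subgroup.upperCentralSeries H (k + 1) with hZ1
  set Z0 := Subgroup.upperCentralSeries H k with hZ0
  obtain ⟨g, hg⟩ := hcyc.exists_generator
  obtain ⟨x, rfl⟩ := QuotientGroup.mk'_surjective Z1 g
  have hcent : ∀ z ∈ Z1, ∀ a : H ⧸ Z0, Commute ((QuotientGroup.mk' Z0) z) a := by
    intro z hz a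
    obtain ⟨h, rfl⟩ := QuotientGroup.mk'_surjective Z0 a
    have h1 : ⁅z, h⁆ ∈ Z0 := by
      have := mem_upperCentralSeries_succ_iff.mp hz h
      simpa [commutatorElement_def] using this
    have h2 : ⁅(QuotientGroup.mk' Z0) z, (QuotientGroup.mk' Z0) h⁆ = 1 := by
      rw [← map_commutatorElement]
      rw [← QuotientGroup.ker_mk' Z0, MonoidHom.mem_ker] at h1
      exact h1
    exact commutatorElement_eq_one_iff_commute.mp h2
  have hdec : ∀ a : H, ∃ (n : ℤ) (z : H), z ∈ Z1 ∧ a = x ^ n * z := by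
    intro a
    obtain ⟨n, hn⟩ := Subgroup.mem_zpowers_iff.mp (hg ((QuotientGroup.mk' Z1) a))
    refine ⟨n, (x ^ n)⁻¹ * a, ?_, by group⟩
    have : ((QuotientGroup.mk' Z1) (x ^ n))⁻¹ * (QuotientGroup.mk' Z1) a = 1 := by
      rw [map_zpow, hn]
      group
    rw [← map_inv, ← map_mul, ← MonoidHom.mem_ker, QuotientGroup.ker_mk'] at this
    exact this
  have key : ∀ a b : H, ⁅a, b⁆ ∈ Z0 := by
    intro a b
    obtain ⟨n, z, hz, rfl⟩ := hdec a
    obtain ⟨mm, w, hw, rfl⟩ := hdec b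
    set π := QuotientGroup.mk' Z0
    have c1 : Commute (π (x ^ n * z)) (π (x ^ mm * w)) := by
      have hxx : Commute ((π x) ^ n) ((π x) ^ mm) := (Commute.refl (π x)).zpow_zpow n mm
      have hxw : Commute ((π x) ^ n) (π w) := ((hcent w hw ((π x) ^ n))).symm
      have h1 : Commute ((π x) ^ n) ((π x) ^ mm * π w) := hxx.mul_right hxw
      have h2 : Commute (π z) ((π x) ^ mm * π w) := hcent z hz _
      simpa [map_mul, map_zpow] using h1.mul_left h2
    have := commutatorElement_eq_one_iff_commute.mpr c1
    rw [← map_commutatorElement, ← MonoidHom.mem_ker, QuotientGroup.ker_mk'] at this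
    exact this
  rw [eq_top_iff]
  intro a _
  exact mem_upperCentralSeries_succ_iff.mpr fun y => by
    simpa [commutatorElement_def] using key a y
end Aux

section Aux2
variable {H : Type*} [Group H]

lemma card_ucs_dvd {p n : ℕ} (hp : p.Prime) (hH : Nat.card H = p ^ n)
    (hnil : Group.IsNilpotent H) :
    ∀ k, Subgroup.upperCentralSeries H k ≠ ⊤ → p ^ k ∣ Nat.card (Subgroup.upperCentralSeries H k) := by
  have hfin : Finite H := Nat.finite_of_card_ne_zero (by rw [hH]; exact pow_ne_zero _ hp.pos.ne')
  intro k
  induction k with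
  | zero => intro _; simp
  | succ k ih =>
    intro hk1
    have hmono : Subgroup.upperCentralSeries H k ≤ Subgroup.upperCentralSeries H (k + 1) :=
      upperCentralSeries_mono H (Nat.le_succ k)
    have hk : Subgroup.upperCentralSeries H k ≠ ⊤ := by
      intro h; exact hk1 (top_le_iff.mp (h ▸ hmono))
    have hne : Subgroup.upperCentralSeries H k ≠ Subgroup.upperCentralSeries H (k + 1) := by
      intro he
      obtain ⟨c, hc⟩ := hnil
      have h1 := ucs_stab he c
      have h2 : Subgroup.upperCentralSeries H c ≤ Subgroup.upperCentralSeries H (k + c) :=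
        upperCentralSeries_mono H (Nat.le_add_left c k)
      rw [hc, h1] at h2
      exact hk (top_le_iff.mp h2)
    have hA : p ^ k ∣ Nat.card (Subgroup.upperCentralSeries H k) := ih hk
    have hAB : Nat.card (Subgroup.upperCentralSeries H k) ∣ Nat.card (Subgroup.upperCentralSeries H (k + 1)) :=
      Subgroup.card_dvd_of_le hmono
    have hBn : Nat.card (Subgroup.upperCentralSeries H (k + 1)) ∣ p ^ n :=
      hH ▸ Subgroup.card_subgroup_dvd_card _
    obtain ⟨b, _, hb⟩ := (Nat.dvd_prime_pow hp).mp hBn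
    obtain ⟨a, _, ha⟩ := (Nat.dvd_prime_pow hp).mp (dvd_trans hAB hBn)
    have hk_le_a : k ≤ a := (Nat.pow_dvd_pow_iff_le_right hp.one_lt).mp (ha ▸ hA)
    have ha_le_b : a ≤ b := by
      have := hAB
      rw [ha, hb] at this
      exact (Nat.pow_dvd_pow_iff_le_right hp.one_lt).mp this
    have hab : a ≠ b := by
      intro he
      apply hne
      exact Subgroup.eq_of_le_of_card_ge hmono (by rw [ha, hb, he])
    rw [hb]
    exact pow_dvd_pow p (by omega)

lemma index_ucs_sq_dvd {p n : ℕ} (hp : p.Prime) (hH : Nat.card H = p ^ n) (k : ℕ)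
    (hk : Subgroup.upperCentralSeries H (k + 1) ≠ ⊤) :
    p ^ 2 ∣ (Subgroup.upperCentralSeries H (k + 1)).index := by
  haveI := Fact.mk hp
  have hdvd : (Subgroup.upperCentralSeries H (k + 1)).index ∣ p ^ n :=
    hH ▸ Subgroup.index_dvd_card _
  obtain ⟨e, _, he⟩ := (Nat.dvd_prime_pow hp).mp hdvd
  have he0 : e ≠ 0 := by
    intro h
    subst h
    rw [pow_zero] at he
    exact hk (Subgroup.index_eq_one.mp he)
  have he1 : e ≠ 1 := by
    intro h
    subst h
    rw [pow_one] at he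
    have hcard : Nat.card (H ⧸ Subgroup.upperCentralSeries H (k + 1)) = p := by
      rw [← Subgroup.index_eq_card]; exact he
    exact hk (ucs_eq_top_of_quotient_cyclic (isCyclic_of_prime_card hcard))
  rw [he]
  exact pow_dvd_pow p (by omega)

end Aux2

private theorem stmt_8_aux {p m : ℕ} (hp : p.Prime) (hm : 3 ≤ m) (G : Type*) [Group G]
    (hG : Nat.card G = p ^ m)
    (hcl : Subgroup.upperCentralSeries G (m - 1) = ⊤) (hcl2 : Subgroup.upperCentralSeries G (m - 2) ≠ ⊤)
    (N : Subgroup G) (hN : N.Normal) (i : ℕ) (hi : 3 ≤ i) (hidx : N.index = p ^ i) :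
    ∃ m' : ℕ, 2 ≤ m' ∧ Nat.card (G ⧸ N) = p ^ m' ∧
      Subgroup.upperCentralSeries (G ⧸ N) (m' - 1) = ⊤ ∧ Subgroup.upperCentralSeries (G ⧸ N) (m' - 2) ≠ ⊤ := by
  have hp1 : 1 < p := hp.one_lt
  have hfinG : Finite G := Nat.finite_of_card_ne_zero (by rw [hG]; exact pow_ne_zero _ hp.pos.ne')
  haveI := hN
  haveI hnilG : Group.IsNilpotent G := ⟨m - 1, hcl⟩
  have him : i ≤ m := by
    have h1 : N.index ∣ Nat.card G := Subgroup.index_dvd_card _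
    rw [hG, hidx] at h1
    exact (Nat.pow_dvd_pow_iff_le_right hp1).mp h1
  have hcardQ : Nat.card (G ⧸ N) = p ^ i := by rw [← Subgroup.index_eq_card, hidx]
  haveI hnilQ : Group.IsNilpotent (G ⧸ N) := inferInstance
  refine ⟨i, by omega, hcardQ, ?_, ?_⟩
  · by_contra hne
    have h1 : p ^ (i - 1) ∣ Nat.card (Subgroup.upperCentralSeries (G ⧸ N) (i - 1)) :=
      card_ucs_dvd hp hcardQ hnilQ (i - 1) hne
    have h2 : p ^ 2 ∣ (Subgroup.upperCentralSeries (G ⧸ N) (i - 1)).index := by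
      have := index_ucs_sq_dvd hp hcardQ (i - 2)
        (by rw [show i - 2 + 1 = i - 1 by omega]; exact hne)
      rwa [show i - 2 + 1 = i - 1 by omega] at this
    have hmul := Subgroup.card_mul_index (Subgroup.upperCentralSeries (G ⧸ N) (i - 1))
    rw [hcardQ] at hmul
    have h3 : p ^ (i - 1) * p ^ 2 ∣ p ^ i := hmul ▸ Nat.mul_dvd_mul h1 h2
    rw [← pow_add] at h3
    have := (Nat.pow_dvd_pow_iff_le_right hp1).mp h3
    omega
  · intro htop
    have hclass : Group.nilpotencyClass (G ⧸ N) ≤ i - 2 :=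
      upperCentralSeries_eq_top_iff_nilpotencyClass_le.mp htop
    have hlcsQ : (⊤ : Subgroup (G ⧸ N)).lowerCentralSeries (i - 2) = ⊥ :=
      lowerCentralSeries_eq_bot_iff_nilpotencyClass_le.mpr hclass
    have hmap : Subgroup.map (QuotientGroup.mk' N) ((⊤ : Subgroup G).lowerCentralSeries (i - 2)) ≤ ⊥ :=
      hlcsQ ▸ lowerCentralSeries.map _ _
    have hsub : (⊤ : Subgroup G).lowerCentralSeries (i - 2) ≤ N := by
      intro g hg
      have h4 : (QuotientGroup.mk' N) g ∈ (⊥ : Subgroup (G ⧸ N)) :=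
        hmap ⟨g, hg, rfl⟩
      rw [Subgroup.mem_bot] at h4
      rw [← QuotientGroup.ker_mk' N]
      exact h4
    have hlcs_bot : (⊤ : Subgroup G).lowerCentralSeries (m - 1) = ⊥ := by
      rw [lowerCentralSeries_eq_bot_iff_nilpotencyClass_le]
      exact upperCentralSeries_eq_top_iff_nilpotencyClass_le.mp hcl
    have hstrict : ∀ j, j ≤ m - 2 → (⊤ : Subgroup G).lowerCentralSeries j ≠ (⊤ : Subgroup G).lowerCentralSeries (j + 1) := by
      intro j hj he
      have h1 := lcs_stab he (m - 2 - j)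
      have h2 := lcs_stab he (m - 1 - j)
      rw [show j + (m - 2 - j) = m - 2 by omega] at h1
      rw [show j + (m - 1 - j) = m - 1 by omega] at h2
      apply hcl2
      rw [upperCentralSeries_eq_top_iff_nilpotencyClass_le,
        ← lowerCentralSeries_eq_bot_iff_nilpotencyClass_le, h1, ← h2, hlcs_bot]
    have hdvd_pn : ∀ j : ℕ, Nat.card ((⊤ : Subgroup G).lowerCentralSeries j) ∣ p ^ m :=
      fun j => hG ▸ Subgroup.card_subgroup_dvd_card _
    have hlow : ∀ d, d ≤ m - 2 → p ^ d ∣ Nat.card ((⊤ : Subgroup G).lowerCentralSeries (m - 1 - d)) := by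
      intro d
      induction d with
      | zero => intro _; simp
      | succ d ih =>
        intro hd
        have hih := ih (by omega)
        have hj : m - 1 - (d + 1) ≤ m - 2 := by omega
        have hj1 : m - 1 - (d + 1) + 1 = m - 1 - d := by omega
        have hne := hstrict _ hj
        have hle : (⊤ : Subgroup G).lowerCentralSeries (m - 1 - (d + 1) + 1) ≤
            (⊤ : Subgroup G).lowerCentralSeries (m - 1 - (d + 1)) :=
          lowerCentralSeries_antitone _ (Nat.le_succ _)
        obtain ⟨a, _, ha⟩ := (Nat.dvd_prime_pow hp).mp (hdvd_pn (m - 1 - (d + 1)))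
        obtain ⟨b, _, hb⟩ := (Nat.dvd_prime_pow hp).mp (hdvd_pn (m - 1 - (d + 1) + 1))
        have hba : b ≤ a := by
          have := Subgroup.card_dvd_of_le hle
          rw [ha, hb] at this
          exact (Nat.pow_dvd_pow_iff_le_right hp1).mp this
        have hd_le_b : d ≤ b := by
          have := hih
          rw [← hj1, hb] at this
          exact (Nat.pow_dvd_pow_iff_le_right hp1).mp this
        have hab : b ≠ a := by
          intro he2
          exact hne (Subgroup.eq_of_le_of_card_ge hle (by rw [ha, hb, he2])).symm
        rw [ha]
        exact pow_dvd_pow p (by omega)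
    have hfinal := hlow (m + 1 - i) (by omega)
    rw [show m - 1 - (m + 1 - i) = i - 2 by omega] at hfinal
    obtain ⟨t, ht⟩ := hfinal
    have hmul := Subgroup.card_mul_index ((⊤ : Subgroup G).lowerCentralSeries (i - 2))
    rw [hG, ht] at hmul
    have hpne : 0 < p ^ (m + 1 - i) := by positivity
    have hkey : t * ((⊤ : Subgroup G).lowerCentralSeries (i - 2)).index = p ^ (i - 1) := by
      apply Nat.eq_of_mul_eq_mul_left hpne
      rw [← mul_assoc, ← pow_add, show m + 1 - i + (i - 1) = m by omega]
      exact hmul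
    have hidx_dvd : ((⊤ : Subgroup G).lowerCentralSeries (i - 2)).index ∣ p ^ (i - 1) :=
      hkey ▸ dvd_mul_left _ t
    have hNdvd : N.index ∣ ((⊤ : Subgroup G).lowerCentralSeries (i - 2)).index :=
      Subgroup.index_dvd_of_le hsub
    rw [hidx] at hNdvd
    have := (Nat.pow_dvd_pow_iff_le_right hp1).mp (hNdvd.trans hidx_dvd)
    omega


/-- If `G` is a `p`-group of maximal class and `N ⊴ G` has index `p ^ i` with
`i ≥ 3`, then `G ⧸ N` is also a `p`-group of maximal class. -/
theorem stmt_8 {p m : ℕ} (hp : p.Prime) (hm : 3 ≤ m) (G : Type*) [Group G]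
    (hG : Nat.card G = p ^ m)
    (hcl : upperCentralSeries G (m - 1) = ⊤) (hcl2 : upperCentralSeries G (m - 2) ≠ ⊤)
    (N : Subgroup G) (hN : N.Normal) (i : ℕ) (hi : 3 ≤ i) (hidx : N.index = p ^ i) :
    IsMaximalClass p (G ⧸ N) :=
  stmt_8_aux hp hm G hG hcl hcl2 N hN i hi hidx
end

section
/- (M. Suzuki) Let G be a nonabelian finite p-group. If A is a proper subgroup of G of order p^2 such that C_G(A) = A, then G is of maximal class. -/
section SuzukiAux

open Subgroup QuotientGroup

/-- Cardinality of a subgroup containing a normal subgroup, in terms of its image in the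
quotient. -/
private lemma suzuki_card_map_mk' {G : Type*} [Group G] [Finite G] (N K : Subgroup G)
    [N.Normal] (h : N ≤ K) :
    Nat.card K = Nat.card (K.map (QuotientGroup.mk' N)) * Nat.card N := by
  let ρ : K →* G ⧸ N := (QuotientGroup.mk' N).comp K.subtype
  have hker : ρ.ker = N.subgroupOf K := by
    ext x
    simp [ρ, MonoidHom.mem_ker, QuotientGroup.eq_one_iff, Subgroup.mem_subgroupOf]
  have hrange : ρ.range = K.map (QuotientGroup.mk' N) := by
    rw [MonoidHom.range_comp, Subgroup.range_subtype]
  have h1 : Nat.card K = Nat.card (K ⧸ ρ.ker) * Nat.card ρ.ker :=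
    Subgroup.card_eq_card_quotient_mul_card_subgroup ρ.ker
  have h2 : Nat.card (K ⧸ ρ.ker) = Nat.card ρ.range :=
    Nat.card_congr (QuotientGroup.quotientKerEquivRange ρ).toEquiv
  have h3 : Nat.card ρ.ker = Nat.card N := by
    rw [hker]; exact Nat.card_congr (Subgroup.subgroupOfEquivOfLe h).toEquiv
  rw [h1, h2, h3, hrange]

/-- If `Z ≤ A`, `|Z| = p`, `|A| = p²` and `a₀ ∈ A \ Z`, then `A = Z ⊔ ⟨a₀⟩`. -/
private lemma suzuki_sup_closure {G : Type*} [Group G] [Finite G] {p : ℕ} (hp : p.Prime)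
    {Z A : Subgroup G} (hZA : Z ≤ A) (hZ : Nat.card Z = p) (hA : Nat.card A = p ^ 2)
    {a₀ : G} (ha₀A : a₀ ∈ A) (ha₀Z : a₀ ∉ Z) : Z ⊔ Subgroup.closure {a₀} = A := by
  set A' := Z ⊔ Subgroup.closure {a₀} with hA'
  have hle : A' ≤ A := sup_le hZA ((Subgroup.closure_le A).mpr (by simpa using ha₀A))
  have hdvd : Nat.card A' ∣ p ^ 2 := hA ▸ Subgroup.card_dvd_of_le hle
  obtain ⟨k, hk2, hk⟩ := (Nat.dvd_prime_pow hp).mp hdvd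
  have hZle : Z ≤ A' := le_sup_left
  have hpd : p ∣ Nat.card A' := hZ ▸ Subgroup.card_dvd_of_le hZle
  have ha₀' : a₀ ∈ A' :=
    (le_sup_right : Subgroup.closure {a₀} ≤ A') (Subgroup.subset_closure rfl)
  interval_cases k
  · exfalso
    rw [hk, pow_zero] at hpd
    exact hp.ne_one (Nat.dvd_one.mp hpd)
  · exfalso
    have : Z = A' := Subgroup.eq_of_le_of_card_ge hZle (by rw [hk, pow_one, hZ])
    exact ha₀Z (this ▸ ha₀')
  · exact Subgroup.eq_of_le_of_card_ge hle (by rw [hk, hA])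

/-- The key counting lemma: the preimage in `G` of the centralizer of `A/Z` in `G/Z`
has order at most `p³`. -/
private lemma suzuki_card_comap_le {p : ℕ} (hp : p.Prime) {G : Type*} [Group G] [Finite G]
    {A : Subgroup G} (hcardA : Nat.card A = p ^ 2)
    (hcent : Subgroup.centralizer (A : Set G) = A)
    (hZA : Subgroup.center G ≤ A) (hZ : Nat.card (Subgroup.center G) = p) :
    Nat.card ((Subgroup.centralizer
        ((A.map (QuotientGroup.mk' (Subgroup.center G)) : Subgroup (G ⧸ Subgroup.center G)) :
          Set (G ⧸ Subgroup.center G))).comap (QuotientGroup.mk' (Subgroup.center G))) ≤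
      p ^ 3 := by
  set Z := Subgroup.center G with hZdef
  have hZneA : Z ≠ A := by
    intro h
    rw [h, hcardA] at hZ
    have := hp.one_lt
    nlinarith
  obtain ⟨a₀, ha₀A, ha₀Z⟩ := SetLike.exists_of_lt (lt_of_le_of_ne hZA hZneA)
  have hclosure : Z ⊔ Subgroup.closure {a₀} = A :=
    suzuki_sup_closure hp hZA hZ hcardA ha₀A ha₀Z
  set B := (Subgroup.centralizer
      ((A.map (QuotientGroup.mk' Z) : Subgroup (G ⧸ Z)) : Set (G ⧸ Z))).comap
      (QuotientGroup.mk' Z) with hBdef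
  have hmemB : ∀ b : G, b ∈ B → b⁻¹ * a₀⁻¹ * b * a₀ ∈ Z := by
    intro b hb
    have h1 := Subgroup.mem_comap.mp hb
    have h2 := Subgroup.mem_centralizer_iff.mp h1 ((QuotientGroup.mk' Z) a₀)
      ⟨a₀, ha₀A, rfl⟩
    have h3 : ((a₀ * b : G) : G ⧸ Z) = ((b * a₀ : G) : G ⧸ Z) := by
      simpa [QuotientGroup.mk'_apply] using h2
    have h4 := QuotientGroup.eq.mp h3
    have h5 : b⁻¹ * a₀⁻¹ * b * a₀ = (a₀ * b)⁻¹ * (b * a₀) := by group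
    rwa [h5]
  have hwmem : ∀ b : B, ((b : G))⁻¹ * a₀⁻¹ * (b : G) * a₀ ∈ Z := fun b => hmemB _ b.2
  let θ : B →* Z :=
    { toFun := fun b => ⟨(b : G)⁻¹ * a₀⁻¹ * (b : G) * a₀, hwmem b⟩
      map_one' := by
        apply Subtype.ext
        simp
      map_mul' := by
        intro b₁ b₂
        apply Subtype.ext
        have hc : ∀ g : G, g * ((b₁ : G)⁻¹ * a₀⁻¹ * (b₁ : G) * a₀) =
            ((b₁ : G)⁻¹ * a₀⁻¹ * (b₁ : G) * a₀) * g :=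
          fun g => Subgroup.mem_center_iff.mp (hwmem b₁) g
        push_cast
        calc ((b₁ : G) * (b₂ : G))⁻¹ * a₀⁻¹ * ((b₁ : G) * (b₂ : G)) * a₀
            = (b₂ : G)⁻¹ * ((b₁ : G)⁻¹ * a₀⁻¹ * (b₁ : G) * a₀) * (a₀⁻¹ * (b₂ : G) * a₀) := by
              group
          _ = ((b₁ : G)⁻¹ * a₀⁻¹ * (b₁ : G) * a₀) * (b₂ : G)⁻¹ * (a₀⁻¹ * (b₂ : G) * a₀) := by
              rw [hc ((b₂ : G))⁻¹]
          _ = ((b₁ : G)⁻¹ * a₀⁻¹ * (b₁ : G) * a₀) * ((b₂ : G)⁻¹ * a₀⁻¹ * (b₂ : G) * a₀) := by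
              group }
  have h1 : Nat.card B = Nat.card (B ⧸ θ.ker) * Nat.card θ.ker :=
    Subgroup.card_eq_card_quotient_mul_card_subgroup θ.ker
  have h2 : Nat.card (B ⧸ θ.ker) ∣ p := by
    have := Nat.card_congr (QuotientGroup.quotientKerEquivRange θ).toEquiv
    rw [this, ← hZ]
    exact Subgroup.card_subgroup_dvd_card θ.range
  have h3 : Nat.card θ.ker ≤ p ^ 2 := by
    have hmapA : (θ.ker.map B.subtype) ≤ A := by
      rintro x ⟨b, hbker, rfl⟩
      have hw1 : (b : G)⁻¹ * a₀⁻¹ * (b : G) * a₀ = 1 := by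
        have h0 : θ b = 1 := hbker
        have := congrArg (Subtype.val) h0
        simpa [θ] using this
      have hcomm : (b : G) * a₀ = a₀ * (b : G) := by
        have : a₀⁻¹ * ((b : G) * a₀) = a₀⁻¹ * (a₀ * (b : G)) := by
          calc a₀⁻¹ * ((b : G) * a₀)
              = (b : G) * ((b : G)⁻¹ * a₀⁻¹ * (b : G) * a₀) := by group
            _ = (b : G) * 1 := by rw [hw1]
            _ = a₀⁻¹ * (a₀ * (b : G)) := by group
        exact mul_left_cancel this
      have hsub : A ≤ Subgroup.centralizer {((b : G) : G)} := by
        rw [← hclosure]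
        refine sup_le ?_ ((Subgroup.closure_le _).mpr ?_)
        · intro z hz
          exact Subgroup.mem_centralizer_iff.mpr fun h hh =>
            Subgroup.mem_center_iff.mp hz h
        · intro a ha
          rcases ha with rfl
          exact Subgroup.mem_centralizer_iff.mpr (by
            rintro h rfl
            exact hcomm)
      have : (b : G) ∈ Subgroup.centralizer (A : Set G) :=
        Subgroup.mem_centralizer_iff.mpr fun h hh =>
          ((Subgroup.mem_centralizer_iff.mp (hsub hh)) _ rfl).symm
      rwa [hcent] at this
    have hcongr : Nat.card θ.ker = Nat.card (θ.ker.map B.subtype) :=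
      Nat.card_congr (Subgroup.equivMapOfInjective θ.ker B.subtype
        B.subtype_injective).toEquiv
    rw [hcongr, ← hcardA]
    exact Nat.le_of_dvd Nat.card_pos (Subgroup.card_dvd_of_le hmapA)
  calc Nat.card B = Nat.card (B ⧸ θ.ker) * Nat.card θ.ker := h1
    _ ≤ p * p ^ 2 := Nat.mul_le_mul (Nat.le_of_dvd hp.pos h2) h3
    _ = p ^ 3 := by ring

private lemma suzuki_aux (p : ℕ) (hp : p.Prime) : ∀ n : ℕ, ∀ (G : Type u) [Group G]
    [Finite G], Nat.card G = n → IsPGroup p G → (¬ ∀ a b : G, a * b = b * a) →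
    ∀ A : Subgroup G, A ≠ ⊤ → Nat.card A = p ^ 2 →
    Subgroup.centralizer (A : Set G) = A → IsMaximalClass p G := by
  haveI : Fact p.Prime := ⟨hp⟩
  intro n
  induction n using Nat.strong_induction_on with
  | _ n ih =>
  intro G _ _ hn hpG hna A hA hcardA hcent
  obtain ⟨m, hm⟩ := IsPGroup.iff_card.mp hpG
  have hp1 : 1 < p := hp.one_lt
  have hdvdA : p ^ 2 ∣ p ^ m := by
    rw [← hcardA, ← hm]; exact Subgroup.card_subgroup_dvd_card A
  have hm2 : 2 ≤ m := (Nat.pow_dvd_pow_iff_le_right hp1).mp hdvdA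
  have hm3 : 3 ≤ m := by
    rcases Nat.lt_or_ge m 3 with h | h
    · exfalso
      have hmeq : m = 2 := by omega
      apply hA
      apply Subgroup.eq_top_of_card_eq
      rw [hcardA, hm, hmeq]
    · exact h
  have hnontriv : Nontrivial G := by
    have : 1 < Nat.card G := by
      rw [hm]; exact Nat.one_lt_pow (by omega) hp1
    exact Finite.one_lt_card_iff_nontrivial.mp this
  haveI : Nontrivial (Subgroup.center G) := hpG.center_nontrivial
  have hZA : Subgroup.center G ≤ A := hcent ▸ Subgroup.center_le_centralizer (A : Set G)
  have hZcard : Nat.card (Subgroup.center G) = p := by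
    have hdvd : Nat.card (Subgroup.center G) ∣ p ^ 2 :=
      hcardA ▸ Subgroup.card_dvd_of_le hZA
    obtain ⟨k, hk2, hk⟩ := (Nat.dvd_prime_pow hp).mp hdvd
    have hk0 : k ≠ 0 := by
      intro h
      rw [h, pow_zero] at hk
      exact (Finite.one_lt_card_iff_nontrivial.mpr ‹Nontrivial (Subgroup.center G)›).ne' hk
    have hk1 : k ≠ 2 := by
      intro h
      have hZeqA : Subgroup.center G = A :=
        Subgroup.eq_of_le_of_card_ge hZA (by rw [hk, h, hcardA])
      apply hA
      rw [← hcent, eq_top_iff]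
      intro g _
      refine Subgroup.mem_centralizer_iff.mpr fun x hx => ?_
      have hx' : x ∈ Subgroup.center G := by rw [hZeqA]; exact hx
      exact (Subgroup.mem_center_iff.mp hx' g).symm
    rw [hk, show k = 1 by omega, pow_one]
  have hq : Nat.card (G ⧸ Subgroup.center G) = p ^ (m - 1) := by
    have h1 : Nat.card G =
        Nat.card (G ⧸ Subgroup.center G) * Nat.card (Subgroup.center G) :=
      Subgroup.card_eq_card_quotient_mul_card_subgroup (Subgroup.center G)
    rw [hm, hZcard] at h1
    have hps : p ^ (m - 1) * p = p ^ m := by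
      rw [← pow_succ]; congr 1; omega
    have h2 : Nat.card (G ⧸ Subgroup.center G) * p = p ^ (m - 1) * p := by
      rw [← h1]; exact hps.symm
    exact Nat.eq_of_mul_eq_mul_right hp.pos h2
  by_cases hm4 : m = 3
  · subst hm4
    refine ⟨3, by norm_num, hm, ?_, ?_⟩
    · have hcomm : ∀ a b : G ⧸ Subgroup.center G, a * b = b * a :=
        IsPGroup.commutative_of_card_eq_prime_sq (by rw [hq])
      have hcenterQ : Subgroup.center (G ⧸ Subgroup.center G) = ⊤ := by
        rw [eq_top_iff]; intro x _
        exact Subgroup.mem_center_iff.mpr fun g => hcomm g x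
      have h := Subgroup.comap_upperCentralSeries_quotient_center (G := G) 1
      rw [Subgroup.upperCentralSeries_one, hcenterQ, Subgroup.comap_top] at h
      exact h.symm
    · intro h
      change Subgroup.upperCentralSeries G (3 - 2) = ⊤ at h
      rw [show (3 : ℕ) - 2 = 1 from rfl, Subgroup.upperCentralSeries_one] at h
      apply hna
      intro a b
      have ha' : a ∈ Subgroup.center G := by rw [h]; exact Subgroup.mem_top a
      exact (Subgroup.mem_center_iff.mp ha' b).symm
  · have hm4' : 4 ≤ m := by omega
    haveI : Finite (G ⧸ Subgroup.center G) := Quotient.finite _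
    have hpQ : IsPGroup p (G ⧸ Subgroup.center G) := hpG.to_quotient (Subgroup.center G)
    have hAbarcard :
        Nat.card (A.map (QuotientGroup.mk' (Subgroup.center G))) = p := by
      have h0 := suzuki_card_map_mk' (Subgroup.center G) A hZA
      rw [hcardA, hZcard] at h0
      have h2 : Nat.card (A.map (QuotientGroup.mk' (Subgroup.center G))) * p = p * p := by
        rw [← h0, pow_two]
      exact Nat.eq_of_mul_eq_mul_right hp.pos h2
    have hBle :
        Nat.card ((Subgroup.centralizer
          ((A.map (QuotientGroup.mk' (Subgroup.center G))) :
            Set (G ⧸ Subgroup.center G))).comap (QuotientGroup.mk' (Subgroup.center G))) ≤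
          p ^ 3 :=
      suzuki_card_comap_le hp hcardA hcent hZA hZcard
    set B' := Subgroup.centralizer
      ((A.map (QuotientGroup.mk' (Subgroup.center G))) :
        Set (G ⧸ Subgroup.center G)) with hB'def
    have hZB : Subgroup.center G ≤ B'.comap (QuotientGroup.mk' (Subgroup.center G)) := by
      intro z hz
      rw [Subgroup.mem_comap]
      have h1 : (QuotientGroup.mk' (Subgroup.center G)) z = 1 :=
        (QuotientGroup.eq_one_iff z).mpr hz
      rw [h1]; exact B'.one_mem
    have hBmap : (B'.comap (QuotientGroup.mk' (Subgroup.center G))).map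
        (QuotientGroup.mk' (Subgroup.center G)) = B' :=
      Subgroup.map_comap_eq_self_of_surjective (QuotientGroup.mk'_surjective _) B'
    have hBcard : Nat.card (B'.comap (QuotientGroup.mk' (Subgroup.center G))) =
        Nat.card B' * p := by
      have h0 := suzuki_card_map_mk' (Subgroup.center G) _ hZB
      rw [hBmap, hZcard] at h0
      exact h0
    have hB'le : Nat.card B' ≤ p ^ 2 := by
      have h0 : Nat.card B' * p ≤ p ^ 3 := by rw [← hBcard]; exact hBle
      have h3 : p ^ 3 = p ^ 2 * p := by ring
      rw [h3] at h0
      exact Nat.le_of_mul_le_mul_right h0 hp.pos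
    have hAcomm : ∀ a b : A, a * b = b * a :=
      IsPGroup.commutative_of_card_eq_prime_sq hcardA
    have hAbarB' : A.map (QuotientGroup.mk' (Subgroup.center G)) ≤ B' := by
      rintro x ⟨a, haA, rfl⟩
      refine Subgroup.mem_centralizer_iff.mpr ?_
      rintro h ⟨a', ha'A, rfl⟩
      have h1 : (⟨a', ha'A⟩ : A) * ⟨a, haA⟩ = ⟨a, haA⟩ * ⟨a', ha'A⟩ := hAcomm _ _
      have h2 : a' * a = a * a' := congrArg Subtype.val h1
      simpa using congrArg (QuotientGroup.mk' (Subgroup.center G)) h2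
    have hZQB' : Subgroup.center (G ⧸ Subgroup.center G) ≤ B' :=
      Subgroup.center_le_centralizer _
    haveI : Nontrivial (G ⧸ Subgroup.center G) := by
      have : 1 < Nat.card (G ⧸ Subgroup.center G) := by
        rw [hq]; exact Nat.one_lt_pow (by omega) hp1
      exact Finite.one_lt_card_iff_nontrivial.mp this
    haveI : Nontrivial (Subgroup.center (G ⧸ Subgroup.center G)) := hpQ.center_nontrivial
    have hB'card : Nat.card B' = p ^ 2 := by
      obtain ⟨k, hk⟩ := IsPGroup.iff_card.mp (hpQ.to_subgroup B')
      by_contra hne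
      have hk2 : k ≤ 2 := by
        by_contra hk3
        have h1 : p ^ 3 ≤ p ^ k := Nat.pow_le_pow_right hp.pos (by omega)
        have h2 : p ^ 2 < p ^ 3 := Nat.pow_lt_pow_right hp1 (by omega)
        rw [← hk] at h1
        omega
      have hk1 : k ≤ 1 := by
        rcases Nat.lt_or_ge k 2 with h | h
        · omega
        · exfalso; apply hne; rw [hk]; congr 1; omega
      have hcardB'le : Nat.card B' ≤ p := by
        rw [hk]
        calc p ^ k ≤ p ^ 1 := Nat.pow_le_pow_right hp.pos hk1
          _ = p := pow_one p
      have hAB : A.map (QuotientGroup.mk' (Subgroup.center G)) = B' :=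
        Subgroup.eq_of_le_of_card_ge hAbarB' (by rw [hAbarcard]; exact hcardB'le)
      have hZQle : Subgroup.center (G ⧸ Subgroup.center G) ≤
          A.map (QuotientGroup.mk' (Subgroup.center G)) := by rw [hAB]; exact hZQB'
      have hZQcard : Nat.card (Subgroup.center (G ⧸ Subgroup.center G)) = p := by
        have hdvd : Nat.card (Subgroup.center (G ⧸ Subgroup.center G)) ∣ p :=
          hAbarcard ▸ Subgroup.card_dvd_of_le hZQle
        rcases hp.eq_one_or_self_of_dvd _ hdvd with h | h
        · exact absurd h (Finite.one_lt_card_iff_nontrivial.mpr ‹_›).ne'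
        · exact h
      have hZQeq : Subgroup.center (G ⧸ Subgroup.center G) =
          A.map (QuotientGroup.mk' (Subgroup.center G)) :=
        Subgroup.eq_of_le_of_card_ge hZQle (by rw [hAbarcard, hZQcard])
      have hB'top : B' = ⊤ := by
        rw [eq_top_iff]; intro g _
        refine Subgroup.mem_centralizer_iff.mpr fun x hx => ?_
        have hx' : x ∈ Subgroup.center (G ⧸ Subgroup.center G) := by
          rw [hZQeq]; exact hx
        exact (Subgroup.mem_center_iff.mp hx' g).symm
      have hcardtop : Nat.card B' = p ^ (m - 1) := by
        rw [hB'top, Subgroup.card_top, hq]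
      have h1 : p ^ 1 < p ^ (m - 1) := Nat.pow_lt_pow_right hp1 (by omega)
      rw [pow_one] at h1
      omega
    have hnaQ : ¬ ∀ a b : G ⧸ Subgroup.center G, a * b = b * a := by
      intro hcomm
      have hB'top : B' = ⊤ := by
        rw [eq_top_iff]; intro g _
        exact Subgroup.mem_centralizer_iff.mpr fun x _ => hcomm x g
      have h1 : Nat.card B' = p ^ (m - 1) := by rw [hB'top, Subgroup.card_top, hq]
      rw [hB'card] at h1
      have := Nat.pow_right_injective hp.two_le h1
      omega
    have hB'ne : B' ≠ ⊤ := by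
      intro h
      have h1 : Nat.card B' = p ^ (m - 1) := by rw [h, Subgroup.card_top, hq]
      rw [hB'card] at h1
      have := Nat.pow_right_injective hp.two_le h1
      omega
    have hcentB' : Subgroup.centralizer (B' : Set (G ⧸ Subgroup.center G)) = B' := by
      apply le_antisymm
      · have hsub : ((A.map (QuotientGroup.mk' (Subgroup.center G))) :
            Set (G ⧸ Subgroup.center G)) ⊆ (B' : Set (G ⧸ Subgroup.center G)) := hAbarB'
        exact Subgroup.centralizer_le hsub
      · intro x hx
        refine Subgroup.mem_centralizer_iff.mpr fun h hh => ?_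
        have hcommB' : ∀ a b : B', a * b = b * a :=
          IsPGroup.commutative_of_card_eq_prime_sq hB'card
        have h1 := congrArg Subtype.val (hcommB' ⟨h, hh⟩ ⟨x, hx⟩)
        simpa using h1
    have hlt : Nat.card (G ⧸ Subgroup.center G) < n := by
      rw [hq, ← hn, hm]
      exact Nat.pow_lt_pow_right hp1 (by omega)
    obtain ⟨m', hm'2, hm'card, hm'top, hm'ne⟩ :=
      ih (Nat.card (G ⧸ Subgroup.center G)) hlt (G ⧸ Subgroup.center G) rfl
        hpQ hnaQ B' hB'ne hB'card hcentB'
    have hm'eq : m' = m - 1 :=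
      Nat.pow_right_injective hp.two_le (hm'card.symm.trans hq)
    refine ⟨m, by omega, hm, ?_, ?_⟩
    · have h := Subgroup.comap_upperCentralSeries_quotient_center (G := G) (m - 2)
      rw [show (m - 2).succ = m - 1 from by omega] at h
      have htopQ : Subgroup.upperCentralSeries (G ⧸ Subgroup.center G) (m - 2) = ⊤ := by
        have h2 := hm'top
        rw [hm'eq, show m - 1 - 1 = m - 2 from by omega] at h2
        exact h2
      rw [htopQ, Subgroup.comap_top] at h
      exact h.symm
    · intro htop
      change Subgroup.upperCentralSeries G (m - 2) = ⊤ at htop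
      have h := Subgroup.comap_upperCentralSeries_quotient_center (G := G) (m - 3)
      rw [show (m - 3).succ = m - 2 from by omega, htop] at h
      have hQtop : Subgroup.upperCentralSeries (G ⧸ Subgroup.center G) (m - 3) = ⊤ := by
        have hsurj := QuotientGroup.mk'_surjective (Subgroup.center G)
        rw [← Subgroup.map_comap_eq_self_of_surjective hsurj
          (Subgroup.upperCentralSeries (G ⧸ Subgroup.center G) (m - 3)), h]
        exact Subgroup.map_top_of_surjective _ hsurj
      apply hm'ne
      rw [hm'eq, show m - 1 - 2 = m - 3 from by omega]
      exact hQtop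

end SuzukiAux

/-- (M. Suzuki) Let `G` be a nonabelian finite `p`-group. If `A < G` has order
`p ^ 2` and `C_G(A) = A`, then `G` is of maximal class. -/
theorem stmt_10 {p : ℕ} (hp : p.Prime) (G : Type*) [Group G] [Finite G]
    (hpG : IsPGroup p G) (hna : ¬ ∀ a b : G, a * b = b * a)
    (A : Subgroup G) (hA : A ≠ ⊤) (hcard : Nat.card A = p ^ 2)
    (hcent : Subgroup.centralizer (A : Set G) = A) :
    IsMaximalClass p G :=
  suzuki_aux p hp (Nat.card G) G rfl hpG hna A hA hcard hcent
end

section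
/- Let G be a finite p-group and B ≤ G a nonabelian subgroup of order p^3 with C_G(B) < B. Then G is of maximal class. -/
open Subgroup

private lemma aux_comm_of_eq_one {G : Type*} [Group G] {a b : G}
    (h : a⁻¹ * b⁻¹ * a * b = 1) : b * a = a * b := by
  have h2 : b * a * (a⁻¹ * b⁻¹ * a * b) = b * a * 1 := by rw [h]
  simpa [mul_assoc] using h2.symm

/-- A group whose cardinality divides `p ^ 2` is commutative. -/
private lemma aux_comm_dvd_sq {p : ℕ} (hp : p.Prime) {H : Type*} [Group H]
    (h : Nat.card H ∣ p ^ 2) : ∀ a b : H, a * b = b * a := by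
  haveI : Fact p.Prime := ⟨hp⟩
  obtain ⟨i, hi, hcard⟩ := (Nat.dvd_prime_pow hp).1 h
  interval_cases i
  · haveI : Subsingleton H := (Nat.card_eq_one_iff_unique.mp (by simpa using hcard)).1
    exact fun a b => Subsingleton.elim _ _
  · haveI := isCyclic_of_prime_card (p := p) (by simpa using hcard)
    exact fun a b => IsCyclic.commGroup.mul_comm a b
  · exact IsPGroup.commutative_of_card_eq_prime_sq hcard

/-- The center of a nonabelian group of order `p ^ 3` has order `p`. -/
private lemma aux_card_center {p : ℕ} (hp : p.Prime) {H : Type*} [Group H]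
    (hH : Nat.card H = p ^ 3) (hna : ¬ ∀ a b : H, a * b = b * a) :
    Nat.card (Subgroup.center H) = p := by
  haveI : Fact p.Prime := ⟨hp⟩
  haveI : Finite H := Nat.finite_of_card_ne_zero (by rw [hH]; exact (pow_pos hp.pos 3).ne')
  obtain ⟨k, hk0, hck⟩ := IsPGroup.card_center_eq_prime_pow hH (by norm_num)
  have hkd : Nat.card (Subgroup.center H) ∣ Nat.card H := Subgroup.card_subgroup_dvd_card _
  rw [hck, hH] at hkd
  have hk3 : k ≤ 3 := (Nat.pow_dvd_pow_iff_le_right hp.one_lt).mp hkd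
  rcases Nat.lt_or_ge k 2 with hk | hk
  · interval_cases k
    · simpa using hck
  · exfalso
    have hq := Subgroup.card_eq_card_quotient_mul_card_subgroup (Subgroup.center H)
    rw [hH, hck] at hq
    have hq2 : Nat.card (H ⧸ Subgroup.center H) * p ^ k = p ^ (3 - k) * p ^ k := by
      rw [← pow_add]
      have : 3 - k + k = 3 := by omega
      rw [this, ← hq]
    have hq3 : Nat.card (H ⧸ Subgroup.center H) = p ^ (3 - k) :=
      Nat.eq_of_mul_eq_mul_right (pow_pos hp.pos k) hq2
    have hdvd : Nat.card (H ⧸ Subgroup.center H) ∣ p := by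
      rw [hq3]
      calc p ^ (3 - k) ∣ p ^ 1 := pow_dvd_pow p (by omega)
        _ = p := pow_one p
    haveI : IsCyclic (H ⧸ Subgroup.center H) := isCyclic_of_card_dvd_prime hdvd
    exact hna (commutative_of_cyclic_center_quotient (QuotientGroup.mk' (Subgroup.center H))
      (by rw [QuotientGroup.ker_mk']))

/-- Under the hypotheses of the main theorem, the centralizer of `B` is the center of `G`,
which has order `p`. -/
private lemma aux_centralizer_eq {p : ℕ} (hp : p.Prime) {G : Type*} [Group G] [Finite G]
    (hpG : IsPGroup p G) {B : Subgroup G} (hB : Nat.card B = p ^ 3)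
    (hna : ¬ ∀ a ∈ B, ∀ b ∈ B, a * b = b * a)
    (hcent : Subgroup.centralizer (B : Set G) < B) :
    Subgroup.centralizer (B : Set G) = Subgroup.center G ∧ Nat.card (Subgroup.center G) = p := by
  haveI : Fact p.Prime := ⟨hp⟩
  have hnaB : ¬ ∀ a b : ↥B, a * b = b * a := fun h => hna fun a ha b hb => by
    simpa using congrArg Subtype.val (h ⟨a, ha⟩ ⟨b, hb⟩)
  have hZB : Nat.card (Subgroup.center ↥B) = p := aux_card_center hp hB hnaB
  have hCB : Subgroup.centralizer (B : Set G) ≤ B := hcent.le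
  have hsub : (Subgroup.centralizer (B : Set G)).subgroupOf B ≤ Subgroup.center ↥B := by
    intro c hc
    rw [Subgroup.mem_center_iff]
    intro g
    have hcC : (c : G) ∈ Subgroup.centralizer (B : Set G) := hc
    exact Subtype.ext (by simpa using hcC g g.2)
  have hcardC : Nat.card (Subgroup.centralizer (B : Set G)) =
      Nat.card ((Subgroup.centralizer (B : Set G)).subgroupOf B) :=
    (Nat.card_congr (Subgroup.subgroupOfEquivOfLe hCB).toEquiv).symm
  have hdvd : Nat.card (Subgroup.centralizer (B : Set G)) ∣ p := by
    rw [hcardC, ← hZB]; exact Subgroup.card_dvd_of_le hsub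
  have hnontriv : Nontrivial G := by
    rw [← Finite.one_lt_card_iff_nontrivial]
    calc 1 < p ^ 3 := Nat.one_lt_pow (by norm_num) hp.one_lt
      _ ≤ Nat.card G := hB ▸ Nat.le_of_dvd Nat.card_pos (Subgroup.card_subgroup_dvd_card B)
  have hZnt : Nontrivial (Subgroup.center G) := hpG.center_nontrivial
  have hZle : Subgroup.center G ≤ Subgroup.centralizer (B : Set G) :=
    Subgroup.center_le_centralizer _
  have h1Z : 1 < Nat.card (Subgroup.center G) := Finite.one_lt_card_iff_nontrivial.mpr hZnt
  have h1C : 1 < Nat.card (Subgroup.centralizer (B : Set G)) :=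
    lt_of_lt_of_le h1Z (Nat.le_of_dvd Nat.card_pos (Subgroup.card_dvd_of_le hZle))
  have hCp : Nat.card (Subgroup.centralizer (B : Set G)) = p :=
    (hp.eq_one_or_self_of_dvd _ hdvd).resolve_left (by omega)
  have hZp : Nat.card (Subgroup.center G) = p :=
    (hp.eq_one_or_self_of_dvd _ (hCp ▸ Subgroup.card_dvd_of_le hZle)).resolve_left (by omega)
  have : Subgroup.center G = Subgroup.centralizer (B : Set G) :=
    Subgroup.eq_of_le_of_card_ge hZle (by rw [hCp, hZp])
  exact ⟨this.symm, hZp⟩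

/-- A nonabelian subgroup of order `p ^ 3` is generated by any two noncommuting elements. -/
private lemma aux_closure_eq {p : ℕ} (hp : p.Prime) {G : Type*} [Group G] [Finite G]
    (hpG : IsPGroup p G) {B : Subgroup G} (hB : Nat.card B = p ^ 3) {x y : G}
    (hx : x ∈ B) (hy : y ∈ B) (hxy : x * y ≠ y * x) :
    Subgroup.closure {x, y} = B := by
  haveI : Fact p.Prime := ⟨hp⟩
  have hle : Subgroup.closure {x, y} ≤ B := (Subgroup.closure_le B).mpr (by
    rintro z (rfl | rfl) <;> assumption)
  obtain ⟨j, hj⟩ := IsPGroup.iff_card.mp (hpG.to_subgroup (Subgroup.closure {x, y}))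
  have hdvd : p ^ j ∣ p ^ 3 := by
    rw [← hj, ← hB]; exact Subgroup.card_dvd_of_le hle
  have hj3 : j ≤ 3 := (Nat.pow_dvd_pow_iff_le_right hp.one_lt).mp hdvd
  have hnd : ¬ (Nat.card (Subgroup.closure {x, y} : Subgroup G) ∣ p ^ 2) := by
    intro hd
    refine hxy ?_
    have hcomm := aux_comm_dvd_sq hp hd
    have hx' : x ∈ Subgroup.closure {x, y} := Subgroup.subset_closure (by simp)
    have hy' : y ∈ Subgroup.closure {x, y} := Subgroup.subset_closure (by simp)
    simpa using congrArg Subtype.val (hcomm ⟨x, hx'⟩ ⟨y, hy'⟩)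
  have hj' : j = 3 := by
    by_contra hne
    exact hnd (hj ▸ pow_dvd_pow p (by omega))
  exact Subgroup.eq_of_le_of_card_ge hle (by rw [hj, hj', hB])

/-- The key step: under the hypotheses of the main theorem, the center of `G` has order `p`,
and the image of `B` in `G ⧸ center G` is a self-centralizing subgroup of order `p ^ 2`. -/
private lemma aux_step {p : ℕ} (hp : p.Prime) {G : Type*} [Group G] [Finite G]
    (hpG : IsPGroup p G) {B : Subgroup G} (hB : Nat.card B = p ^ 3)
    (hna : ¬ ∀ a ∈ B, ∀ b ∈ B, a * b = b * a)
    (hcent : Subgroup.centralizer (B : Set G) < B) :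
    Nat.card (Subgroup.center G) = p ∧
    Nat.card (B.map (QuotientGroup.mk' (Subgroup.center G))) = p ^ 2 ∧
    Subgroup.centralizer ((B.map (QuotientGroup.mk' (Subgroup.center G))) :
        Set (G ⧸ Subgroup.center G)) = B.map (QuotientGroup.mk' (Subgroup.center G)) := by
  haveI : Fact p.Prime := ⟨hp⟩
  obtain ⟨hCeq, hZp⟩ := aux_centralizer_eq hp hpG hB hna hcent
  set Z := Subgroup.center G with hZdef
  set π := QuotientGroup.mk' Z with hπdef
  set Bb := B.map π with hBbdef
  have hZB : Z ≤ B := hCeq ▸ hcent.le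
  -- card of Bb
  have hrange : (π.domRestrict B).range = Bb := by
    ext u
    simp [hBbdef, MonoidHom.mem_range, Subgroup.mem_map, MonoidHom.domRestrict_apply,
      Subtype.exists]
  have hker : (π.domRestrict B).ker = Z.subgroupOf B := by
    rw [MonoidHom.ker_restrict, QuotientGroup.ker_mk']
  have hcardker : Nat.card ((π.domRestrict B).ker) = p := by
    rw [hker, Nat.card_congr (Subgroup.subgroupOfEquivOfLe hZB).toEquiv]; exact hZp
  have hcardBb : Nat.card Bb = p ^ 2 := by
    have h1 : Nat.card ↥B = Nat.card (↥B ⧸ (π.domRestrict B).ker) * Nat.card ((π.domRestrict B).ker) :=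
      Subgroup.card_eq_card_quotient_mul_card_subgroup _
    have h2 : Nat.card (↥B ⧸ (π.domRestrict B).ker) = Nat.card Bb := by
      rw [← hrange]
      exact Nat.card_congr (QuotientGroup.quotientKerEquivRange _).toEquiv
    rw [h2, hcardker, hB] at h1
    have h3 : Nat.card Bb * p = p ^ 2 * p := by rw [← h1]; ring
    exact Nat.eq_of_mul_eq_mul_right hp.pos h3
  -- noncommuting generators of B
  push_neg at hna
  obtain ⟨x, hx, y, hy, hxy⟩ := hna
  have hclos := aux_closure_eq hp hpG hB hx hy hxy
  -- the subgroup T of elements commuting with B modulo Z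
  set T := Subgroup.comap π (Subgroup.centralizer (Bb : Set (G ⧸ Z))) with hTdef
  have hval : ∀ g ∈ T, ∀ b ∈ B, g⁻¹ * b⁻¹ * g * b ∈ Z := by
    intro g hg b hb
    have h0 : π g ∈ Subgroup.centralizer (Bb : Set (G ⧸ Z)) := Subgroup.mem_comap.mp hg
    have h1 : π b * π g = π g * π b :=
      Subgroup.mem_centralizer_iff.mp h0 (π b) (Subgroup.mem_map_of_mem π hb)
    have h2 : (QuotientGroup.mk (b * g) : G ⧸ Z) = QuotientGroup.mk (g * b) := by
      simpa [hπdef, map_mul] using h1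
    have h3 := QuotientGroup.eq.mp h2
    simpa [mul_inv_rev, mul_assoc] using h3
  have hZT : Z ≤ T := by
    intro z hz
    have h1 : π z = 1 := by
      rw [← MonoidHom.mem_ker, QuotientGroup.ker_mk']; exact hz
    rw [Subgroup.mem_comap, h1]
    exact one_mem _
  -- the homomorphism ψ : T →* G × G
  have key : ∀ b ∈ B, ∀ t s : ↥T,
      ((↑(t * s) : G)⁻¹ * b⁻¹ * ↑(t * s) * b) =
        ((t : G)⁻¹ * b⁻¹ * t * b) * ((s : G)⁻¹ * b⁻¹ * s * b) := by
    intro b hb t s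
    have hc : ((t : G)⁻¹ * b⁻¹ * t * b) ∈ Z := hval t t.2 b hb
    have h1 : (s : G)⁻¹ * ((t : G)⁻¹ * b⁻¹ * t * b) = ((t : G)⁻¹ * b⁻¹ * t * b) * (s : G)⁻¹ :=
      Subgroup.mem_center_iff.mp hc _
    calc ((↑(t * s) : G))⁻¹ * b⁻¹ * ↑(t * s) * b
        = (s : G)⁻¹ * ((t : G)⁻¹ * b⁻¹ * t * b) * (b⁻¹ * s * b) := by
          rw [Subgroup.coe_mul]; group
      _ = ((t : G)⁻¹ * b⁻¹ * t * b) * (s : G)⁻¹ * (b⁻¹ * s * b) := by rw [h1]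
      _ = ((t : G)⁻¹ * b⁻¹ * t * b) * ((s : G)⁻¹ * b⁻¹ * s * b) := by group
  set ψ : ↥T →* G × G :=
    { toFun := fun t => ((t : G)⁻¹ * x⁻¹ * t * x, (t : G)⁻¹ * y⁻¹ * t * y)
      map_one' := by simp
      map_mul' := fun t s => Prod.ext (key x hx t s) (key y hy t s) } with hψdef
  have hkerψ : ψ.ker = Z.subgroupOf T := by
    ext t
    simp only [MonoidHom.mem_ker, Subgroup.mem_subgroupOf, hψdef, MonoidHom.coe_mk,
      OneHom.coe_mk, Prod.mk_eq_one]
    constructor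
    · rintro ⟨h1, h2⟩
      have hxt : x * t = t * x := aux_comm_of_eq_one h1
      have hyt : y * t = t * y := aux_comm_of_eq_one h2
      have hgoal : (t : G) ∈ Subgroup.centralizer (B : Set G) := by
        rw [Subgroup.mem_centralizer_iff]
        intro h hh
        have hBc : B ≤ Subgroup.centralizer {(t : G)} := by
          rw [← hclos]
          refine (Subgroup.closure_le _).mpr ?_
          rintro z (rfl | rfl)
          · exact Subgroup.mem_centralizer_singleton_iff.mpr hxt
          · exact Subgroup.mem_centralizer_singleton_iff.mpr hyt
        exact Subgroup.mem_centralizer_singleton_iff.mp (hBc hh)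
      exact hCeq ▸ hgoal
    · intro hz
      have h1 : ∀ b : G, b * t = (t : G) * b := fun b => Subgroup.mem_center_iff.mp hz b
      constructor
      · simp only [mul_assoc]; rw [← h1 x]; simp
      · simp only [mul_assoc]; rw [← h1 y]; simp
  have hcardker2 : Nat.card ψ.ker = p := by
    rw [hkerψ, Nat.card_congr (Subgroup.subgroupOfEquivOfLe hZT).toEquiv]; exact hZp
  have hrangeψ : ψ.range ≤ Z.prod Z := by
    rintro u ⟨t, rfl⟩
    exact Subgroup.mem_prod.mpr ⟨hval t t.2 x hx, hval t t.2 y hy⟩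
  have hcardprod : Nat.card (Z.prod Z) = p ^ 2 := by
    rw [Nat.card_congr (Subgroup.prodEquiv Z Z).toEquiv, Nat.card_prod, hZp]; ring
  have hcardrange : Nat.card ψ.range ≤ p ^ 2 := by
    rw [← hcardprod]
    exact Nat.le_of_dvd (by rw [hcardprod]; exact pow_pos hp.pos 2) (Subgroup.card_dvd_of_le hrangeψ)
  have hcardT : Nat.card T ≤ p ^ 3 := by
    have h1 : Nat.card ↥T = Nat.card (↥T ⧸ ψ.ker) * Nat.card ψ.ker :=
      Subgroup.card_eq_card_quotient_mul_card_subgroup _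
    have h2 : Nat.card (↥T ⧸ ψ.ker) = Nat.card ψ.range :=
      Nat.card_congr (QuotientGroup.quotientKerEquivRange ψ).toEquiv
    rw [h1, h2, hcardker2]
    calc Nat.card ψ.range * p ≤ p ^ 2 * p := Nat.mul_le_mul_right p hcardrange
      _ = p ^ 3 := by ring
  have hBT : B ≤ T := by
    intro b hb
    rw [Subgroup.mem_comap, Subgroup.mem_centralizer_iff]
    intro h hh
    obtain ⟨b', hb', rfl⟩ := hh
    have hcomm := IsPGroup.commutative_of_card_eq_prime_sq hcardBb
    have := hcomm ⟨π b', Subgroup.mem_map_of_mem _ hb'⟩ ⟨π b, Subgroup.mem_map_of_mem _ hb⟩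
    simpa using congrArg Subtype.val this
  have hTB : B = T := Subgroup.eq_of_le_of_card_ge hBT (by rw [hB]; exact hcardT)
  have hfinal : Subgroup.centralizer (Bb : Set (G ⧸ Z)) = Bb := by
    have h1 := congrArg (Subgroup.map π) hTB.symm
    rwa [hTdef, Subgroup.map_comap_eq_self_of_surjective
      (QuotientGroup.mk'_surjective Z)] at h1
  exact ⟨hZp, hcardBb, hfinal⟩

private lemma aux_mc {p : ℕ} {G : Type*} [Group G] [Group.IsNilpotent G] {m : ℕ}
    (hm : 2 ≤ m) (hcard : Nat.card G = p ^ m)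
    (hclass : Group.nilpotencyClass G = m - 1) : IsMaximalClass p G := by
  refine ⟨m, hm, hcard, ?_, ?_⟩
  · exact Subgroup.upperCentralSeries_eq_top_iff_nilpotencyClass_le.mpr (le_of_eq hclass)
  · intro h
    have := Subgroup.upperCentralSeries_eq_top_iff_nilpotencyClass_le.mp h
    omega

private lemma aux_main {p : ℕ} (hp : p.Prime) : ∀ n : ℕ, ∀ (G : Type u) [Group G] [Finite G],
    IsPGroup p G → Nat.card G = p ^ n → ∀ B : Subgroup G, Nat.card B = p ^ 3 →
    (¬ ∀ a ∈ B, ∀ b ∈ B, a * b = b * a) → Subgroup.centralizer (B : Set G) < B →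
    IsMaximalClass p G := by
  intro n
  induction n using Nat.strong_induction_on with
  | _ n IH =>
  intro G _ _ hpG hcard B hB hna hcent
  haveI : Fact p.Prime := ⟨hp⟩
  haveI : Group.IsNilpotent G := hpG.isNilpotent
  have h3n : 3 ≤ n := by
    have hd : p ^ 3 ∣ p ^ n := by
      rw [← hB, ← hcard]; exact Subgroup.card_subgroup_dvd_card B
    exact (Nat.pow_dvd_pow_iff_le_right hp.one_lt).mp hd
  haveI hnontriv : Nontrivial G := by
    rw [← Finite.one_lt_card_iff_nontrivial, hcard]
    exact Nat.one_lt_pow (by omega) hp.one_lt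
  obtain ⟨hZp, hcardBb, hselfc⟩ := aux_step hp hpG hB hna hcent
  have hqcard : Nat.card (G ⧸ Subgroup.center G) = p ^ (n - 1) := by
    have h1 := Subgroup.card_eq_card_quotient_mul_card_subgroup (Subgroup.center G)
    rw [hZp, hcard] at h1
    have h2 : Nat.card (G ⧸ Subgroup.center G) * p = p ^ (n - 1) * p := by
      rw [← h1, ← pow_succ]
      congr 1
      omega
    exact Nat.eq_of_mul_eq_mul_right hp.pos h2
  by_cases h4 : n = 3
  · -- base case : G = B has order p ^ 3
    subst h4
    have hcomm : ¬ ∀ a b : G, a * b = b * a := by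
      have hBtop : B = ⊤ := Subgroup.eq_top_of_card_eq _ (by rw [hB, hcard])
      exact fun h => hna fun a _ b _ => h a b
    have hq2 : Nat.card (G ⧸ Subgroup.center G) = p ^ 2 := by rw [hqcard]
    have hcommQ := IsPGroup.commutative_of_card_eq_prime_sq hq2
    have hclassQ : Group.nilpotencyClass (G ⧸ Subgroup.center G) ≤ 1 := by
      have h1 : Subgroup.upperCentralSeries (G ⧸ Subgroup.center G) 1 = ⊤ := by
        rw [Subgroup.upperCentralSeries_one]
        rw [Subgroup.eq_top_iff']
        intro a
        exact Subgroup.mem_center_iff.mpr fun g => hcommQ g a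
      exact Subgroup.upperCentralSeries_eq_top_iff_nilpotencyClass_le.mp h1
    have hge : 2 ≤ Group.nilpotencyClass G := by
      by_contra hlt
      push_neg at hlt
      have h1 : Subgroup.upperCentralSeries G 1 = ⊤ :=
        Subgroup.upperCentralSeries_eq_top_iff_nilpotencyClass_le.mpr (by omega)
      rw [Subgroup.upperCentralSeries_one] at h1
      exact hcomm fun a b =>
        (Subgroup.mem_center_iff.mp (h1 ▸ Subgroup.mem_top a) b).symm
    have hclassG : Group.nilpotencyClass G = 2 := by
      have h1 : Group.nilpotencyClass G =
          Group.nilpotencyClass (G ⧸ Subgroup.center G) + 1 :=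
        nilpotencyClass_eq_quotient_center_plus_one
      omega
    exact aux_mc (by norm_num) hcard (by omega)
  · -- inductive step
    have h4n : 4 ≤ n := by omega
    haveI : Finite (G ⧸ Subgroup.center G) := Quotient.finite _
    have hpQ : IsPGroup p (G ⧸ Subgroup.center G) := hpG.to_quotient _
    haveI : Group.IsNilpotent (G ⧸ Subgroup.center G) := hpQ.isNilpotent
    obtain ⟨K, hKcard, hKle⟩ := Sylow.exists_subgroup_card_pow_prime_le p
      (n := 2) (m := 3) (by rw [hqcard]; exact pow_dvd_pow p (by omega))
      (B.map (QuotientGroup.mk' (Subgroup.center G))) hcardBb (by norm_num)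
    have hKna : ¬ ∀ a ∈ K, ∀ b ∈ K, a * b = b * a := by
      intro hab
      have hle2 : K ≤ Subgroup.centralizer
          ((B.map (QuotientGroup.mk' (Subgroup.center G))) : Set (G ⧸ Subgroup.center G)) :=
        fun k hk => Subgroup.mem_centralizer_iff.mpr fun h hh => hab h (hKle hh) k hk
      rw [hselfc] at hle2
      have h1 : p ^ 3 ≤ p ^ 2 := by
        rw [← hKcard, ← hcardBb]
        exact Nat.le_of_dvd Nat.card_pos (Subgroup.card_dvd_of_le hle2)
      have h2 : p ^ 2 < p ^ 3 := Nat.pow_lt_pow_right hp.one_lt (by norm_num)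
      omega
    have hKcent : Subgroup.centralizer (K : Set (G ⧸ Subgroup.center G)) < K := by
      have hle2 : Subgroup.centralizer (K : Set (G ⧸ Subgroup.center G)) ≤
          B.map (QuotientGroup.mk' (Subgroup.center G)) := by
        rw [← hselfc]
        exact Subgroup.centralizer_le (by exact_mod_cast hKle)
      refine lt_of_le_of_ne (hle2.trans hKle) fun heq => ?_
      have h1 : p ^ 3 ≤ p ^ 2 := by
        rw [← hKcard, ← hcardBb]
        exact Nat.le_of_dvd Nat.card_pos (Subgroup.card_dvd_of_le (heq ▸ hle2))
      have h2 : p ^ 2 < p ^ 3 := Nat.pow_lt_pow_right hp.one_lt (by norm_num)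
      omega
    have hmcQ : IsMaximalClass p (G ⧸ Subgroup.center G) :=
      IH (n - 1) (by omega) _ hpQ hqcard K hKcard hKna hKcent
    obtain ⟨m, hm2, hmcard, h1, h2⟩ := hmcQ
    have hpow : (p : ℕ) ^ m = p ^ (n - 1) := by rw [← hmcard, hqcard]
    have hmn : m = n - 1 := Nat.pow_right_injective hp.two_le hpow
    subst hmn
    have hclassQ : Group.nilpotencyClass (G ⧸ Subgroup.center G) = (n - 1) - 1 := by
      have hle := Subgroup.upperCentralSeries_eq_top_iff_nilpotencyClass_le.mp h1
      have hgt : ¬ Group.nilpotencyClass (G ⧸ Subgroup.center G) ≤ (n - 1) - 2 := fun h =>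
        h2 (Subgroup.upperCentralSeries_eq_top_iff_nilpotencyClass_le.mpr h)
      omega
    have hclassG : Group.nilpotencyClass G = n - 1 := by
      rw [nilpotencyClass_eq_quotient_center_plus_one, hclassQ]
      omega
    exact aux_mc (by omega) hcard hclassG

/-- Let `G` be a finite `p`-group and `B ≤ G` a nonabelian subgroup of order `p ^ 3`
with `C_G(B) < B`. Then `G` is of maximal class. -/
theorem stmt_12 {p : ℕ} (hp : p.Prime) (G : Type*) [Group G] [Finite G]
    (hpG : IsPGroup p G) (B : Subgroup G) (hB : Nat.card B = p ^ 3)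
    (hna : ¬ ∀ a ∈ B, ∀ b ∈ B, a * b = b * a)
    (hcent : Subgroup.centralizer (B : Set G) < B) :
    IsMaximalClass p G := by
  haveI : Fact p.Prime := ⟨hp⟩
  obtain ⟨n, hn⟩ := IsPGroup.iff_card.mp hpG
  exact aux_main hp n G hpG hn B hB hna hcent
end

section
/- Let G be a finite p-group, N ⊲ G of order > p, and suppose G/N has order > p and cyclic center. If R/N is a normal subgroup of order p in G/N, then R is not of maximal class. -/
open Subgroup QuotientGroup
open scoped commutatorElement

universe u

private lemma card_map_mk'_mul {G : Type u} [Group G] [Finite G] (N R : Subgroup G) [N.Normal]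
    (h : N ≤ R) :
    Nat.card (R.map (QuotientGroup.mk' N)) * Nat.card N = Nat.card R := by
  let f : R →* G ⧸ N := (QuotientGroup.mk' N).comp R.subtype
  have hrange : f.range = R.map (QuotientGroup.mk' N) := by
    rw [MonoidHom.range_comp, Subgroup.range_subtype]
  have hker : f.ker = N.subgroupOf R := by
    ext x
    simp [f, MonoidHom.mem_ker, Subgroup.mem_subgroupOf, QuotientGroup.eq_one_iff]
  have h1 : Nat.card R = Nat.card (R ⧸ f.ker) * Nat.card f.ker :=
    Subgroup.card_eq_card_quotient_mul_card_subgroup f.ker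
  have h2 : Nat.card (R ⧸ f.ker) = Nat.card f.range :=
    Nat.card_congr (QuotientGroup.quotientKerEquivRange f).toEquiv
  have h3 : Nat.card f.ker = Nat.card N := by
    rw [hker]; exact Nat.card_congr (Subgroup.subgroupOfEquivOfLe h).toEquiv
  rw [h1, h2, h3, hrange]

private lemma exists_mem_center {p : ℕ} (hp : p.Prime) {G : Type u} [Group G] [Finite G]
    (hG : IsPGroup p G) {N : Subgroup G} (hN : N.Normal) (hbot : N ≠ ⊥) :
    ∃ x : G, x ∈ N ∧ x ∈ Subgroup.center G ∧ x ≠ 1 := by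
  haveI := Fact.mk hp
  letI : MulAction G N := MulAction.compHom N (MulAut.conjNormal : G →* MulAut N)
  have hsmul : ∀ (g : G) (x : N), g • x = MulAut.conjNormal g x := fun g x => rfl
  obtain ⟨a, hcardN⟩ := (IsPGroup.iff_card.mp (hG.to_subgroup N))
  have ha : a ≠ 0 := by
    rintro rfl
    exact hbot (Subgroup.card_eq_one.mp (by simpa using hcardN))
  have hdvdN : p ∣ Nat.card N := hcardN ▸ dvd_pow_self p ha
  have hmod := hG.card_modEq_card_fixedPoints (α := N)
  have hdvd : p ∣ Nat.card (MulAction.fixedPoints G N) :=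
    (Nat.modEq_zero_iff_dvd).mp (hmod.symm.trans ((Nat.modEq_zero_iff_dvd).mpr hdvdN))
  have hone : (1 : N) ∈ MulAction.fixedPoints G N := by
    intro g
    rw [hsmul]
    exact map_one _
  have hpos : 0 < Nat.card (MulAction.fixedPoints G N) :=
    Nat.card_pos_iff.mpr ⟨⟨⟨1, hone⟩⟩, inferInstance⟩
  have hlt : 1 < Nat.card (MulAction.fixedPoints G N) :=
    lt_of_lt_of_le hp.one_lt (Nat.le_of_dvd hpos hdvd)
  haveI := Finite.one_lt_card_iff_nontrivial.mp hlt
  obtain ⟨y, hy⟩ := exists_ne (⟨(1 : N), hone⟩ : MulAction.fixedPoints G N)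
  refine ⟨(y.1 : G), y.1.2, ?_, ?_⟩
  · rw [Subgroup.mem_center_iff]
    intro g
    have := y.2 g
    rw [hsmul] at this
    have := congrArg (fun z : N => (z : G)) this
    simp only [MulAut.conjNormal_apply] at this
    calc g * (y.1 : G) = (g * (y.1 : G) * g⁻¹) * g := by group
    _ = (y.1 : G) * g := by rw [this]
  · intro hx
    exact hy (Subtype.ext (Subtype.ext hx))

private lemma le_center_of_card_eq_p {p : ℕ} (hp : p.Prime) {G : Type u} [Group G] [Finite G]
    (hG : IsPGroup p G) {H : Subgroup G} (hH : H.Normal) (hcard : Nat.card H = p) :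
    H ≤ Subgroup.center G := by
  have hbot : H ≠ ⊥ := by
    intro h
    rw [h, Subgroup.card_bot] at hcard
    exact hp.one_lt.ne hcard
  obtain ⟨x, hxH, hxZ, hx1⟩ := exists_mem_center hp hG hH hbot
  have hord : orderOf x = p := by
    have h1 : orderOf x ∣ p := hcard ▸ Subgroup.orderOf_dvd_natCard H hxH
    rcases (Nat.dvd_prime hp).mp h1 with h | h
    · exact absurd (orderOf_eq_one_iff.mp h) hx1
    · exact h
  have hzle : Subgroup.zpowers x ≤ H := Subgroup.zpowers_le.mpr hxH
  have hcz : Nat.card (Subgroup.zpowers x) = p := by rw [Nat.card_zpowers, hord]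
  have heq : Subgroup.zpowers x = H :=
    Subgroup.eq_of_le_of_card_ge hzle (by rw [hcz, hcard])
  rw [← heq]
  exact Subgroup.zpowers_le.mpr hxZ

private lemma subgroup_eq_of_card_eq_p {p : ℕ} (hp : p.Prime) {Z : Type u} [Group Z] [Finite Z]
    [IsCyclic Z] (A B : Subgroup Z) (hA : Nat.card A = p) (hB : Nat.card B = p) : A = B := by
  classical
  letI := Fintype.ofFinite Z
  let f : Finset Z := Finset.univ.filter (fun a => a ^ p = 1)
  have hf : f.card ≤ p := IsCyclic.card_pow_eq_one_le hp.pos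
  have key : ∀ C : Subgroup Z, Nat.card C = p → (C : Set Z).toFinset = f := by
    intro C hC
    have hsub : (C : Set Z).toFinset ⊆ f := by
      intro x hx
      rw [Set.mem_toFinset] at hx
      simp only [f, Finset.mem_filter, Finset.mem_univ, true_and]
      have : (⟨x, hx⟩ : C) ^ p = 1 := by rw [← hC]; exact pow_card_eq_one'
      exact congrArg (fun z : C => (z : Z)) this
    have hcard : f.card ≤ (C : Set Z).toFinset.card := by
      rw [Set.toFinset_card]
      calc f.card ≤ p := hf
      _ = Nat.card C := hC.symm
      _ = Fintype.card (C : Set Z) := by rw [Nat.card_eq_fintype_card]; rfl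
    exact Finset.eq_of_subset_of_card_le hsub hcard
  have := (key A hA).trans (key B hB).symm
  ext x
  constructor <;> intro hx
  · have : x ∈ (B : Set Z).toFinset := by rw [← this]; rwa [Set.mem_toFinset]
    rwa [Set.mem_toFinset] at this
  · have : x ∈ (A : Set Z).toFinset := by rw [this]; rwa [Set.mem_toFinset]
    rwa [Set.mem_toFinset] at this

private lemma centralizer_normal {G : Type u} [Group G] (N : Subgroup G) (hN : N.Normal) :
    (Subgroup.centralizer (N : Set G)).Normal := by
  constructor
  intro k hk g
  rw [Subgroup.mem_centralizer_iff] at hk ⊢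
  intro n hn
  have hn' : g⁻¹ * n * g ∈ N := by
    have := hN.conj_mem n hn g⁻¹
    simpa using this
  have := hk _ hn'
  calc n * (g * k * g⁻¹) = g * ((g⁻¹ * n * g) * k) * g⁻¹ := by group
  _ = g * (k * (g⁻¹ * n * g)) * g⁻¹ := by rw [this]
  _ = (g * k * g⁻¹) * n := by group

private lemma normal_of_le_center {G : Type u} [Group G] {H : Subgroup G}
    (h : H ≤ Subgroup.center G) : H.Normal := by
  constructor
  intro x hx g
  have : g * x * g⁻¹ = x := by
    rw [Subgroup.mem_center_iff.mp (h hx) g]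
    group
  rwa [this]

private lemma isCyclic_center_of_mulEquiv {G : Type u} {H : Type*} [Group G] [Group H]
    (e : G ≃* H) (h : IsCyclic (Subgroup.center G)) : IsCyclic (Subgroup.center H) := by
  have hmem : ∀ z : G, z ∈ Subgroup.center G → e z ∈ Subgroup.center H := by
    intro z hz
    rw [Subgroup.mem_center_iff]
    intro g
    obtain ⟨x, rfl⟩ := e.surjective g
    rw [← map_mul, ← map_mul, Subgroup.mem_center_iff.mp hz x]
  let f : Subgroup.center G →* Subgroup.center H :=
    { toFun := fun z => ⟨e z, hmem z z.2⟩
      map_one' := by ext; simp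
      map_mul' := by intros; ext; simp }
  have hsurj : Function.Surjective f := by
    rintro ⟨w, hw⟩
    have hw' : e.symm w ∈ Subgroup.center G := by
      rw [Subgroup.mem_center_iff]
      intro g
      have := Subgroup.mem_center_iff.mp hw (e g)
      have := congrArg e.symm this
      simpa using this
    exact ⟨⟨e.symm w, hw'⟩, by ext; simp [f]⟩
  exact isCyclic_of_surjective f hsurj

private lemma ucs_top_of_card {p : ℕ} (hp : p.Prime) :
    ∀ (n : ℕ) (G : Type u) [Group G] [Finite G],
      Nat.card G = p ^ n → 2 ≤ n → Subgroup.upperCentralSeries G (n - 1) = ⊤ := by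
  intro n
  induction n using Nat.strong_induction_on with
  | _ n ih =>
    intro G _ _ hcard hn
    haveI := Fact.mk hp
    have hpG : IsPGroup p G := IsPGroup.of_card hcard
    haveI : Group.IsNilpotent G := hpG.isNilpotent
    haveI : Nontrivial G := Finite.one_lt_card_iff_nontrivial.mp
      (by rw [hcard]; exact Nat.one_lt_pow (by omega) hp.one_lt)
    rw [Subgroup.upperCentralSeries_eq_top_iff_nilpotencyClass_le]
    obtain ⟨k, hk0, hkcard⟩ := IsPGroup.card_center_eq_prime_pow hcard (by omega)
    obtain ⟨m, hm⟩ := IsPGroup.iff_card.mp (hpG.to_quotient (Subgroup.center G))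
    have hmk : m + k = n := by
      have h1 : Nat.card G = Nat.card (G ⧸ Subgroup.center G) * Nat.card (Subgroup.center G) :=
        Subgroup.card_eq_card_quotient_mul_card_subgroup _
      rw [hcard, hm, hkcard, ← pow_add] at h1
      exact (Nat.pow_right_injective hp.two_le h1.symm)
    rcases le_or_gt m 1 with hm1 | hm1
    · -- quotient by center is cyclic, so G is abelian
      have hcyc : IsCyclic (G ⧸ Subgroup.center G) := by
        apply isCyclic_of_card_dvd_prime (p := p)
        rw [hm]
        rcases Nat.le_one_iff_eq_zero_or_eq_one.mp hm1 with h | h <;> rw [h] <;> simp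
      letI := commGroupOfCyclicCenterQuotient (QuotientGroup.mk' (Subgroup.center G))
        (le_of_eq (QuotientGroup.ker_mk' _))
      have hcenter : Subgroup.center G = ⊤ := by
        rw [eq_top_iff]
        intro x _
        rw [Subgroup.mem_center_iff]
        intro g
        exact mul_comm g x
      have : Group.nilpotencyClass G ≤ 1 := by
        apply Subgroup.upperCentralSeries_eq_top_iff_nilpotencyClass_le.mp
        rw [Subgroup.upperCentralSeries_one, hcenter]
      omega
    · have hml : m < n := by omega
      have hq := ih m hml (G ⧸ Subgroup.center G) hm (by omega)
      have hq' : Group.nilpotencyClass (G ⧸ Subgroup.center G) ≤ m - 1 :=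
        Subgroup.upperCentralSeries_eq_top_iff_nilpotencyClass_le.mp hq
      have hplus : Group.nilpotencyClass G = Group.nilpotencyClass (G ⧸ Subgroup.center G) + 1 :=
        nilpotencyClass_eq_quotient_center_plus_one
      omega

private lemma class_eq_of_max {G : Type u} [Group G] [Group.IsNilpotent G] {m : ℕ} (hm : 2 ≤ m)
    (h1 : Subgroup.upperCentralSeries G (m - 1) = ⊤) (h2 : Subgroup.upperCentralSeries G (m - 2) ≠ ⊤) :
    Group.nilpotencyClass G = m - 1 := by
  have hle : Group.nilpotencyClass G ≤ m - 1 :=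
    Subgroup.upperCentralSeries_eq_top_iff_nilpotencyClass_le.mp h1
  have hge : ¬ Group.nilpotencyClass G ≤ m - 2 := by
    intro h
    exact h2 (Subgroup.upperCentralSeries_eq_top_iff_nilpotencyClass_le.mpr h)
  omega

private lemma card_dvd_of_le' {G : Type u} [Group G] [Finite G] {H K : Subgroup G} (h : H ≤ K) :
    Nat.card H ∣ Nat.card K := by
  have := Subgroup.card_subgroup_dvd_card (H.subgroupOf K)
  rwa [Nat.card_congr (Subgroup.subgroupOfEquivOfLe h).toEquiv] at this

private lemma exists_pow_orderOf_eq_prime' {p : ℕ} (hp : p.Prime) {G : Type u} [Group G]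
    (hG : IsPGroup p G) {x : G} (hx : x ≠ 1) :
    ∃ y : G, y ∈ Subgroup.zpowers x ∧ orderOf y = p := by
  haveI := Fact.mk hp
  obtain ⟨a, ha⟩ := IsPGroup.iff_orderOf.mp hG x
  have ha0 : a ≠ 0 := by
    rintro rfl
    exact hx (orderOf_eq_one_iff.mp (by simpa using ha))
  refine ⟨x ^ p ^ (a - 1), Subgroup.npow_mem_zpowers x _, ?_⟩
  apply orderOf_eq_prime
  · rw [← pow_mul, ← pow_succ]
    have : a - 1 + 1 = a := by omega
    rw [this, ← ha, pow_orderOf_eq_one]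
  · apply pow_ne_one_of_lt_orderOf
    · exact pow_ne_zero _ hp.pos.ne'
    · rw [ha]
      exact Nat.pow_lt_pow_right hp.one_lt (by omega)

private lemma aux {p : ℕ} (hp : p.Prime) :
    ∀ (n : ℕ) (G : Type u) [Group G] [Finite G], IsPGroup p G →
    ∀ (N : Subgroup G) [N.Normal], Nat.card N = n → p < Nat.card N →
    p < Nat.card (G ⧸ N) → IsCyclic (Subgroup.center (G ⧸ N)) →
    ∀ (R : Subgroup G), N ≤ R → (R.map (QuotientGroup.mk' N)).Normal →
    Nat.card (R.map (QuotientGroup.mk' N)) = p → ¬ IsMaximalClass p ↥R := by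
  intro n
  induction n using Nat.strong_induction_on with
  | _ n ih =>
    intro G _ _ hpG N hNnorm hNn hNcard hq hcyc R hNR hRnorm hRcard hmax
    haveI := Fact.mk hp
    obtain ⟨m, hm2, hcardR, h1, h2⟩ := hmax
    have hcardmul := card_map_mk'_mul N R hNR
    rw [hRcard] at hcardmul
    have hpm : p * Nat.card N = p ^ m := by rw [hcardmul, hcardR]
    have hcardN : Nat.card N = p ^ (m - 1) := by
      have hm' : p ^ m = p * p ^ (m - 1) := by
        rw [← pow_succ']
        congr 1
        omega
      rw [hm'] at hpm
      exact Nat.eq_of_mul_eq_mul_left hp.pos hpm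
    have hm3 : 3 ≤ m := by
      by_contra hcon
      have hmeq : m = 2 := by omega
      rw [hmeq] at hcardN
      rw [hcardN] at hNcard
      simp [pow_one] at hNcard
    have hRnormG : R.Normal := by
      have := hRnorm.comap (QuotientGroup.mk' N)
      rwa [Subgroup.comap_map_eq, QuotientGroup.ker_mk', sup_eq_left.mpr hNR] at this
    have hRbar_le : R.map (QuotientGroup.mk' N) ≤ Subgroup.center (G ⧸ N) :=
      le_center_of_card_eq_p hp (hpG.to_quotient N) hRnorm hRcard
    rcases Nat.lt_or_ge m 4 with hm4 | hm4
    · -- base case : m = 3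
      have hmeq : m = 3 := by omega
      have hN2 : Nat.card N = p ^ 2 := by rw [hcardN, hmeq]
      have hR3 : Nat.card R = p ^ 3 := by rw [hcardR, hmeq]
      have hNab : ∀ a ∈ N, ∀ b ∈ N, a * b = b * a := by
        intro a ha b hb
        exact congrArg Subtype.val
          (IsPGroup.commutative_of_card_eq_prime_sq (G := N) hN2 ⟨a, ha⟩ ⟨b, hb⟩)
      set K := Subgroup.centralizer (N : Set G) with hKdef
      have hKnorm : K.Normal := centralizer_normal N hNnorm
      have hNK : N ≤ K := fun a ha =>
        Subgroup.mem_centralizer_iff.mpr fun b hb => hNab b hb a ha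
      have hKR : K ⊓ R = N := by
        have hNle : N ≤ K ⊓ R := le_inf hNK hNR
        obtain ⟨c, hc⟩ := IsPGroup.iff_card.mp (hpG.to_subgroup (K ⊓ R))
        have hdvd3 : p ^ c ∣ p ^ 3 := by rw [← hc, ← hR3]; exact card_dvd_of_le' inf_le_right
        have hc3 : c ≤ 3 := (Nat.pow_dvd_pow_iff_le_right hp.one_lt).mp hdvd3
        have hdvd2 : p ^ 2 ∣ p ^ c := by rw [← hc, ← hN2]; exact card_dvd_of_le' hNle
        have hc2 : 2 ≤ c := (Nat.pow_dvd_pow_iff_le_right hp.one_lt).mp hdvd2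
        rcases (by omega : c = 2 ∨ c = 3) with hcc | hcc
        · exact (Subgroup.eq_of_le_of_card_ge hNle (by rw [hc, hcc, hN2])).symm
        · exfalso
          have hKRR : K ⊓ R = R :=
            Subgroup.eq_of_le_of_card_ge inf_le_right (by rw [hc, hcc, hR3])
          have hRK : R ≤ K := hKRR ▸ inf_le_left
          have hcenR : N.subgroupOf R ≤ Subgroup.center ↥R := by
            intro x hx
            rw [Subgroup.mem_center_iff]
            intro g
            exact Subtype.ext
              ((Subgroup.mem_centralizer_iff.mp (hRK g.2) x.1 (Subgroup.mem_subgroupOf.mp hx)).symm)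
          obtain ⟨z, hz⟩ :=
            IsPGroup.iff_card.mp ((hpG.to_subgroup R).to_subgroup (Subgroup.center ↥R))
          obtain ⟨w, hw⟩ :=
            IsPGroup.iff_card.mp ((hpG.to_subgroup R).to_quotient (Subgroup.center ↥R))
          have hcardsub : Nat.card (N.subgroupOf R) = p ^ 2 := by
            rw [Nat.card_congr (Subgroup.subgroupOfEquivOfLe hNR).toEquiv, hN2]
          have hz2 : 2 ≤ z := by
            have hdvd : p ^ 2 ∣ p ^ z := by
              rw [← hz, ← hcardsub]; exact card_dvd_of_le' hcenR
            exact (Nat.pow_dvd_pow_iff_le_right hp.one_lt).mp hdvd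
          have hzw : w + z = 3 := by
            have hcardeq : Nat.card ↥R =
                Nat.card (↥R ⧸ Subgroup.center ↥R) * Nat.card (Subgroup.center ↥R) :=
              Subgroup.card_eq_card_quotient_mul_card_subgroup _
            rw [hR3, hw, hz, ← pow_add] at hcardeq
            exact Nat.pow_right_injective hp.two_le hcardeq.symm
          have hcycR : IsCyclic (↥R ⧸ Subgroup.center ↥R) := by
            apply isCyclic_of_card_dvd_prime (p := p)
            rw [hw]
            calc p ^ w ∣ p ^ 1 := Nat.pow_dvd_pow p (by omega)
            _ = p := pow_one p
          letI := commGroupOfCyclicCenterQuotient (QuotientGroup.mk' (Subgroup.center ↥R))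
            (le_of_eq (QuotientGroup.ker_mk' _))
          have hcen_top : Subgroup.center ↥R = ⊤ := by
            rw [eq_top_iff]
            intro x _
            rw [Subgroup.mem_center_iff]
            intro g
            exact mul_comm g x
          apply h2
          have hm21 : m - 2 = 1 := by omega
          rw [hm21]; show Subgroup.upperCentralSeries (↥R) 1 = ⊤; rw [Subgroup.upperCentralSeries_one, hcen_top]
      have hKbar : K.map (QuotientGroup.mk' N) = ⊥ := by
        by_contra hKbne
        haveI hKbarnorm : (K.map (QuotientGroup.mk' N)).Normal :=
          hKnorm.map _ (QuotientGroup.mk'_surjective N)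
        obtain ⟨xb, hxbK, hxbZ, hxb1⟩ :=
          exists_mem_center hp (hpG.to_quotient N) hKbarnorm hKbne
        obtain ⟨yb, hybmem, hordyb⟩ :=
          exists_pow_orderOf_eq_prime' hp (hpG.to_quotient N) hxb1
        have hybK : yb ∈ K.map (QuotientGroup.mk' N) := Subgroup.zpowers_le.mpr hxbK hybmem
        have hybZ : yb ∈ Subgroup.center (G ⧸ N) := Subgroup.zpowers_le.mpr hxbZ hybmem
        have hcardA :
            Nat.card ((R.map (QuotientGroup.mk' N)).subgroupOf (Subgroup.center (G ⧸ N))) = p := by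
          rw [Nat.card_congr (Subgroup.subgroupOfEquivOfLe hRbar_le).toEquiv, hRcard]
        have hcardB :
            Nat.card (Subgroup.zpowers (⟨yb, hybZ⟩ : Subgroup.center (G ⧸ N))) = p := by
          rw [Nat.card_zpowers, Subgroup.orderOf_mk, hordyb]
        have hAB := subgroup_eq_of_card_eq_p hp _ _ hcardA hcardB
        have hRb_ne : R.map (QuotientGroup.mk' N) ≠ ⊥ := by
          intro h
          rw [h, Subgroup.card_bot] at hRcard
          have := hp.one_lt
          omega
        rcases (R.map (QuotientGroup.mk' N)).bot_or_exists_ne_one with h | ⟨rb, hrbR, hrb1⟩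
        · exact hRb_ne h
        have hrbZc : rb ∈ Subgroup.center (G ⧸ N) := hRbar_le hrbR
        have hmemA : (⟨rb, hrbZc⟩ : Subgroup.center (G ⧸ N)) ∈
            (R.map (QuotientGroup.mk' N)).subgroupOf (Subgroup.center (G ⧸ N)) :=
          Subgroup.mem_subgroupOf.mpr hrbR
        rw [hAB] at hmemA
        obtain ⟨k, hk⟩ := hmemA
        have hrbK : rb ∈ K.map (QuotientGroup.mk' N) := by
          have hval : rb = yb ^ k := by
            have := congrArg Subtype.val hk
            simpa using this.symm
          rw [hval]
          exact Subgroup.zpow_mem _ hybK k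
        obtain ⟨r0, hr0R, hr0⟩ := hrbR
        obtain ⟨k0, hk0K, hk0⟩ := hrbK
        have hquot : (QuotientGroup.mk' N) (r0⁻¹ * k0) = 1 := by
          rw [map_mul, map_inv, hk0, hr0]
          simp
        have hr0k0 : r0⁻¹ * k0 ∈ N := (QuotientGroup.eq_one_iff _).mp hquot
        have hk0R : k0 ∈ R := by
          have : r0 * (r0⁻¹ * k0) ∈ R := Subgroup.mul_mem R hr0R (hNR hr0k0)
          simpa using this
        have hk0N : k0 ∈ N := by
          rw [← hKR]
          exact ⟨hk0K, hk0R⟩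
        apply hrb1
        rw [← hk0]
        exact (QuotientGroup.eq_one_iff k0).mpr hk0N
      have hKN : K = N := by
        refine le_antisymm (fun k hk => ?_) hNK
        have hmem : (QuotientGroup.mk' N) k ∈ K.map (QuotientGroup.mk' N) :=
          Subgroup.mem_map_of_mem _ hk
        rw [hKbar] at hmem
        exact (QuotientGroup.eq_one_iff k).mp (Subgroup.mem_bot.mp hmem)
      set Z₀ := Subgroup.center G ⊓ N with hZ₀def
      have hZ₀N : Z₀ ≤ N := inf_le_right
      have hZ₀C : Z₀ ≤ Subgroup.center G := inf_le_left
      have hNbot : N ≠ ⊥ := by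
        intro h
        rw [h, Subgroup.card_bot] at hNcard
        have := hp.pos
        omega
      have hNnotcen : ¬ N ≤ Subgroup.center G := by
        intro hle
        have hKtop : K = ⊤ := by
          rw [eq_top_iff]
          intro g _
          exact Subgroup.mem_centralizer_iff.mpr fun b hb =>
            (Subgroup.mem_center_iff.mp (hle hb) g).symm
        have hNtop : N = ⊤ := by rw [← hKN, hKtop]
        rw [hNtop] at hq
        haveI := QuotientGroup.subsingleton_quotient_top (G := G)
        have hone : Nat.card (G ⧸ (⊤ : Subgroup G)) = 1 :=
          Nat.card_eq_one_iff_unique.mpr ⟨inferInstance, inferInstance⟩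
        rw [hone] at hq
        have := hp.pos
        omega
      have hZ₀bot : Z₀ ≠ ⊥ := by
        obtain ⟨x0, hx0N, hx0Z, hx01⟩ := exists_mem_center hp hpG hNnorm hNbot
        intro h
        have hx0 : x0 ∈ Z₀ := ⟨hx0Z, hx0N⟩
        rw [h] at hx0
        exact hx01 (Subgroup.mem_bot.mp hx0)
      have hZ₀neN : Z₀ ≠ N := by
        intro h
        exact hNnotcen (h ▸ hZ₀C)
      have hcardZ₀ : Nat.card Z₀ = p := by
        obtain ⟨z, hz⟩ := IsPGroup.iff_card.mp (hpG.to_subgroup Z₀)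
        have hzd : p ^ z ∣ p ^ 2 := by rw [← hz, ← hN2]; exact card_dvd_of_le' hZ₀N
        have hz2 : z ≤ 2 := (Nat.pow_dvd_pow_iff_le_right hp.one_lt).mp hzd
        have hz0 : z ≠ 0 := by
          intro h0
          rw [h0, pow_zero] at hz
          exact hZ₀bot (Subgroup.card_eq_one.mp hz)
        have hz2' : z ≠ 2 := by
          intro h2'
          rw [h2', ← hN2] at hz
          exact hZ₀neN (Subgroup.eq_of_le_of_card_ge hZ₀N (le_of_eq hz.symm))
        have : z = 1 := by omega
        rw [this, pow_one] at hz
        exact hz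
      have hLleN : ⁅(⊤ : Subgroup G), N⁆ ≤ N := Subgroup.commutator_le_right ⊤ N
      haveI hLnorm : (⁅(⊤ : Subgroup G), N⁆).Normal := Subgroup.commutator_normal ⊤ N
      have hLneN : ⁅(⊤ : Subgroup G), N⁆ ≠ N := by
        intro hLN
        haveI : Group.IsNilpotent G := hpG.isNilpotent
        obtain ⟨k, hk⟩ := Subgroup.nilpotent_iff_lowerCentralSeries.mp this
        have hsub : ∀ i, N ≤ Subgroup.lowerCentralSeries ⊤ i := by
          intro i
          induction i with
          | zero => rw [Subgroup.lowerCentralSeries_zero]; exact le_top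
          | succ i ihi =>
            rw [Subgroup.lowerCentralSeries_succ]
            calc N = ⁅(⊤ : Subgroup G), N⁆ := hLN.symm
            _ = ⁅N, (⊤ : Subgroup G)⁆ := Subgroup.commutator_comm ⊤ N
            _ ≤ ⁅Subgroup.lowerCentralSeries ⊤ i, (⊤ : Subgroup G)⁆ :=
              Subgroup.commutator_mono ihi le_rfl
        have hNle := hsub k
        rw [hk] at hNle
        exact hNbot (le_bot_iff.mp hNle)
      have hLZ₀ : ⁅(⊤ : Subgroup G), N⁆ ≤ Z₀ := by
        obtain ⟨l, hl⟩ := IsPGroup.iff_card.mp (hpG.to_subgroup ⁅(⊤ : Subgroup G), N⁆)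
        have hld : p ^ l ∣ p ^ 2 := by rw [← hl, ← hN2]; exact card_dvd_of_le' hLleN
        have hl2 : l ≤ 2 := (Nat.pow_dvd_pow_iff_le_right hp.one_lt).mp hld
        have hl2' : l ≠ 2 := by
          intro hll
          exact hLneN (Subgroup.eq_of_le_of_card_ge hLleN (by rw [hl, hll, hN2]))
        rcases (by omega : l = 0 ∨ l = 1) with h0 | h1
        · have hbot : ⁅(⊤ : Subgroup G), N⁆ = ⊥ :=
            Subgroup.card_eq_one.mp (by rw [hl, h0, pow_zero])
          rw [hbot]
          exact bot_le
        · have hcen : ⁅(⊤ : Subgroup G), N⁆ ≤ Subgroup.center G :=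
            le_center_of_card_eq_p hp hpG hLnorm (by rw [hl, h1, pow_one])
          exact le_inf hcen hLleN
      have hNnotZ₀ : ¬ N ≤ Z₀ := fun h => hZ₀neN (le_antisymm hZ₀N h)
      obtain ⟨n₀, hn₀N, hn₀Z₀⟩ := SetLike.not_le_iff_exists.mp hNnotZ₀
      have hcommZ : ∀ g : G, ⁅g, n₀⁆ ∈ Z₀ := fun g =>
        hLZ₀ (Subgroup.commutator_mem_commutator (Subgroup.mem_top g) hn₀N)
      let φ : G →* Z₀ :=
        { toFun := fun g => ⟨⁅g, n₀⁆, hcommZ g⟩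
          map_one' := by
            ext
            simp [commutatorElement_def]
          map_mul' := by
            intro g h
            ext
            show ⁅g * h, n₀⁆ = ⁅g, n₀⁆ * ⁅h, n₀⁆
            have hb : ∀ w : G, w * ⁅h, n₀⁆ = ⁅h, n₀⁆ * w := fun w =>
              Subgroup.mem_center_iff.mp (hZ₀C (hcommZ h)) w
            have key : ⁅g * h, n₀⁆ = g * ⁅h, n₀⁆ * g⁻¹ * ⁅g, n₀⁆ := by
              simp only [commutatorElement_def]
              group
            rw [key, hb g, mul_inv_cancel_right]
            exact (hb ⁅g, n₀⁆).symm }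
      have hker : φ.ker = N := by
        have hMN : Z₀ ⊔ Subgroup.zpowers n₀ = N := by
          have hle : Z₀ ⊔ Subgroup.zpowers n₀ ≤ N :=
            sup_le hZ₀N (Subgroup.zpowers_le.mpr hn₀N)
          obtain ⟨d, hd⟩ := IsPGroup.iff_card.mp (hpG.to_subgroup (Z₀ ⊔ Subgroup.zpowers n₀))
          have hdd : p ^ d ∣ p ^ 2 := by rw [← hd, ← hN2]; exact card_dvd_of_le' hle
          have hd2 : d ≤ 2 := (Nat.pow_dvd_pow_iff_le_right hp.one_lt).mp hdd
          have hpd : Nat.card Z₀ ∣ Nat.card (Z₀ ⊔ Subgroup.zpowers n₀ : Subgroup G) :=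
            card_dvd_of_le' le_sup_left
          rw [hcardZ₀, hd] at hpd
          have hpd' : p ^ 1 ∣ p ^ d := by rwa [pow_one]
          have hd1 : 1 ≤ d := (Nat.pow_dvd_pow_iff_le_right hp.one_lt).mp hpd'
          have hd1' : d ≠ 1 := by
            intro hdd1
            have heq : Z₀ = Z₀ ⊔ Subgroup.zpowers n₀ :=
              Subgroup.eq_of_le_of_card_ge le_sup_left (by rw [hd, hdd1, pow_one, hcardZ₀])
            apply hn₀Z₀
            rw [heq]
            exact Subgroup.mem_sup_right (Subgroup.mem_zpowers n₀)
          have hd2' : d = 2 := by omega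
          exact Subgroup.eq_of_le_of_card_ge hle (by rw [hd, hd2', hN2])
        ext g
        rw [MonoidHom.mem_ker]
        constructor
        · intro hg
          have hgn : ⁅g, n₀⁆ = 1 := congrArg Subtype.val hg
          have hcomm : g * n₀ = n₀ * g := commutatorElement_eq_one_iff_mul_comm.mp hgn
          have hcent : N ≤ Subgroup.centralizer {g} := by
            rw [← hMN]
            apply sup_le
            · intro z hz
              exact Subgroup.mem_centralizer_iff.mpr fun h hh => by
                rw [Set.mem_singleton_iff] at hh
                subst hh
                exact Subgroup.mem_center_iff.mp (hZ₀C hz) h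
            · rw [Subgroup.zpowers_le]
              exact Subgroup.mem_centralizer_iff.mpr fun h hh => by
                rw [Set.mem_singleton_iff] at hh
                subst hh
                exact hcomm
          have hgK : g ∈ K := Subgroup.mem_centralizer_iff.mpr fun b hb =>
            (Subgroup.mem_centralizer_iff.mp (hcent hb) g (Set.mem_singleton g)).symm
          rw [← hKN]
          exact hgK
        · intro hgN
          exact Subtype.ext (commutatorElement_eq_one_iff_mul_comm.mpr (hNab g hgN n₀ hn₀N))
      have hcard_le : Nat.card (G ⧸ N) ≤ p := by
        calc Nat.card (G ⧸ N) = Nat.card (G ⧸ φ.ker) := by rw [hker]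
        _ = Nat.card φ.range := Nat.card_congr (QuotientGroup.quotientKerEquivRange φ).toEquiv
        _ ≤ Nat.card Z₀ := Subgroup.card_le_card_group φ.range
        _ = p := hcardZ₀
      omega

    · -- inductive step
      have hNbot : N ≠ ⊥ := by
        intro h
        rw [h, Subgroup.card_bot] at hNcard
        have := hp.pos
        omega
      obtain ⟨x, hxN, hxZ, hx1⟩ := exists_mem_center hp hpG hNnorm hNbot
      obtain ⟨y, hymem, hordy⟩ := exists_pow_orderOf_eq_prime' hp hpG hx1
      set Z₀ := Subgroup.zpowers y with hZ₀def
      have hZ₀N : Z₀ ≤ N := Subgroup.zpowers_le.mpr (Subgroup.zpowers_le.mpr hxN hymem)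
      have hZ₀Z : Z₀ ≤ Subgroup.center G :=
        Subgroup.zpowers_le.mpr (Subgroup.zpowers_le.mpr hxZ hymem)
      haveI hZ₀norm : Z₀.Normal := normal_of_le_center hZ₀Z
      have hcardZ₀ : Nat.card Z₀ = p := by rw [hZ₀def, Nat.card_zpowers, hordy]
      set π := QuotientGroup.mk' Z₀ with hπdef
      set N' := N.map π with hN'def
      set R' := R.map π with hR'def
      haveI hN'norm : N'.Normal := hNnorm.map π (QuotientGroup.mk'_surjective _)
      haveI hR'norm : R'.Normal := hRnormG.map π (QuotientGroup.mk'_surjective _)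
      have hZ₀R : Z₀ ≤ R := le_trans hZ₀N hNR
      have hcN' : Nat.card N' * p = Nat.card N := by
        rw [← hcardZ₀]
        exact card_map_mk'_mul Z₀ N hZ₀N
      have hcR' : Nat.card R' * p = Nat.card R := by
        rw [← hcardZ₀]
        exact card_map_mk'_mul Z₀ R hZ₀R
      have hcardN' : Nat.card N' = p ^ (m - 2) := by
        have h' : p ^ (m - 1) = p ^ (m - 2) * p := by rw [← pow_succ]; congr 1; omega
        rw [hcardN, h'] at hcN'
        exact Nat.eq_of_mul_eq_mul_right hp.pos hcN'
      have hcardR' : Nat.card R' = p ^ (m - 1) := by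
        have h' : p ^ m = p ^ (m - 1) * p := by rw [← pow_succ]; congr 1; omega
        rw [hcardR, h'] at hcR'
        exact Nat.eq_of_mul_eq_mul_right hp.pos hcR'
      have e3 := QuotientGroup.quotientQuotientEquivQuotient Z₀ N hZ₀N
      have hq' : p < Nat.card ((G ⧸ Z₀) ⧸ N') := by
        rw [Nat.card_congr e3.toEquiv]
        exact hq
      have hcyc' : IsCyclic (Subgroup.center ((G ⧸ Z₀) ⧸ N')) :=
        isCyclic_center_of_mulEquiv e3.symm hcyc
      have hNR' : N' ≤ R' := Subgroup.map_mono hNR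
      haveI : (R'.map (QuotientGroup.mk' N')).Normal :=
        hR'norm.map _ (QuotientGroup.mk'_surjective _)
      have hRcard' : Nat.card (R'.map (QuotientGroup.mk' N')) = p := by
        have hmm := card_map_mk'_mul N' R' hNR'
        rw [hcardN', hcardR'] at hmm
        have h' : p ^ (m - 1) = p * p ^ (m - 2) := by rw [← pow_succ']; congr 1; omega
        rw [h'] at hmm
        exact Nat.eq_of_mul_eq_mul_right (pow_pos hp.pos _) hmm
      have hNcard' : p < Nat.card N' := by
        rw [hcardN']
        calc p = p ^ 1 := (pow_one p).symm
        _ < p ^ (m - 2) := Nat.pow_lt_pow_right hp.one_lt (by omega)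
      have hlt : Nat.card N' < n := by
        have hppow : p ^ (m - 2) < p ^ (m - 1) := Nat.pow_lt_pow_right hp.one_lt (by omega)
        omega
      have hIsMax' : IsMaximalClass p ↥R' := by
        refine ⟨m - 1, by omega, hcardR', ?_, ?_⟩
        · have := ucs_top_of_card hp (m - 1) ↥R' hcardR' (by omega)
          exact this
        · intro htop
          let f := π.subgroupMap R
          have hfker : f.ker ≤ Subgroup.center ↥R := by
            rintro ⟨r, hrR⟩ hker
            have h1' : π r = 1 := by
              have := congrArg Subtype.val hker
              exact this
            have hrZ : r ∈ Z₀ := (QuotientGroup.eq_one_iff r).mp h1'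
            rw [Subgroup.mem_center_iff]
            intro g
            exact Subtype.ext (Subgroup.mem_center_iff.mp (hZ₀Z hrZ) g.1)
          haveI hnilR' : Group.IsNilpotent ↥R' := ⟨⟨m - 1 - 2, htop⟩⟩
          haveI hnilR : Group.IsNilpotent ↥R := ⟨⟨m - 1, h1⟩⟩
          have hclassR' : Group.nilpotencyClass ↥R' ≤ m - 1 - 2 :=
            Subgroup.upperCentralSeries_eq_top_iff_nilpotencyClass_le.mp htop
          have hclassR : Group.nilpotencyClass ↥R = m - 1 := class_eq_of_max hm2 h1 h2
          have hle : Group.nilpotencyClass ↥R ≤ Group.nilpotencyClass ↥R' + 1 :=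
            nilpotencyClass_le_of_ker_le_center f hfker
          omega
      exact ih (Nat.card N') hlt (G ⧸ Z₀) (hpG.to_quotient Z₀) N' rfl hNcard' hq' hcyc'
        R' hNR' inferInstance hRcard' hIsMax'

/-- Let `G` be a finite `p`-group, `N ⊴ G` of order `> p`, and suppose `G ⧸ N` has
order `> p` and cyclic center. If `R/N` is a normal subgroup of order `p` in `G ⧸ N`,
then `R` is not of maximal class. -/
theorem stmt_14 {p : ℕ} (hp : p.Prime) (G : Type*) [Group G] [Finite G]
    (hpG : IsPGroup p G) (N : Subgroup G) (hN : N.Normal) (hNcard : p < Nat.card N)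
    (hq : p < Nat.card (G ⧸ N)) (hcyc : IsCyclic (Subgroup.center (G ⧸ N)))
    (R : Subgroup G) (hNR : N ≤ R)
    (hRnorm : (R.map (QuotientGroup.mk' N)).Normal)
    (hRcard : Nat.card (R.map (QuotientGroup.mk' N)) = p) :
    ¬ IsMaximalClass p R := by
  haveI := hN
  exact aux hp (Nat.card N) G hpG N rfl hNcard hq hcyc R hNR hRnorm hRcard
end

section
/- Let G be a finite p-group and A < G a subgroup of order > p. If every subgroup of G containing A as a subgroup of index p is of maximal class, then G is of maximal class. -/
open Subgroup QuotientGroup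

namespace MCAux

variable {p : ℕ}

lemma ucs_comap_eq {G H : Type*} [Group G] [Group H] (e : G ≃* H) (n : ℕ) :
    (Subgroup.upperCentralSeries H n).comap (e : G →* H) = Subgroup.upperCentralSeries G n :=
  Subgroup.comap_upperCentralSeries (e : G ≃* H) n

lemma ucs_top_iff_of_equiv {G H : Type*} [Group G] [Group H] (e : G ≃* H) (n : ℕ) :
    Subgroup.upperCentralSeries H n = ⊤ ↔ Subgroup.upperCentralSeries G n = ⊤ := by
  constructor
  · intro h
    rw [← ucs_comap_eq e n, h, comap_top]
  · intro h
    have h2 : (Subgroup.upperCentralSeries H n).comap (e : G →* H) = (⊤ : Subgroup H).comap (e : G →* H) := by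
      rw [comap_top, ucs_comap_eq e n, h]
    exact comap_injective e.surjective h2

lemma mc_of_mulEquiv {G H : Type*} [Group G] [Group H] (e : G ≃* H)
    (h : IsMaximalClass p G) : IsMaximalClass p H := by
  obtain ⟨m, hm, hcard, h1, h2⟩ := h
  refine ⟨m, hm, ?_, ?_, ?_⟩
  · rw [← Nat.card_congr e.toEquiv, hcard]
  · exact (ucs_top_iff_of_equiv e _).mpr h1
  · exact fun ht => h2 ((ucs_top_iff_of_equiv e _).mp ht)

lemma relindex_card {G : Type*} [Group G] [Finite G] {A M : Subgroup G} (h : A ≤ M) :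
    A.relIndex M * Nat.card A = Nat.card M := by
  have h1 : Nat.card (A.subgroupOf M) * (A.subgroupOf M).index = Nat.card M :=
    Subgroup.card_mul_index _
  have h2 : Nat.card (A.subgroupOf M) = Nat.card A :=
    Nat.card_congr (subgroupOfEquivOfLe h).toEquiv
  rw [Subgroup.relIndex, mul_comm, ← h2, h1]

lemma relindex_eq_of_card {G : Type*} [Group G] [Finite G] {A M : Subgroup G} (h : A ≤ M)
    (hc : Nat.card M = p * Nat.card A) (hp : p.Prime) : A.relIndex M = p := by
  have := relindex_card h
  rw [hc] at this
  have hA : 0 < Nat.card A := Nat.card_pos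
  exact Nat.eq_of_mul_eq_mul_right hA this

lemma exists_over (hp : p.Prime) {G : Type*} [Group G] [Finite G] (hpG : IsPGroup p G)
    {A : Subgroup G} (hA : A ≠ ⊤) :
    ∃ M : Subgroup G, A ≤ M ∧ Nat.card M = p * Nat.card A ∧ A.relIndex M = p := by
  haveI : Fact p.Prime := ⟨hp⟩
  obtain ⟨n, hn⟩ := IsPGroup.iff_card.mp hpG
  have hdvd : Nat.card A ∣ p ^ n := hn ▸ Subgroup.card_subgroup_dvd_card A
  obtain ⟨a, han, hcA⟩ := (Nat.dvd_prime_pow hp).mp hdvd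
  have haln : a < n := by
    rcases lt_or_eq_of_le han with h | h
    · exact h
    · exfalso; exact hA (Subgroup.eq_top_of_card_eq _ (by rw [hcA, h, hn]))
  have hdvd2 : p ^ (a + 1) ∣ Nat.card G := by
    rw [hn]; exact pow_dvd_pow p haln
  obtain ⟨K, hK1, hK2⟩ := Sylow.exists_subgroup_card_pow_succ hdvd2 hcA
  refine ⟨K, hK2, ?_, ?_⟩
  · rw [hK1, hcA, pow_succ, mul_comm]
  · exact relindex_eq_of_card hK2 (by rw [hK1, hcA, pow_succ, mul_comm]) hp

lemma ucs_top_mono {G : Type*} [Group G] {k l : ℕ} (h : k ≤ l)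
    (ht : Subgroup.upperCentralSeries G k = ⊤) : Subgroup.upperCentralSeries G l = ⊤ :=
  eq_top_iff.mpr (ht ▸ Subgroup.upperCentralSeries_mono G h)

lemma center_eq_top_of_comm {G : Type*} [Group G] (h : ∀ a b : G, a * b = b * a) :
    Subgroup.center G = ⊤ :=
  Subgroup.eq_top_iff' _ |>.mpr fun x => Subgroup.mem_center_iff.mpr fun g => h g x

/-- If `G/Z(G)` is cyclic then the center is everything. -/
lemma center_eq_top_of_cyclic_quotient {G : Type*} [Group G]
    (h : IsCyclic (G ⧸ Subgroup.center G)) : Subgroup.center G = ⊤ := by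
  haveI := h
  refine center_eq_top_of_comm
    (commutative_of_cyclic_center_quotient (QuotientGroup.mk' (Subgroup.center G)) ?_)
  rw [QuotientGroup.ker_mk']

end MCAux

universe u

namespace MCAux

variable {p : ℕ}

lemma ucs_top_of_card (hp : p.Prime) :
    ∀ n : ℕ, ∀ (G : Type u) [Group G] [Finite G], IsPGroup p G → Nat.card G = p ^ n → 2 ≤ n →
      Subgroup.upperCentralSeries G (n - 1) = ⊤ := by
  intro n
  induction n using Nat.strong_induction_on with
  | _ n ih =>
    intro G _ _ hpG hcard hn
    haveI : Fact p.Prime := ⟨hp⟩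
    have hnt : Nontrivial G := by
      rw [← Finite.one_lt_card_iff_nontrivial, hcard]
      exact Nat.one_lt_pow (by omega) hp.one_lt
    by_cases hZ : Subgroup.center G = ⊤
    · exact ucs_top_mono (by omega : 1 ≤ n - 1) (by rw [Subgroup.upperCentralSeries_one]; exact hZ)
    · have hZnt : Nontrivial (Subgroup.center G) := hpG.center_nontrivial
      obtain ⟨z, hz⟩ := (IsPGroup.iff_card).mp (hpG.to_subgroup (Subgroup.center G))
      obtain ⟨q, hq⟩ := (IsPGroup.iff_card).mp (hpG.to_quotient (Subgroup.center G))
      have hqz : p ^ q * p ^ z = p ^ n := by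
        rw [← hz, ← hq, ← hcard]
        exact (Subgroup.card_eq_card_quotient_mul_card_subgroup (Subgroup.center G)).symm
      have hsum : q + z = n := by
        rw [← pow_add] at hqz; exact Nat.pow_right_injective hp.two_le hqz
      have hz1 : 1 ≤ z := by
        rcases Nat.eq_zero_or_pos z with h0 | h
        · exfalso; rw [h0, pow_zero] at hz
          exact (Finite.one_lt_card_iff_nontrivial.mpr hZnt).ne' hz
        · exact h
      have hq2 : 2 ≤ q := by
        rcases Nat.lt_or_ge q 2 with hlt | hge
        · exfalso
          interval_cases q
          · refine hZ (Subgroup.eq_top_of_card_eq _ ?_)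
            rw [hz, hcard]; congr 1; omega
          · refine hZ (center_eq_top_of_cyclic_quotient
              (isCyclic_of_prime_card (p := p) ?_))
            rw [hq, pow_one]
        · exact hge
      have htop := ih q (by omega) (G ⧸ Subgroup.center G) (hpG.to_quotient _) hq (by omega)
      have hGq : Subgroup.upperCentralSeries G q = ⊤ := by
        have hcomap := Subgroup.comap_upperCentralSeries_quotient_center (G := G) (q - 1)
        rw [htop, Subgroup.comap_top] at hcomap
        have : (q - 1).succ = q := by omega
        rw [this] at hcomap
        exact hcomap.symm
      exact ucs_top_mono (by omega : q ≤ n - 1) hGq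

/-- The center of a maximal class `p`-group of order `p^m`, `m ≥ 3`, has order `p`. -/
lemma center_card_of_mc (hp : p.Prime) {G : Type u} [Group G] [Finite G] (hpG : IsPGroup p G)
    {m : ℕ} (hm : 3 ≤ m) (hcard : Nat.card G = p ^ m)
    (hne : Subgroup.upperCentralSeries G (m - 2) ≠ ⊤) : Nat.card (Subgroup.center G) = p := by
  haveI : Fact p.Prime := ⟨hp⟩
  have hnt : Nontrivial G := by
    rw [← Finite.one_lt_card_iff_nontrivial, hcard]
    exact Nat.one_lt_pow (by omega) hp.one_lt
  have hZnt : Nontrivial (Subgroup.center G) := hpG.center_nontrivial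
  obtain ⟨z, hz⟩ := (IsPGroup.iff_card).mp (hpG.to_subgroup (Subgroup.center G))
  obtain ⟨q, hq⟩ := (IsPGroup.iff_card).mp (hpG.to_quotient (Subgroup.center G))
  have hqz : p ^ q * p ^ z = p ^ m := by
    rw [← hz, ← hq, ← hcard]
    exact (Subgroup.card_eq_card_quotient_mul_card_subgroup (Subgroup.center G)).symm
  have hsum : q + z = m := by
    rw [← pow_add] at hqz; exact Nat.pow_right_injective hp.two_le hqz
  have hz1 : 1 ≤ z := by
    rcases Nat.eq_zero_or_pos z with h0 | h
    · exfalso; rw [h0, pow_zero] at hz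
      exact (Finite.one_lt_card_iff_nontrivial.mpr hZnt).ne' hz
    · exact h
  have hzle : z = 1 := by
    by_contra hz2
    have hz2' : 2 ≤ z := by omega
    have hqm : q ≤ m - 2 := by omega
    apply hne
    rcases Nat.lt_or_ge q 2 with hlt | hge
    · -- center has index ≤ p, so G is abelian
      have hZtop : Subgroup.center G = ⊤ := by
        interval_cases q
        · refine Subgroup.eq_top_of_card_eq _ ?_
          rw [hz, hcard]; congr 1; omega
        · refine center_eq_top_of_cyclic_quotient (isCyclic_of_prime_card (p := p) ?_)
          rw [hq, pow_one]
      exact ucs_top_mono (by omega : 1 ≤ m - 2)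
        (by rw [Subgroup.upperCentralSeries_one]; exact hZtop)
    · have htop := ucs_top_of_card hp q (G ⧸ Subgroup.center G) (hpG.to_quotient _) hq hge
      have hGq : Subgroup.upperCentralSeries G q = ⊤ := by
        have hcomap := Subgroup.comap_upperCentralSeries_quotient_center (G := G) (q - 1)
        rw [htop, Subgroup.comap_top] at hcomap
        have : (q - 1).succ = q := by omega
        rw [this] at hcomap
        exact hcomap.symm
      exact ucs_top_mono hqm hGq
  rw [hz, hzle, pow_one]

/-- Quotient of a maximal class group by its center is of maximal class. -/
lemma mc_quotient_center (hp : p.Prime) {G : Type u} [Group G] [Finite G] (hpG : IsPGroup p G)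
    {m : ℕ} (hm : 3 ≤ m) (hcard : Nat.card G = p ^ m)
    (htop : Subgroup.upperCentralSeries G (m - 1) = ⊤) (hne : Subgroup.upperCentralSeries G (m - 2) ≠ ⊤) :
    IsMaximalClass p (G ⧸ Subgroup.center G) := by
  have hZ : Nat.card (Subgroup.center G) = p := center_card_of_mc hp hpG hm hcard hne
  have hp0 : 0 < p := hp.pos
  have hqcard : Nat.card (G ⧸ Subgroup.center G) = p ^ (m - 1) := by
    have h := Subgroup.card_eq_card_quotient_mul_card_subgroup (Subgroup.center G)
    rw [hcard, hZ] at h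
    have : p ^ m = p ^ (m - 1) * p := by rw [← pow_succ]; congr 1; omega
    rw [this] at h
    exact Nat.eq_of_mul_eq_mul_right hp0 h.symm
  refine ⟨m - 1, by omega, hqcard, ?_, ?_⟩
  · -- ucs (G/Z) (m-2) = ⊤
    have hcomap := Subgroup.comap_upperCentralSeries_quotient_center (G := G) (m - 2)
    have : (m - 2).succ = m - 1 := by omega
    rw [this, htop] at hcomap
    have h2 : (m - 1) - 1 = m - 2 := by omega
    rw [h2]
    exact Subgroup.comap_injective (QuotientGroup.mk'_surjective _) (by rw [Subgroup.comap_top]; exact hcomap)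
  · intro hcon
    apply hne
    have h3 : (m - 1) - 2 = m - 3 := by omega
    rw [h3] at hcon
    have hcomap := Subgroup.comap_upperCentralSeries_quotient_center (G := G) (m - 3)
    rw [show Subgroup.upperCentralSeries _ (m - 3) = ⊤ from hcon, Subgroup.comap_top] at hcomap
    rcases Nat.eq_or_lt_of_le hm with h | h
    · -- m = 3 : (m-3).succ = 1 vs m - 2 = 1
      have : (m - 3).succ = m - 2 := by omega
      rw [this] at hcomap; exact hcomap.symm
    · have : (m - 3).succ = m - 2 := by omega
      rw [this] at hcomap; exact hcomap.symm

/-- Lift maximal class from `G/Z(G)` when the center has order `p`. -/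
lemma mc_lift (hp : p.Prime) {G : Type u} [Group G] [Finite G]
    (hZ : Nat.card (Subgroup.center G) = p)
    (h : IsMaximalClass p (G ⧸ Subgroup.center G)) : IsMaximalClass p G := by
  obtain ⟨m, hm, hcard, h1, h2⟩ := h
  have hGcard : Nat.card G = p ^ (m + 1) := by
    rw [Subgroup.card_eq_card_quotient_mul_card_subgroup (Subgroup.center G), hcard, hZ, pow_succ]
  refine ⟨m + 1, by omega, hGcard, ?_, ?_⟩
  · have hcomap := Subgroup.comap_upperCentralSeries_quotient_center (G := G) (m - 1)
    rw [show Subgroup.upperCentralSeries _ (m - 1) = ⊤ from h1, Subgroup.comap_top] at hcomap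
    have : (m - 1).succ = m := by omega
    rw [this] at hcomap
    have hmm : m + 1 - 1 = m := by omega
    rw [hmm]; exact hcomap.symm
  · intro hcon
    apply h2
    have hmm : m + 1 - 2 = m - 1 := by omega
    rw [hmm] at hcon
    have hcomap := Subgroup.comap_upperCentralSeries_quotient_center (G := G) (m - 2)
    have : (m - 2).succ = m - 1 := by omega
    rw [this, show Subgroup.upperCentralSeries _ (m - 1) = ⊤ from hcon] at hcomap
    exact Subgroup.comap_injective (QuotientGroup.mk'_surjective _)
      (by rw [Subgroup.comap_top]; exact hcomap)

end MCAux

namespace MCAux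

variable {p : ℕ}

open Subgroup QuotientGroup

/-- For `N ⊴ G`, `N ≤ M`: `M ⧸ N ≃* M.map (mk' N)`. -/
noncomputable def quotEquivMap {G : Type u} [Group G] (N M : Subgroup G) [N.Normal] (h : N ≤ M) :
    ↥M ⧸ N.subgroupOf M ≃* ↥(M.map (QuotientGroup.mk' N)) := by
  let φ : ↥M →* ↥(M.map (QuotientGroup.mk' N)) :=
    ((QuotientGroup.mk' N).domRestrict M).codRestrict _
      (fun x => Subgroup.mem_map.mpr ⟨x, x.2, rfl⟩)
  have hker : φ.ker = N.subgroupOf M := by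
    rw [MonoidHom.ker_codRestrict, MonoidHom.ker_restrict, QuotientGroup.ker_mk']
  have hsurj : Function.Surjective φ := by
    rintro ⟨y, hy⟩
    obtain ⟨x, hx, rfl⟩ := Subgroup.mem_map.mp hy
    exact ⟨⟨x, hx⟩, rfl⟩
  exact (QuotientGroup.quotientMulEquivOfEq hker.symm).trans
    (QuotientGroup.quotientKerEquivOfSurjective φ hsurj)

lemma card_map_mk' {G : Type u} [Group G] [Finite G] (N M : Subgroup G) [N.Normal] (h : N ≤ M) :
    Nat.card ↥(M.map (QuotientGroup.mk' N)) * Nat.card N = Nat.card M := by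
  have e := quotEquivMap N M h
  have h1 : Nat.card ↥M = Nat.card (↥M ⧸ N.subgroupOf M) * Nat.card (N.subgroupOf M) :=
    Subgroup.card_eq_card_quotient_mul_card_subgroup _
  rw [h1, Nat.card_congr e.toEquiv, Nat.card_congr (subgroupOfEquivOfLe h).toEquiv]

/-- If `M ⊇ Z(G)`, `|Z(G)| = p`, `M` is of maximal class of order `p^m`, `m ≥ 3`, then the image
of `M` in `G ⧸ Z(G)` is of maximal class. -/
lemma mc_map_quotient (hp : p.Prime) {G : Type u} [Group G] [Finite G] (hpG : IsPGroup p G)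
    {M : Subgroup G} (hZM : Subgroup.center G ≤ M)
    (hZcard : Nat.card (Subgroup.center G) = p)
    (hmc : IsMaximalClass p ↥M) {m : ℕ} (hm : 3 ≤ m) (hMcard : Nat.card ↥M = p ^ m) :
    IsMaximalClass p ↥(M.map (QuotientGroup.mk' (Subgroup.center G))) := by
  obtain ⟨m', hm', hcard', h1, h2⟩ := hmc
  have hmm : m' = m := Nat.pow_right_injective hp.two_le (hcard'.symm.trans hMcard)
  subst hmm
  -- center of ↥M is (center G).subgroupOf M
  have hle : (Subgroup.center G).subgroupOf M ≤ Subgroup.center ↥M := by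
    intro x hx
    rw [Subgroup.mem_center_iff]
    intro g
    exact Subtype.ext (Subgroup.mem_center_iff.mp (Subgroup.mem_subgroupOf.mp hx) g)
  have hcZM : Nat.card ((Subgroup.center G).subgroupOf M) = p := by
    rw [Nat.card_congr (subgroupOfEquivOfLe hZM).toEquiv, hZcard]
  have hcM : Nat.card (Subgroup.center ↥M) = p :=
    center_card_of_mc hp (hpG.to_subgroup M) hm hMcard h2
  have heq : (Subgroup.center G).subgroupOf M = Subgroup.center ↥M :=
    Subgroup.eq_of_le_of_card_ge hle (by rw [hcZM, hcM])
  have hq : IsMaximalClass p (↥M ⧸ Subgroup.center ↥M) :=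
    mc_quotient_center hp (hpG.to_subgroup M) hm hMcard h1 h2
  have e : (↥M ⧸ Subgroup.center ↥M) ≃* ↥(M.map (QuotientGroup.mk' (Subgroup.center G))) :=
    (QuotientGroup.quotientMulEquivOfEq heq.symm).trans (quotEquivMap _ M hZM)
  exact mc_of_mulEquiv e hq

end MCAux

namespace MCAux

variable {p : ℕ}

open Subgroup QuotientGroup

/-- The commutator map `y ↦ [x,y]` as a homomorphism into the center, when all values are
central. -/
def commHom {G : Type u} [Group G] (x : G)
    (hx : ∀ y : G, x * y * x⁻¹ * y⁻¹ ∈ Subgroup.center G) : G →* ↥(Subgroup.center G) where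
  toFun y := ⟨x * y * x⁻¹ * y⁻¹, hx y⟩
  map_one' := by
    ext
    show x * 1 * x⁻¹ * 1⁻¹ = 1
    group
  map_mul' a b := by
    ext
    show x * (a * b) * x⁻¹ * (a * b)⁻¹ = x * a * x⁻¹ * a⁻¹ * (x * b * x⁻¹ * b⁻¹)
    have hc : a⁻¹ * (x * b * x⁻¹ * b⁻¹) = x * b * x⁻¹ * b⁻¹ * a⁻¹ :=
      Subgroup.mem_center_iff.mp (hx b) a⁻¹
    calc x * (a * b) * x⁻¹ * (a * b)⁻¹
        = x * a * x⁻¹ * (x * b * x⁻¹ * b⁻¹ * a⁻¹) := by group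
      _ = x * a * x⁻¹ * (a⁻¹ * (x * b * x⁻¹ * b⁻¹)) := by rw [hc]
      _ = x * a * x⁻¹ * a⁻¹ * (x * b * x⁻¹ * b⁻¹) := by group

lemma commHom_apply {G : Type u} [Group G] (x : G)
    (hx : ∀ y : G, x * y * x⁻¹ * y⁻¹ ∈ Subgroup.center G) (y : G) :
    (commHom x hx y : G) = x * y * x⁻¹ * y⁻¹ := rfl

lemma commHom_ker_index_dvd {G : Type u} [Group G] [Finite G] (x : G)
    (hx : ∀ y : G, x * y * x⁻¹ * y⁻¹ ∈ Subgroup.center G) :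
    (commHom x hx).ker.index ∣ Nat.card (Subgroup.center G) := by
  rw [Subgroup.index_eq_card,
    Nat.card_congr (QuotientGroup.quotientKerEquivRange (commHom x hx)).toEquiv]
  exact Subgroup.card_subgroup_dvd_card _

lemma mem_commHom_ker_iff {G : Type u} [Group G] (x : G)
    (hx : ∀ y : G, x * y * x⁻¹ * y⁻¹ ∈ Subgroup.center G) (y : G) :
    y ∈ (commHom x hx).ker ↔ x * y = y * x := by
  rw [MonoidHom.mem_ker]
  constructor
  · intro h
    have h2 : x * y * x⁻¹ * y⁻¹ = 1 := by
      have := congrArg (Subtype.val) h; simpa [commHom_apply] using this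
    have h3 : x * y * x⁻¹ * y⁻¹ * (y * x) = 1 * (y * x) := by rw [h2]
    calc x * y = x * y * x⁻¹ * y⁻¹ * (y * x) := by group
      _ = 1 * (y * x) := h3
      _ = y * x := by group
  · intro h
    ext
    show x * y * x⁻¹ * y⁻¹ = 1
    rw [h]; group

lemma mem_center_of_comm {G : Type*} [Group G] {k : G} (h : ∀ y : G, y * k = k * y) :
    k ∈ Subgroup.center G := Subgroup.mem_center_iff.mpr h

/-- A group of order `p^4` with center of order `p` is of maximal class. -/
lemma base_p4 (hp : p.Prime) {G : Type u} [Group G] [Finite G] (hpG : IsPGroup p G)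
    (hcard : Nat.card G = p ^ 4) (hZ : Nat.card (Subgroup.center G) = p) :
    IsMaximalClass p G := by
  haveI : Fact p.Prime := ⟨hp⟩
  refine ⟨4, by norm_num, hcard, ucs_top_of_card hp 4 G hpG hcard (by norm_num), ?_⟩
  intro htop
  have hZne : Subgroup.center G ≠ ⊤ := by
    intro h
    rw [h, Subgroup.card_top, hcard] at hZ
    have h4 : p ^ 4 = p ^ 1 := by rw [hZ, pow_one]
    have : (4 : ℕ) = 1 := Nat.pow_right_injective hp.two_le h4
    omega
  obtain ⟨x, hx⟩ : ∃ x : G, x ∉ Subgroup.center G := by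
    by_contra h; push_neg at h; exact hZne ((Subgroup.eq_top_iff' _).mpr h)
  have hcomm2 : ∀ w : G, ∀ y : G, w * y * w⁻¹ * y⁻¹ ∈ Subgroup.center G := by
    intro w y
    have hwmem : w ∈ Subgroup.upperCentralSeries G 2 := (show Subgroup.upperCentralSeries G 2 = ⊤ from htop) ▸ Subgroup.mem_top w
    have := Subgroup.mem_upperCentralSeries_succ_iff.mp hwmem y
    rwa [Subgroup.upperCentralSeries_one] at this
  set φ := commHom x (hcomm2 x) with hφ
  set W := φ.ker with hW
  have hWne : W ≠ ⊤ := by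
    intro h
    apply hx
    apply mem_center_of_comm
    intro y
    have hy : y ∈ W := h ▸ Subgroup.mem_top y
    exact ((mem_commHom_ker_iff x (hcomm2 x) y).mp hy).symm
  have hWindex : W.index = p := by
    have hdvd := commHom_ker_index_dvd x (hcomm2 x)
    rw [hZ] at hdvd
    rcases (Nat.dvd_prime hp).mp hdvd with h | h
    · exact absurd (Subgroup.index_eq_one.mp h) hWne
    · exact h
  have hWcard : Nat.card W = p ^ 3 := by
    have h1 := Subgroup.card_mul_index W
    rw [hWindex, hcard] at h1
    have h2 : p ^ 4 = p ^ 3 * p := by ring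
    rw [h2] at h1
    exact Nat.eq_of_mul_eq_mul_right hp.pos h1
  have hZW : Subgroup.center G ≤ W := by
    intro z hz
    rw [mem_commHom_ker_iff]
    exact Subgroup.mem_center_iff.mp hz x
  have hxW : x ∈ W := by rw [mem_commHom_ker_iff]
  by_cases hab : ∀ a ∈ W, ∀ b ∈ W, a * b = b * a
  · -- W is abelian : find a large central subgroup
    obtain ⟨g, hg⟩ : ∃ g : G, g ∉ W := by
      by_contra h; push_neg at h; exact hWne ((Subgroup.eq_top_iff' _).mpr h)
    set ψ := (commHom g (hcomm2 g)).domRestrict W with hψ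
    have hKindex : ψ.ker.index ∣ p := by
      rw [Subgroup.index_eq_card,
        Nat.card_congr (QuotientGroup.quotientKerEquivRange ψ).toEquiv, ← hZ]
      exact Subgroup.card_subgroup_dvd_card _
    have hKcard : p ^ 2 ≤ Nat.card ψ.ker := by
      have h1 := Subgroup.card_mul_index ψ.ker
      rw [hWcard] at h1
      have hle : ψ.ker.index ≤ p := Nat.le_of_dvd hp.pos hKindex
      have h2 : p ^ 2 * p ≤ Nat.card ψ.ker * p := by
        rw [← pow_succ]
        calc p ^ 3 = Nat.card ψ.ker * ψ.ker.index := h1.symm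
          _ ≤ Nat.card ψ.ker * p := Nat.mul_le_mul_left _ hle
      exact Nat.le_of_mul_le_mul_right h2 hp.pos
    have hsup : W ⊔ Subgroup.zpowers g = ⊤ := by
      obtain ⟨s, hsle, hscard⟩ := (Nat.dvd_prime_pow hp).mp
        (hcard ▸ Subgroup.card_subgroup_dvd_card (W ⊔ Subgroup.zpowers g))
      have hle3 : (p : ℕ) ^ 3 ≤ p ^ s := by
        rw [← hWcard, ← hscard]; exact Subgroup.card_le_of_le le_sup_left
      have hs3 : 3 ≤ s := (Nat.pow_le_pow_iff_right hp.one_lt).mp hle3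
      have hsne : s ≠ 3 := by
        intro h
        have heq : W = W ⊔ Subgroup.zpowers g :=
          Subgroup.eq_of_le_of_card_ge le_sup_left (by rw [hscard, hWcard, h])
        have : g ∈ W := by
          rw [heq]; exact Subgroup.mem_sup_right (Subgroup.mem_zpowers g)
        exact hg this
      have hs4 : s = 4 := by omega
      exact Subgroup.eq_top_of_card_eq _ (by rw [hscard, hs4, hcard])
    have hcent : ∀ k : ↥W, k ∈ ψ.ker → (k : G) ∈ Subgroup.center G := by
      intro k hk
      apply mem_center_of_comm
      have hC : W ⊔ Subgroup.zpowers g ≤ Subgroup.centralizer {(k : G)} := by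
        refine sup_le ?_ ?_
        · intro w hw
          exact Subgroup.mem_centralizer_singleton_iff.mpr (hab w hw k k.2)
        · rw [Subgroup.zpowers_le]
          refine Subgroup.mem_centralizer_singleton_iff.mpr ?_
          have hk2 : (k : G) ∈ (commHom g (hcomm2 g)).ker :=
            MonoidHom.mem_ker.mpr (MonoidHom.mem_ker.mp hk)
          exact (mem_commHom_ker_iff g (hcomm2 g) (k : G)).mp hk2
      intro y
      have hy : y ∈ Subgroup.centralizer {(k : G)} := by
        apply hC; rw [hsup]; exact Subgroup.mem_top y
      exact Subgroup.mem_centralizer_singleton_iff.mp hy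
    have hmap : ψ.ker.map W.subtype ≤ Subgroup.center G := by
      intro y hy
      obtain ⟨k, hk, rfl⟩ := Subgroup.mem_map.mp hy
      exact hcent k hk
    have hcard2 : Nat.card ψ.ker ≤ p := by
      rw [← hZ]
      calc Nat.card ψ.ker = Nat.card (ψ.ker.map W.subtype) :=
            Nat.card_congr (Subgroup.equivMapOfInjective _ _ W.subtype_injective).toEquiv
        _ ≤ Nat.card (Subgroup.center G) := Subgroup.card_le_of_le hmap
    nlinarith [hp.two_le]
  · -- W is nonabelian : its center is too big
    push_neg at hab
    obtain ⟨a, ha, b, hb, hne⟩ := hab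
    have hxc : (⟨x, hxW⟩ : ↥W) ∈ Subgroup.center ↥W := by
      rw [Subgroup.mem_center_iff]
      intro w
      refine Subtype.ext ?_
      show (w : G) * x = x * (w : G)
      exact ((mem_commHom_ker_iff x (hcomm2 x) w).mp w.2).symm
    have hZsub : (Subgroup.center G).subgroupOf W ≤ Subgroup.center ↥W := by
      intro u hu
      rw [Subgroup.mem_center_iff]
      intro w
      refine Subtype.ext ?_
      show (w : G) * u = (u : G) * w
      exact Subgroup.mem_center_iff.mp (Subgroup.mem_subgroupOf.mp hu) w
    have hneq : (Subgroup.center G).subgroupOf W ≠ Subgroup.center ↥W := by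
      intro h
      have hmem : (⟨x, hxW⟩ : ↥W) ∈ (Subgroup.center G).subgroupOf W := h ▸ hxc
      exact hx (Subgroup.mem_subgroupOf.mp hmem)
    have hcsub : Nat.card ((Subgroup.center G).subgroupOf W) = p := by
      rw [Nat.card_congr (subgroupOfEquivOfLe hZW).toEquiv, hZ]
    obtain ⟨t, htle, htcard⟩ := (Nat.dvd_prime_pow hp).mp
      (hWcard ▸ Subgroup.card_subgroup_dvd_card (Subgroup.center ↥W))
    have ht2 : 2 ≤ t := by
      have ht1 : p ^ 1 ≤ p ^ t := by
        rw [← htcard, pow_one, ← hcsub]; exact Subgroup.card_le_of_le hZsub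
      have ht1' : 1 ≤ t := (Nat.pow_le_pow_iff_right hp.one_lt).mp ht1
      rcases Nat.lt_or_ge t 2 with h | h
      · exfalso
        have hteq : t = 1 := by omega
        exact hneq (Subgroup.eq_of_le_of_card_ge hZsub (by rw [htcard, hteq, pow_one, hcsub]))
      · exact h
    obtain ⟨qq, hqq⟩ := (IsPGroup.iff_card).mp
      ((hpG.to_subgroup W).to_quotient (Subgroup.center ↥W))
    have hprod : p ^ qq * p ^ t = p ^ 3 := by
      rw [← hqq, ← htcard, ← hWcard]
      exact (Subgroup.card_eq_card_quotient_mul_card_subgroup (Subgroup.center ↥W)).symm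
    have hsum : qq + t = 3 := by
      rw [← pow_add] at hprod; exact Nat.pow_right_injective hp.two_le hprod
    have hWab : Subgroup.center ↥W = ⊤ := by
      have hqq1 : qq ≤ 1 := by omega
      interval_cases qq
      · refine Subgroup.eq_top_of_card_eq _ ?_
        rw [htcard, hWcard]; congr 1; omega
      · exact center_eq_top_of_cyclic_quotient (isCyclic_of_prime_card (p := p)
          (by rw [hqq, pow_one]))
    apply hne
    have hmem := Subgroup.mem_center_iff.mp (hWab ▸ Subgroup.mem_top (⟨b, hb⟩ : ↥W)) ⟨a, ha⟩
    exact congrArg Subtype.val hmem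

end MCAux

namespace MCAux

variable {p : ℕ}

open Subgroup QuotientGroup Pointwise

lemma normal_of_le_center {G : Type u} [Group G] {H : Subgroup G}
    (h : H ≤ Subgroup.center G) : H.Normal := by
  constructor
  intro n hn g
  have hc : g * n = n * g := Subgroup.mem_center_iff.mp (h hn) g
  have : g * n * g⁻¹ = n := by rw [hc]; group
  rwa [this]


/-- Dedekind modular law, with the middle subgroup normal. -/
lemma dedekind_sup_inf {G : Type u} [Group G] {A M N : Subgroup G} [N.Normal] (h : A ≤ M) :
    A ⊔ (N ⊓ M) = (A ⊔ N) ⊓ M := by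
  apply le_antisymm
  · exact sup_le (le_inf le_sup_left h) (le_inf (inf_le_left.trans le_sup_right) inf_le_right)
  · intro x hx
    obtain ⟨hx1, hx2⟩ := Subgroup.mem_inf.mp hx
    have hx1' : x ∈ (A : Set G) * (N : Set G) := by
      rw [← Subgroup.mul_normal A N]; exact hx1
    obtain ⟨a', ha', n, hn, rfl⟩ := hx1'
    have hnM : n ∈ N ⊓ M := Subgroup.mem_inf.mpr ⟨hn, by
      have : a'⁻¹ * (a' * n) ∈ M := mul_mem (inv_mem (h ha')) hx2
      simpa using this⟩
    exact mul_mem (Subgroup.mem_sup_left ha') (Subgroup.mem_sup_right hnM)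

lemma card_sup_mul_card_inf {G : Type u} [Group G] [Finite G] (A N : Subgroup G) [N.Normal] :
    Nat.card ↥(A ⊔ N) * Nat.card ↥(N.subgroupOf A) = Nat.card ↥A * Nat.card ↥N := by
  have e := QuotientGroup.quotientInfEquivProdNormalQuotient A N
  have h1 : Nat.card ↥A = Nat.card (↥A ⧸ N.subgroupOf A) * Nat.card ↥(N.subgroupOf A) :=
    Subgroup.card_eq_card_quotient_mul_card_subgroup _
  have h2 : Nat.card ↥(A ⊔ N) =
      Nat.card (↥(A ⊔ N) ⧸ N.subgroupOf (A ⊔ N)) * Nat.card ↥(N.subgroupOf (A ⊔ N)) :=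
    Subgroup.card_eq_card_quotient_mul_card_subgroup _
  have h3 : Nat.card (↥A ⧸ N.subgroupOf A) = Nat.card (↥(A ⊔ N) ⧸ N.subgroupOf (A ⊔ N)) :=
    Nat.card_congr e.toEquiv
  have h4 : Nat.card ↥(N.subgroupOf (A ⊔ N)) = Nat.card ↥N :=
    Nat.card_congr (subgroupOfEquivOfLe le_sup_right).toEquiv
  rw [h2, h1, h3, h4]
  ring

lemma commutes_of_mem_sup {G : Type u} [Group G] {A B : Subgroup G} {u : G}
    (hA : ∀ a ∈ A, a * u = u * a) (hB : ∀ b ∈ B, b * u = u * b) :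
    ∀ c ∈ A ⊔ B, c * u = u * c := by
  intro c hc
  have hle : A ⊔ B ≤ Subgroup.centralizer {u} := by
    refine sup_le ?_ ?_
    · intro a' ha'; exact Subgroup.mem_centralizer_singleton_iff.mpr (hA a' ha')
    · intro b' hb'; exact Subgroup.mem_centralizer_singleton_iff.mpr (hB b' hb')
  exact Subgroup.mem_centralizer_singleton_iff.mp (hle hc)

/-- Claim 1 + 1.5 : in the hard-lemma situation, the center of `C` has order `p` and is
contained in `A`. -/
lemma center_small (hp : p.Prime) {C : Type u} [Group C] [Finite C] (hpC : IsPGroup p C)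
    {A : Subgroup C} {a : ℕ} (ha : 2 ≤ a) (hcA : Nat.card A = p ^ a)
    (hcC : Nat.card C = p ^ (a + 2))
    (hScenter : ∀ M : Subgroup C, A ≤ M → A.relIndex M = p →
      Nat.card (Subgroup.center ↥M) = p) :
    Nat.card (Subgroup.center C) = p ∧ Subgroup.center C ≤ A := by
  haveI : Fact p.Prime := ⟨hp⟩
  set Z := Subgroup.center C with hZdef
  have hCnt : Nontrivial C := by
    rw [← Finite.one_lt_card_iff_nontrivial, hcC]
    exact Nat.one_lt_pow (by omega) hp.one_lt
  have hZnt : Nontrivial ↥Z := hpC.center_nontrivial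
  have hZge : p ≤ Nat.card ↥Z := by
    obtain ⟨z, _, hz⟩ := (Nat.dvd_prime_pow hp).mp (hcC ▸ Subgroup.card_subgroup_dvd_card Z)
    have hz1 : 1 ≤ z := by
      by_contra h0
      have : z = 0 := by omega
      rw [this, pow_zero] at hz
      exact (Finite.one_lt_card_iff_nontrivial.mpr hZnt).ne' hz
    calc p = p ^ 1 := (pow_one p).symm
      _ ≤ p ^ z := Nat.pow_le_pow_right hp.pos hz1
      _ = Nat.card ↥Z := hz.symm
  have hAne : A ≠ ⊤ := by
    intro h
    rw [h, Subgroup.card_top, hcC] at hcA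
    have := Nat.pow_right_injective hp.two_le hcA
    omega
  obtain ⟨M1, hAM1, hM1card, hM1rel⟩ := exists_over hp hpC hAne
  -- the key bound : central elements inside a maximal-class member form a small group
  have key : ∀ M : Subgroup C, Nat.card (Subgroup.center ↥M) = p →
      Nat.card ↥(Z ⊓ M) ≤ p := by
    intro M hM
    have hle : (Z ⊓ M).subgroupOf M ≤ Subgroup.center ↥M := by
      intro u hu
      rw [Subgroup.mem_center_iff]
      intro w
      refine Subtype.ext ?_
      show (w : C) * u = (u : C) * w
      exact Subgroup.mem_center_iff.mp (Subgroup.mem_subgroupOf.mp hu).1 w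
    calc Nat.card ↥(Z ⊓ M)
        = Nat.card ↥((Z ⊓ M).subgroupOf M) :=
          (Nat.card_congr (subgroupOfEquivOfLe inf_le_right).toEquiv).symm
      _ ≤ Nat.card (Subgroup.center ↥M) := Subgroup.card_le_of_le hle
      _ = p := hM
  -- nontrivial central element of A
  have hAnt : Nontrivial ↥A := by
    rw [← Finite.one_lt_card_iff_nontrivial, hcA]
    exact Nat.one_lt_pow (by omega) hp.one_lt
  haveI := hAnt
  haveI : Nontrivial (Subgroup.center ↥A) := (hpC.to_subgroup A).center_nontrivial
  obtain ⟨u, hu⟩ := exists_ne (1 : Subgroup.center ↥A)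
  set v : ↥A := (u : ↥A) with hvdef
  have hvne : v ≠ 1 := by
    intro h
    exact hu (by ext; exact congrArg Subtype.val h)
  have hvcommA : ∀ a' ∈ A, a' * (v : C) = (v : C) * a' := by
    intro a' ha'
    exact congrArg Subtype.val (Subgroup.mem_center_iff.mp u.2 ⟨a', ha'⟩)
  have hvcommZ : ∀ z ∈ Z, z * (v : C) = (v : C) * z := by
    intro z hz
    exact (Subgroup.mem_center_iff.mp hz (v : C)).symm
  -- (ii-b) : A ⊔ Z cannot be all of C
  have hsupne : A ⊔ Z ≠ ⊤ := by
    intro hAZ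
    set Z1 := Z ⊓ M1 with hZ1def
    haveI : Z1.Normal := normal_of_le_center inf_le_left
    have hMod : A ⊔ Z1 = M1 := by
      rw [hZ1def, dedekind_sup_inf hAM1, hAZ, top_inf_eq]
    have hcard_eq := card_sup_mul_card_inf A Z1
    rw [hMod] at hcard_eq
    have hZ1le : Nat.card ↥Z1 ≤ p := key M1 (hScenter M1 hAM1 hM1rel)
    have hApos : 0 < Nat.card ↥A := Nat.card_pos
    have hXeq : p * Nat.card ↥(Z1.subgroupOf A) = Nat.card ↥Z1 := by
      have h5 : Nat.card ↥A * (p * Nat.card ↥(Z1.subgroupOf A)) =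
          Nat.card ↥A * Nat.card ↥Z1 := by
        rw [← hcard_eq, hM1card]; ring
      exact Nat.eq_of_mul_eq_mul_left hApos h5
    have hX1 : Nat.card ↥(Z1.subgroupOf A) = 1 := by
      have hXpos : 0 < Nat.card ↥(Z1.subgroupOf A) := Nat.card_pos
      nlinarith [hp.two_le]
    have hvZ : (v : C) ∈ Z := by
      apply mem_center_of_comm
      intro y
      have hy : y ∈ A ⊔ Z := by rw [hAZ]; exact Subgroup.mem_top y
      exact commutes_of_mem_sup hvcommA hvcommZ y hy
    have hvmem : v ∈ Z1.subgroupOf A :=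
      Subgroup.mem_subgroupOf.mpr (Subgroup.mem_inf.mpr ⟨hvZ, hAM1 v.2⟩)
    rw [Subgroup.card_eq_one.mp hX1] at hvmem
    exact hvne (Subgroup.mem_bot.mp hvmem)
  by_cases hZA : Z ≤ A
  · -- card Z = p since Z sits inside M1
    refine ⟨le_antisymm ?_ hZge, hZA⟩
    have h1 := key M1 (hScenter M1 hAM1 hM1rel)
    rwa [inf_eq_left.mpr (hZA.trans hAM1)] at h1
  · -- build B = A ⊔ Z, get a contradiction
    exfalso
    set B := A ⊔ Z with hBdef
    obtain ⟨z0, hz0Z, hz0A⟩ : ∃ z0, z0 ∈ Z ∧ z0 ∉ A := by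
      by_contra h; push_neg at h; exact hZA h
    have hAltB : Nat.card ↥A < Nat.card ↥B := by
      rcases lt_or_eq_of_le (Subgroup.card_le_of_le (le_sup_left : A ≤ B)) with h | h
      · exact h
      · exfalso
        have : A = B := Subgroup.eq_of_le_of_card_ge le_sup_left (le_of_eq h.symm)
        exact hz0A (this ▸ Subgroup.mem_sup_right hz0Z)
    obtain ⟨b, hble, hbcard⟩ := (Nat.dvd_prime_pow hp).mp
      (hcC ▸ Subgroup.card_subgroup_dvd_card B)
    have hab' : a < b := by
      have : p ^ a < p ^ b := by rw [← hcA, ← hbcard]; exact hAltB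
      exact (Nat.pow_lt_pow_iff_right hp.one_lt).mp this
    have hbne : b ≠ a + 2 := by
      intro h
      exact hsupne (Subgroup.eq_top_of_card_eq _ (by rw [hbcard, h, hcC]))
    have hb1 : b = a + 1 := by omega
    have hBcard : Nat.card ↥B = p * Nat.card ↥A := by
      rw [hbcard, hb1, hcA, pow_succ, mul_comm]
    have hBrel : A.relIndex B = p := relindex_eq_of_card le_sup_left hBcard hp
    have hcenB : Nat.card (Subgroup.center ↥B) = p := hScenter B le_sup_left hBrel
    have hZcard : Nat.card ↥Z = p := by
      have h1 := key B hcenB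
      rw [inf_eq_left.mpr (le_sup_right : Z ≤ B)] at h1
      exact le_antisymm h1 hZge
    -- Z ⊓ A = ⊥
    have hZAbot : Z ⊓ A = ⊥ := by
      have hdvd : Nat.card ↥(Z ⊓ A) ∣ p := by
        rw [← hZcard]
        calc Nat.card ↥(Z ⊓ A) = Nat.card ↥((Z ⊓ A).subgroupOf Z) :=
              (Nat.card_congr (subgroupOfEquivOfLe inf_le_left).toEquiv).symm
          _ ∣ Nat.card ↥Z := Subgroup.card_subgroup_dvd_card _
      rcases (Nat.dvd_prime hp).mp hdvd with h | h
      · exact Subgroup.card_eq_one.mp h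
      · exfalso
        have : Z ⊓ A = Z := Subgroup.eq_of_le_of_card_ge inf_le_left (by rw [h, hZcard])
        exact hZA (this ▸ (inf_le_right : Z ⊓ A ≤ A))
    -- v is central in B
    have hvcen : (⟨(v : C), (le_sup_left : A ≤ B) v.2⟩ : ↥B) ∈ Subgroup.center ↥B := by
      rw [Subgroup.mem_center_iff]
      intro w
      refine Subtype.ext ?_
      show (w : C) * v = (v : C) * w
      exact commutes_of_mem_sup hvcommA hvcommZ w w.2
    have hZsubB : Z.subgroupOf B ≤ Subgroup.center ↥B := by
      intro w hw
      rw [Subgroup.mem_center_iff]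
      intro w'
      refine Subtype.ext ?_
      show (w' : C) * w = (w : C) * w'
      exact Subgroup.mem_center_iff.mp (Subgroup.mem_subgroupOf.mp hw) w'
    have hZeq : Z.subgroupOf B = Subgroup.center ↥B := by
      refine Subgroup.eq_of_le_of_card_ge hZsubB ?_
      rw [hcenB, Nat.card_congr (subgroupOfEquivOfLe (le_sup_right : Z ≤ B)).toEquiv, hZcard]
    rw [← hZeq] at hvcen
    have hvZ : (v : C) ∈ Z := Subgroup.mem_subgroupOf.mp hvcen
    have : v ∈ ((⊥ : Subgroup C).subgroupOf A) := by
      rw [← hZAbot]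
      exact Subgroup.mem_subgroupOf.mpr (Subgroup.mem_inf.mpr ⟨hvZ, v.2⟩)
    rw [Subgroup.mem_subgroupOf] at this
    exact hvne (by ext; exact Subgroup.mem_bot.mp this)

end MCAux

namespace MCAux

variable {p : ℕ}

open Subgroup QuotientGroup

lemma hard (hp : p.Prime) :
    ∀ N : ℕ, ∀ (C : Type u) [Group C] [Finite C], ∀ (_ : Nat.card C < N)
    (_ : IsPGroup p C) (A : Subgroup C), p < Nat.card A → A.index = p ^ 2 →
    (∀ M : Subgroup C, A ≤ M → A.relIndex M = p → IsMaximalClass p ↥M) →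
    IsMaximalClass p C := by
  intro N
  induction N using Nat.strong_induction_on with
  | _ N ih =>
    intro C _ _ hNC hpC A hAgt hAidx hS
    haveI : Fact p.Prime := ⟨hp⟩
    obtain ⟨n, hn⟩ := IsPGroup.iff_card.mp hpC
    obtain ⟨a, han, hcA⟩ := (Nat.dvd_prime_pow hp).mp (hn ▸ Subgroup.card_subgroup_dvd_card A)
    have hCA : Nat.card A * p ^ 2 = Nat.card C := by
      rw [← hAidx]; exact Subgroup.card_mul_index A
    have hcC : Nat.card C = p ^ (a + 2) := by
      rw [← hCA, hcA, ← pow_add]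
    have ha2 : 2 ≤ a := by
      have h1 : p ^ 1 < p ^ a := by rw [pow_one]; rw [hcA] at hAgt; exact hAgt
      have := (Nat.pow_lt_pow_iff_right hp.one_lt).mp h1
      omega
    have hcardM : ∀ M : Subgroup C, A ≤ M → A.relIndex M = p → Nat.card ↥M = p ^ (a + 1) := by
      intro M hAM hrel
      have h := relindex_card hAM
      rw [hrel, hcA, ← pow_succ'] at h
      exact h.symm
    have hScenter : ∀ M : Subgroup C, A ≤ M → A.relIndex M = p →
        Nat.card (Subgroup.center ↥M) = p := by
      intro M hAM hrel
      obtain ⟨m, hm2, hcardM', h1, h2⟩ := hS M hAM hrel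
      have hmeq : m = a + 1 := Nat.pow_right_injective hp.two_le
        (hcardM'.symm.trans (hcardM M hAM hrel))
      subst hmeq
      exact center_card_of_mc hp (hpC.to_subgroup M) (by omega) (hcardM M hAM hrel) h2
    obtain ⟨hZcard, hZA⟩ := center_small hp hpC ha2 hcA hcC hScenter
    by_cases ha2' : a = 2
    · exact base_p4 hp hpC (by rw [hcC, ha2']) hZcard
    · have ha3 : 3 ≤ a := by omega
      set Z := Subgroup.center C with hZdef
      have hpCq : IsPGroup p (C ⧸ Z) := hpC.to_quotient Z
      have hcCq : Nat.card (C ⧸ Z) = p ^ (a + 1) := by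
        have h := Subgroup.card_eq_card_quotient_mul_card_subgroup Z
        rw [hcC, hZcard] at h
        have h2 : p ^ (a + 2) = p ^ (a + 1) * p := by rw [← pow_succ]
        rw [h2] at h
        exact (Nat.eq_of_mul_eq_mul_right hp.pos h).symm
      set Aq := A.map (QuotientGroup.mk' Z) with hAqdef
      have hcAq : Nat.card Aq = p ^ (a - 1) := by
        have h := card_map_mk' Z A hZA
        rw [hZcard, hcA] at h
        have h2 : p ^ a = p ^ (a - 1) * p := by rw [← pow_succ]; congr 1; omega
        rw [h2] at h
        exact Nat.eq_of_mul_eq_mul_right hp.pos h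
      have hAqgt : p < Nat.card Aq := by
        rw [hcAq]
        calc p = p ^ 1 := (pow_one p).symm
          _ < p ^ (a - 1) := (Nat.pow_lt_pow_iff_right hp.one_lt).mpr (by omega)
      have hAqidx : Aq.index = p ^ 2 := by
        have h := Subgroup.card_mul_index Aq
        rw [hcAq, hcCq] at h
        have h2 : p ^ (a + 1) = p ^ (a - 1) * p ^ 2 := by rw [← pow_add]; congr 1; omega
        rw [h2] at h
        exact Nat.eq_of_mul_eq_mul_left (pow_pos hp.pos _) h
      have hSq : ∀ K : Subgroup (C ⧸ Z), Aq ≤ K → Aq.relIndex K = p → IsMaximalClass p ↥K := by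
        intro K hAqK hrelK
        set M := K.comap (QuotientGroup.mk' Z) with hMdef
        have hZM : Z ≤ M := by
          have h := Subgroup.ker_le_comap (f := QuotientGroup.mk' Z) K
          rwa [QuotientGroup.ker_mk'] at h
        have hAM : A ≤ M := le_trans (Subgroup.le_comap_map _ A) (Subgroup.comap_mono hAqK)
        have hmapM : M.map (QuotientGroup.mk' Z) = K :=
          Subgroup.map_comap_eq_self_of_surjective (QuotientGroup.mk'_surjective Z) K
        have hcK : Nat.card K = p ^ a := by
          have h := relindex_card hAqK
          rw [hrelK, hcAq, ← pow_succ'] at h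
          rw [← h]; congr 1; omega
        have hcM : Nat.card ↥M = p ^ (a + 1) := by
          have h := card_map_mk' Z M hZM
          rw [hmapM, hcK, hZcard, ← pow_succ] at h
          exact h.symm
        have hrelM : A.relIndex M = p :=
          relindex_eq_of_card hAM (by rw [hcM, hcA, pow_succ, mul_comm]) hp
        have hmc := hS M hAM hrelM
        have hres := mc_map_quotient hp hpC (hZA.trans hAM) hZcard hmc
          (by omega : 3 ≤ a + 1) hcM
        rwa [hmapM] at hres
      have hrec := ih (Nat.card C) hNC (C ⧸ Z)
        (by rw [hcCq, hcC]; exact (Nat.pow_lt_pow_iff_right hp.one_lt).mpr (by omega))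
        hpCq Aq hAqgt hAqidx hSq
      exact mc_lift hp hZcard hrec

lemma main_aux (hp : p.Prime) : ∀ I : ℕ, ∀ (G : Type u) [Group G] [Finite G],
    ∀ (_ : IsPGroup p G) (A : Subgroup G), A.index < I → A ≠ ⊤ → p < Nat.card A →
    (∀ H : Subgroup G, A ≤ H → A.relIndex H = p → IsMaximalClass p ↥H) →
    IsMaximalClass p G := by
  intro I
  induction I using Nat.strong_induction_on with
  | _ I ih =>
    intro G _ _ hpG A hAI hA hAcard hall
    haveI : Fact p.Prime := ⟨hp⟩
    obtain ⟨k, hk⟩ : ∃ k, A.index = p ^ k := by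
      obtain ⟨n, hn⟩ := IsPGroup.iff_card.mp hpG
      obtain ⟨k, _, hk⟩ := (Nat.dvd_prime_pow hp).mp (hn ▸ Subgroup.index_dvd_card (H := A))
      exact ⟨k, hk⟩
    have hk1 : 1 ≤ k := by
      by_contra h
      have h0 : k = 0 := by omega
      rw [h0, pow_zero] at hk
      exact hA (Subgroup.index_eq_one.mp hk)
    by_cases hk1' : k = 1
    · have htop := hall ⊤ le_top (by rw [Subgroup.relIndex_top_right, hk, hk1', pow_one])
      exact mc_of_mulEquiv Subgroup.topEquiv htop
    · obtain ⟨B, hAB, hBcard, hBrel⟩ := exists_over hp hpG hA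
      have hBidx : B.index = p ^ (k - 1) := by
        have h := Subgroup.relIndex_mul_index hAB
        rw [hBrel, hk] at h
        have h2 : p ^ k = p * p ^ (k - 1) := by rw [← pow_succ']; congr 1; omega
        rw [h2] at h
        exact Nat.eq_of_mul_eq_mul_left hp.pos h
      have hBne : B ≠ ⊤ := by
        intro h
        rw [h, Subgroup.index_top] at hBidx
        have := Nat.one_lt_pow (by omega : k - 1 ≠ 0) hp.one_lt
        omega
      have hBgt : p < Nat.card B := by
        rw [hBcard]
        nlinarith [hp.pos, hAcard, hp.two_le]
      have hBall : ∀ H : Subgroup G, B ≤ H → B.relIndex H = p → IsMaximalClass p ↥H := by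
        intro H hBH hrel
        have hAH : A ≤ H := hAB.trans hBH
        have hpH : IsPGroup p ↥H := hpG.to_subgroup H
        have hAsub_card : Nat.card (A.subgroupOf H) = Nat.card A :=
          Nat.card_congr (subgroupOfEquivOfLe hAH).toEquiv
        have hidx : (A.subgroupOf H).index = p ^ 2 := by
          have hmul := Subgroup.relIndex_mul_relIndex A B H hAB hBH
          have h2 : A.relIndex H = p * p := by rw [← hmul, hBrel, hrel]
          have h3 : (A.subgroupOf H).index = A.relIndex H := rfl
          rw [h3, h2, sq]
        have hSsub : ∀ K : Subgroup ↥H, A.subgroupOf H ≤ K →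
            (A.subgroupOf H).relIndex K = p → IsMaximalClass p ↥K := by
          intro K hK hrelK
          set K' := K.map H.subtype with hK'def
          have hAK' : A ≤ K' := by
            intro x hx
            exact Subgroup.mem_map.mpr ⟨⟨x, hAH hx⟩, hK (Subgroup.mem_subgroupOf.mpr hx), rfl⟩
          have hcK' : Nat.card K' = Nat.card K :=
            (Nat.card_congr (Subgroup.equivMapOfInjective _ _ H.subtype_injective).toEquiv).symm
          have hrelK' : A.relIndex K' = p := by
            refine relindex_eq_of_card hAK' ?_ hp
            rw [hcK']
            have h := relindex_card hK
            rw [hrelK, hAsub_card] at h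
            exact h.symm
          have hmcK' := hall K' hAK' hrelK'
          exact mc_of_mulEquiv (Subgroup.equivMapOfInjective K H.subtype H.subtype_injective).symm
            hmcK'
        exact hard hp (Nat.card ↥H + 1) ↥H (Nat.lt_succ_self _) hpH (A.subgroupOf H)
          (by rw [hAsub_card]; exact hAcard) hidx hSsub
      refine ih A.index hAI G hpG B ?_ hBne hBgt hBall
      rw [hBidx, hk]
      exact (Nat.pow_lt_pow_iff_right hp.one_lt).mpr (by omega)

end MCAux



/-- Let `G` be a finite `p`-group and `A < G` a subgroup of order `> p`. If every
subgroup of `G` containing `A` as a subgroup of index `p` is of maximal class, then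
`G` is of maximal class. -/
theorem stmt_15 {p : ℕ} (hp : p.Prime) (G : Type*) [Group G] [Finite G]
    (hpG : IsPGroup p G) (A : Subgroup G) (hA : A ≠ ⊤) (hAcard : p < Nat.card A)
    (hall : ∀ H : Subgroup G, A ≤ H → A.relIndex H = p → IsMaximalClass p H) :
    IsMaximalClass p G :=
  MCAux.main_aux hp (A.index + 1) G hpG A (Nat.lt_succ_self _) hA hAcard hall
end

section
/- Let G be a nonabelian finite p-group containing an abelian subgroup A of index p. If |G : G'| = p^2, then G is of maximal class. -/
open Subgroup
open scoped commutatorElement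
universe u
variable {G : Type u} [Group G]

/-- pairwise commuting generating set implies abelian -/
lemma my_comm_of_gen (S : Set G) (hS : Subgroup.closure S = ⊤)
    (h : ∀ a ∈ S, ∀ b ∈ S, a * b = b * a) : ∀ g k : G, g * k = k * g := by
  have hc : ∀ s ∈ S, s ∈ Subgroup.center G := by
    intro s hs
    rw [Subgroup.mem_center_iff]
    intro g
    have h1 : Subgroup.closure S ≤ Subgroup.centralizer {s} := by
      rw [Subgroup.closure_le]
      intro a ha
      rw [SetLike.mem_coe, Subgroup.mem_centralizer_iff]
      rintro y ⟨rfl⟩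
      exact (h _ ha _ hs).symm
    have := h1 (hS ▸ Subgroup.mem_top g)
    rw [Subgroup.mem_centralizer_iff] at this
    exact (this s rfl).symm
  have : Subgroup.center G = ⊤ := by
    rw [eq_top_iff, ← hS, Subgroup.closure_le]
    exact hc
  intro g k
  exact (Subgroup.mem_center_iff.mp (this ▸ Subgroup.mem_top g) k).symm

lemma my_eq_top {p : ℕ} (hp : p.Prime) [Finite G] {H K : Subgroup G} (hle : H ≤ K)
    (hne : H ≠ K) (hidx : H.index = p) : K = ⊤ := by
  have hd : K.index ∣ p := hidx ▸ Subgroup.index_dvd_of_le hle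
  rcases (Nat.Prime.eq_one_or_self_of_dvd hp _ hd) with h1 | h1
  · exact Subgroup.index_eq_one.mp h1
  · exfalso
    apply hne
    apply Subgroup.eq_of_le_of_card_ge hle
    have e1 : Nat.card H * p = Nat.card G := hidx ▸ Subgroup.card_mul_index H
    have e2 : Nat.card K * p = Nat.card G := by rw [← h1]; exact Subgroup.card_mul_index K
    have h3 := e1.trans e2.symm
    have hppos : 0 < p := hp.pos
    exact le_of_eq (Nat.eq_of_mul_eq_mul_right hppos h3.symm)

lemma my_sup_zpowers {p : ℕ} (hp : p.Prime) [Finite G] {H : Subgroup G} (hidx : H.index = p)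
    {x : G} (hx : x ∉ H) : H ⊔ Subgroup.zpowers x = ⊤ := by
  apply my_eq_top hp le_sup_left _ hidx
  intro h
  exact hx (h ▸ le_sup_right (a := H) (Subgroup.mem_zpowers x))

lemma my_nilp_comm [Finite G] {p : ℕ} [Fact p.Prime] (hpG : IsPGroup p G)
    (h : commutator G ≤ ⁅commutator G, (⊤ : Subgroup G)⁆) : ∀ a b : G, a * b = b * a := by
  haveI := hpG.isNilpotent
  have key : ∀ n, commutator G ≤ (⊤ : Subgroup G).lowerCentralSeries (n + 1) := by
    intro n
    induction n with
    | zero => rw [Subgroup.top_lowerCentralSeries_one]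
    | succ n ihn =>
      refine h.trans ?_
      rw [Subgroup.lowerCentralSeries_succ]
      exact Subgroup.commutator_mono ihn le_top
  obtain ⟨n, hn⟩ := Subgroup.nilpotent_iff_lowerCentralSeries.mp (hpG.isNilpotent)
  have hbot : commutator G = ⊥ := by
    rw [eq_bot_iff, ← hn]
    exact (key n).trans ((⊤ : Subgroup G).lowerCentralSeries_antitone (Nat.le_succ n))
  intro a b
  rw [← commutatorElement_eq_one_iff_mul_comm]
  have : ⁅a, b⁆ ∈ commutator G := commutator_mem_commutator (Subgroup.mem_top a) (Subgroup.mem_top b)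
  rwa [hbot, Subgroup.mem_bot] at this
lemma my_card_eq [Finite G] {p : ℕ} [Fact p.Prime] (hp : p.Prime) (hpG : IsPGroup p G)
    (hna : ¬ ∀ a b : G, a * b = b * a)
    (A : Subgroup G) (hab : ∀ a ∈ A, ∀ b ∈ A, a * b = b * a) (hidx : A.index = p) :
    Subgroup.center G ≤ A ∧
      Nat.card A = Nat.card (Subgroup.center G) * Nat.card (commutator G) := by
  have hAtop : A ≠ ⊤ := by
    intro h
    rw [h, Subgroup.index_top] at hidx
    exact hp.one_lt.ne' hidx.symm
  -- A is normal
  haveI hAnorm : A.Normal := by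
    haveI := hpG.isNilpotent
    rw [← Subgroup.normalizer_eq_top_iff]
    have hnc := _root_.normalizerCondition_of_isNilpotent (G := G)
    have hlt : A < normalizer (A : Set G) := hnc A (lt_top_iff_ne_top.mpr hAtop)
    exact my_eq_top hp hlt.le hlt.ne hidx
  -- choose x outside A
  obtain ⟨x, hx⟩ : ∃ x, x ∉ A := by
    by_contra h
    push_neg at h
    exact hAtop (Subgroup.eq_top_iff' A |>.mpr h)
  have hsup : A ⊔ Subgroup.zpowers x = ⊤ := my_sup_zpowers hp hidx hx
  -- center ≤ A
  have hZA : Subgroup.center G ≤ A := by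
    intro z hz
    by_contra hzA
    apply hna
    apply my_comm_of_gen ((A : Set G) ∪ {z})
    · rw [Subgroup.closure_union, Subgroup.closure_eq, ← Subgroup.zpowers_eq_closure]
      exact my_sup_zpowers hp hidx hzA
    · rintro a (ha | rfl) b (hb | rfl)
      · exact hab a ha b hb
      · exact Subgroup.mem_center_iff.mp hz a
      · exact (Subgroup.mem_center_iff.mp hz b).symm
      · rfl
  have hconj : ∀ a ∈ A, ∀ g : G, g * a * g⁻¹ ∈ A := fun a ha g => hAnorm.conj_mem a ha g
  have hmemA : ∀ a ∈ A, ⁅a, x⁆ ∈ A := by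
    intro a ha
    have : ⁅a, x⁆ = a * (x * a⁻¹ * x⁻¹) := by group
    rw [this]
    exact A.mul_mem ha (hconj a⁻¹ (A.inv_mem ha) x)
  -- the commutator homomorphism
  let φ : A →* G :=
    { toFun := fun a => ⁅(a : G), x⁆
      map_one' := by simp
      map_mul' := by
        intro a b
        have h1 : (a : G) * ⁅(b : G), x⁆ = ⁅(b : G), x⁆ * (a : G) :=
          hab _ a.2 _ (hmemA _ b.2)
        have h2 : ⁅(b : G), x⁆ * ⁅(a : G), x⁆ = ⁅(a : G), x⁆ * ⁅(b : G), x⁆ :=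
          hab _ (hmemA _ b.2) _ (hmemA _ a.2)
        calc ⁅((a * b : A) : G), x⁆ = (a : G) * ⁅(b : G), x⁆ * (a : G)⁻¹ * ⁅(a : G), x⁆ := by
              push_cast; group
          _ = ⁅(b : G), x⁆ * ⁅(a : G), x⁆ := by rw [h1]; group
          _ = ⁅(a : G), x⁆ * ⁅(b : G), x⁆ := h2 }
  have hφ : ∀ a : A, φ a = ⁅(a : G), x⁆ := fun a => rfl
  have hNA : φ.range ≤ A := by
    rintro _ ⟨a, rfl⟩
    exact hmemA _ a.2
  -- range is normal
  haveI hNnorm : φ.range.Normal := by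
    rw [← Subgroup.normalizer_eq_top_iff, eq_top_iff, ← hsup]
    apply sup_le
    · intro a ha
      rw [Subgroup.mem_normalizer_iff]
      intro h
      constructor
      · intro hh
        have : a * h * a⁻¹ = h := by
          have hc := hab a ha h (hNA hh)
          rw [hc]; group
        rwa [this]
      · intro hh
        have hmem : a * h * a⁻¹ ∈ A := hNA hh
        have h2 : h = a⁻¹ * (a * h * a⁻¹) * a := by group
        have : a * h * a⁻¹ = h := by
          have hc := hab a ha _ hmem
          calc a * h * a⁻¹ = a⁻¹ * (a * (a * h * a⁻¹)) * a * a⁻¹ := by group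
            _ = a⁻¹ * ((a * h * a⁻¹) * a) * a * a⁻¹ := by rw [hc]
            _ = h := by group
        rwa [← this]
    · rw [Subgroup.zpowers_le, Subgroup.mem_normalizer_iff]
      intro h
      constructor
      · rintro ⟨b, rfl⟩
        refine ⟨⟨x * b * x⁻¹, hconj _ b.2 x⟩, ?_⟩
        rw [hφ]
        show ⁅x * (b : G) * x⁻¹, x⁆ = x * ⁅(b : G), x⁆ * x⁻¹
        group
      · rintro ⟨b, hb⟩
        refine ⟨⟨x⁻¹ * b * x, by simpa using hconj _ b.2 x⁻¹⟩, ?_⟩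
        rw [hφ]
        have hbx : ⁅(b : G), x⁆ = x * h * x⁻¹ := by rw [← hφ]; exact hb
        show ⁅x⁻¹ * (b : G) * x, x⁆ = h
        have he : ⁅x⁻¹ * (b : G) * x, x⁆ = x⁻¹ * ⁅(b : G), x⁆ * x := by group
        rw [he, hbx]
        group
  -- G / range is abelian, so commutator G = range
  have hNcomm : φ.range = commutator G := by
    apply le_antisymm
    · rintro _ ⟨a, rfl⟩
      rw [hφ, _root_.commutator_def]
      exact Subgroup.commutator_mem_commutator (Subgroup.mem_top _) (Subgroup.mem_top _)
    · rw [_root_.commutator_def, Subgroup.commutator_le]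
      intro g _ k _
      set π := QuotientGroup.mk' φ.range with hπ
      have hcommN : ∀ u ∈ (A : Set G) ∪ {x}, ∀ v ∈ (A : Set G) ∪ {x}, ⁅u, v⁆ ∈ φ.range := by
        rintro u (hu | rfl) v (hv | rfl)
        · have : ⁅u, v⁆ = 1 := commutatorElement_eq_one_iff_mul_comm.mpr (hab u hu v hv)
          rw [this]; exact φ.range.one_mem
        · exact ⟨⟨u, hu⟩, (hφ _)⟩
        · have : ⁅u, v⁆ = ⁅v, u⁆⁻¹ := by group
          rw [this]
          exact φ.range.inv_mem ⟨⟨v, hv⟩, (hφ _)⟩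
        · rw [commutatorElement_self]; exact φ.range.one_mem
      have hQab : ∀ q r : G ⧸ φ.range, q * r = r * q := by
        apply my_comm_of_gen (π '' ((A : Set G) ∪ {x}))
        · rw [← MonoidHom.map_closure, Subgroup.closure_union, Subgroup.closure_eq,
            ← Subgroup.zpowers_eq_closure, hsup]
          exact Subgroup.map_top_of_surjective π (QuotientGroup.mk'_surjective _)
        · rintro _ ⟨u, hu, rfl⟩ _ ⟨v, hv, rfl⟩
          rw [← commutatorElement_eq_one_iff_mul_comm, ← map_commutatorElement]
          rw [← MonoidHom.mem_ker, QuotientGroup.ker_mk']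
          exact hcommN u hu v hv
      have : π ⁅g, k⁆ = 1 := by
        rw [map_commutatorElement]
        exact commutatorElement_eq_one_iff_mul_comm.mpr (hQab _ _)
      exact (QuotientGroup.eq_one_iff _).mp this
  -- kernel of φ is the center
  have hker : φ.ker = (Subgroup.center G).subgroupOf A := by
    ext a
    rw [MonoidHom.mem_ker, hφ, Subgroup.mem_subgroupOf]
    constructor
    · intro h1
      have hax : (a : G) * x = x * (a : G) := commutatorElement_eq_one_iff_mul_comm.mp h1
      rw [Subgroup.mem_center_iff]
      intro g
      have hcen : (⊤ : Subgroup G) ≤ Subgroup.centralizer {(a : G)} := by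
        rw [← hsup]
        apply sup_le
        · intro b hb
          rw [Subgroup.mem_centralizer_iff]
          rintro y ⟨rfl⟩
          exact hab _ a.2 b hb
        · rw [Subgroup.zpowers_le, Subgroup.mem_centralizer_iff]
          rintro y ⟨rfl⟩
          exact hax
      have := hcen (Subgroup.mem_top g)
      rw [Subgroup.mem_centralizer_iff] at this
      exact (this _ rfl).symm
    · intro h1
      rw [commutatorElement_eq_one_iff_mul_comm]
      exact Subgroup.mem_center_iff.mp h1 x |>.symm
  refine ⟨hZA, ?_⟩
  -- cardinality computation
  have e1 : Nat.card A = Nat.card (↥A ⧸ φ.ker) * Nat.card φ.ker :=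
    Subgroup.card_eq_card_quotient_mul_card_subgroup φ.ker
  have e2 : Nat.card (↥A ⧸ φ.ker) = Nat.card φ.range :=
    Nat.card_congr (QuotientGroup.quotientKerEquivRange φ).toEquiv
  have e3 : Nat.card φ.ker = Nat.card (Subgroup.center G) := by
    rw [hker]
    exact Nat.card_congr (Subgroup.subgroupOfEquivOfLe hZA).toEquiv
  have e4 : Nat.card φ.range = Nat.card (commutator G) := by rw [hNcomm]
  rw [e1, e2, e3, e4, Nat.mul_comm]
lemma my_center_le_commutator [Finite G] {p : ℕ} [Fact p.Prime] (hp : p.Prime)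
    (hpG : IsPGroup p G) (hna : ¬ ∀ a b : G, a * b = b * a)
    (hcomm : (commutator G).index = p ^ 2) : Subgroup.center G ≤ commutator G := by
  by_contra hle
  obtain ⟨z, hz, hzG'⟩ := SetLike.not_le_iff_exists.mp hle
  set K := commutator G ⊔ Subgroup.center G with hK
  have hKne : commutator G ≠ K := by
    intro h
    exact hzG' (h ▸ le_sup_right (a := commutator G) hz)
  have hdvd : K.index ∣ p ^ 2 := hcomm ▸ Subgroup.index_dvd_of_le le_sup_left
  have hKne2 : K.index ≠ p ^ 2 := by
    intro h
    apply hKne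
    apply Subgroup.eq_of_le_of_card_ge le_sup_left
    have e1 : Nat.card (commutator G) * p ^ 2 = Nat.card G := hcomm ▸ Subgroup.card_mul_index _
    have e2 : Nat.card K * p ^ 2 = Nat.card G := h ▸ Subgroup.card_mul_index K
    exact le_of_eq (Nat.eq_of_mul_eq_mul_right (pow_pos hp.pos 2) (e2.trans e1.symm))
  -- K has index 1 or p; get x with K ⊔ zpowers x = ⊤
  obtain ⟨x, hsup⟩ : ∃ x : G, K ⊔ Subgroup.zpowers x = ⊤ := by
    obtain ⟨i, hi2, hKi⟩ := (Nat.dvd_prime_pow hp).mp hdvd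
    interval_cases i
    · refine ⟨1, ?_⟩
      rw [eq_top_iff, ← Subgroup.index_eq_one.mp (by simpa using hKi)]
      exact le_sup_left
    · have hKtop : K ≠ ⊤ := by
        intro h
        rw [h, Subgroup.index_top] at hKi
        rw [pow_one] at hKi
        exact hp.one_lt.ne' hKi.symm
      obtain ⟨x, hx⟩ : ∃ x, x ∉ K := by
        by_contra h
        push_neg at h
        exact hKtop (Subgroup.eq_top_iff' K |>.mpr h)
      exact ⟨x, my_sup_zpowers hp (by rw [hKi, pow_one]) hx⟩
    · exact absurd hKi hKne2
  -- quotient by ⁅commutator G, ⊤⁆ is abelian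
  set M := ⁅commutator G, (⊤ : Subgroup G)⁆ with hM
  haveI : M.Normal := Subgroup.commutator_normal _ _
  set π := QuotientGroup.mk' M with hπ
  set T : Set G := ((commutator G : Set G) ∪ (Subgroup.center G : Set G)) ∪ {x} with hT
  have hcommT : ∀ u ∈ T, ∀ v ∈ T, ⁅u, v⁆ ∈ M := by
    rintro u (hu | rfl) v hv
    · rcases hu with hu | hu
      · exact Subgroup.commutator_mem_commutator hu (Subgroup.mem_top v)
      · have : ⁅u, v⁆ = 1 := commutatorElement_eq_one_iff_mul_comm.mpr
          ((Subgroup.mem_center_iff.mp hu v).symm)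
        rw [this]; exact M.one_mem
    · rcases hv with hv | rfl
      · rcases hv with hv | hv
        · have : ⁅u, v⁆ = ⁅v, u⁆⁻¹ := by group
          rw [this]
          exact M.inv_mem (Subgroup.commutator_mem_commutator hv (Subgroup.mem_top u))
        · have : ⁅u, v⁆ = 1 := commutatorElement_eq_one_iff_mul_comm.mpr
            (Subgroup.mem_center_iff.mp hv u)
          rw [this]; exact M.one_mem
      · rw [commutatorElement_self]; exact M.one_mem
  have hQab : ∀ q r : G ⧸ M, q * r = r * q := by
    apply my_comm_of_gen (π '' T)
    · rw [← MonoidHom.map_closure, hT, Subgroup.closure_union, Subgroup.closure_union,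
        Subgroup.closure_eq, Subgroup.closure_eq, ← Subgroup.zpowers_eq_closure, hsup]
      exact Subgroup.map_top_of_surjective π (QuotientGroup.mk'_surjective _)
    · rintro _ ⟨u, hu, rfl⟩ _ ⟨v, hv, rfl⟩
      rw [← commutatorElement_eq_one_iff_mul_comm, ← map_commutatorElement]
      exact (QuotientGroup.eq_one_iff _).mpr (hcommT u hu v hv)
  have hle2 : commutator G ≤ M := by
    rw [_root_.commutator_def, Subgroup.commutator_le]
    intro g _ k _
    have : π ⁅g, k⁆ = 1 := by
      rw [map_commutatorElement]
      exact commutatorElement_eq_one_iff_mul_comm.mpr (hQab _ _)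
    exact (QuotientGroup.eq_one_iff _).mp this
  exact hna (my_nilp_comm hpG hle2)
lemma my_key {p : ℕ} (hp : p.Prime) : ∀ (m : ℕ) (G : Type u) [Group G] [Finite G],
    IsPGroup p G → (¬ ∀ a b : G, a * b = b * a) →
    (∃ A : Subgroup G, (∀ a ∈ A, ∀ b ∈ A, a * b = b * a) ∧ A.index = p) →
    (commutator G).index = p ^ 2 → Nat.card G = p ^ m →
    3 ≤ m ∧ _root_.upperCentralSeries G (m - 1) = ⊤ ∧ _root_.upperCentralSeries G (m - 2) ≠ ⊤ := by
  intro m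
  induction m using Nat.strong_induction_on with
  | _ m ih =>
  intro G _ _ hpG hna hA hcomm hcard
  haveI : Fact p.Prime := ⟨hp⟩
  obtain ⟨A, hab, hidx⟩ := hA
  obtain ⟨hZA, hcards⟩ := my_card_eq hp hpG hna A hab hidx
  have hZG' := my_center_le_commutator hp hpG hna hcomm
  have hA1 : Nat.card A * p = p ^ m := by rw [← hcard, ← hidx]; exact Subgroup.card_mul_index A
  have hG'1 : Nat.card (commutator G) * p ^ 2 = p ^ m := by
    rw [← hcard, ← hcomm]; exact Subgroup.card_mul_index _
  have hm2 : 2 ≤ m := by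
    have : p ^ 2 ∣ p ^ m := Dvd.intro_left _ hG'1
    exact (Nat.pow_dvd_pow_iff_le_right hp.one_lt).mp this
  have hm3 : 3 ≤ m := by
    rcases Nat.lt_or_ge m 3 with h | h
    · exfalso
      have hm : m = 2 := by omega
      subst hm
      have hc1 : Nat.card (commutator G) = 1 :=
        Nat.eq_of_mul_eq_mul_right (pow_pos hp.pos 2) (hG'1.trans (one_mul _).symm)
      have hbot : commutator G = ⊥ := Subgroup.card_eq_one.mp hc1
      apply hna
      intro a b
      rw [← commutatorElement_eq_one_iff_mul_comm]
      have : ⁅a, b⁆ ∈ commutator G :=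
        Subgroup.commutator_mem_commutator (Subgroup.mem_top a) (Subgroup.mem_top b)
      rwa [hbot, Subgroup.mem_bot] at this
    · exact h
  have hG' : Nat.card (commutator G) = p ^ (m - 2) := by
    apply Nat.eq_of_mul_eq_mul_right (pow_pos hp.pos 2)
    rw [hG'1, ← pow_add]
    congr 1
    omega
  have hAcard : Nat.card A = p ^ (m - 1) := by
    apply Nat.eq_of_mul_eq_mul_right hp.pos
    rw [hA1, ← pow_succ]
    congr 1
    omega
  have hZcard : Nat.card (Subgroup.center G) = p := by
    have e : Nat.card (Subgroup.center G) * p ^ (m - 2) = p ^ (m - 1) := by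
      rw [← hG', ← hcards, hAcard]
    apply Nat.eq_of_mul_eq_mul_right (pow_pos hp.pos (m - 2))
    rw [e, show m - 1 = (m - 2) + 1 from by omega, pow_succ']
  haveI : Nontrivial G := by
    rcases subsingleton_or_nontrivial G with h | h
    · exact absurd (fun a b => Subsingleton.elim _ _) hna
    · exact h
  haveI := hpG.isNilpotent
  have hQp : IsPGroup p (G ⧸ Subgroup.center G) := hpG.to_quotient _
  have hQ1 : Nat.card (G ⧸ Subgroup.center G) * p = p ^ m := by
    have h0 := Subgroup.card_eq_card_quotient_mul_card_subgroup (Subgroup.center G)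
    rw [hcard, hZcard] at h0
    exact h0.symm
  have hQcard : Nat.card (G ⧸ Subgroup.center G) = p ^ (m - 1) := by
    apply Nat.eq_of_mul_eq_mul_right hp.pos
    rw [hQ1, ← pow_succ]
    congr 1
    omega
  haveI hQnilp : Group.IsNilpotent (G ⧸ Subgroup.center G) := (hpG.to_quotient _).isNilpotent
  have hclass : Group.nilpotencyClass G =
      Group.nilpotencyClass (G ⧸ Subgroup.center G) + 1 :=
    _root_.nilpotencyClass_eq_quotient_center_plus_one
  have hQclass : Group.nilpotencyClass (G ⧸ Subgroup.center G) = m - 2 := by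
    rcases eq_or_lt_of_le hm3 with h3 | h4
    · -- m = 3
      have hm : m = 3 := h3.symm
      have hcard2 : Nat.card (G ⧸ Subgroup.center G) = p ^ 2 := by
        rw [hQcard, hm]
      have hQab := IsPGroup.commutative_of_card_eq_prime_sq (p := p) hcard2
      haveI : Nontrivial (G ⧸ Subgroup.center G) := by
        apply Finite.one_lt_card_iff_nontrivial.mp
        rw [hcard2]
        exact Nat.one_lt_pow (by norm_num) hp.one_lt
      have hle1 : Group.nilpotencyClass (G ⧸ Subgroup.center G) ≤ 1 := by
        apply _root_.upperCentralSeries_eq_top_iff_nilpotencyClass_le.mp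
        rw [_root_.upperCentralSeries_one, eq_top_iff]
        intro q _
        exact Subgroup.mem_center_iff.mpr fun g => hQab g q
      have hne0 : Group.nilpotencyClass (G ⧸ Subgroup.center G) ≠ 0 := by
        intro h0
        haveI := _root_.nilpotencyClass_zero_iff_subsingleton.mp h0
        exact false_of_nontrivial_of_subsingleton (G ⧸ Subgroup.center G)
      omega
    · -- m ≥ 4 : recurse
      set π := QuotientGroup.mk' (Subgroup.center G) with hπ
      have hQna : ¬ ∀ a b : G ⧸ Subgroup.center G, a * b = b * a := by
        intro hQab
        have hle' : commutator G ≤ Subgroup.center G := by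
          rw [_root_.commutator_def, Subgroup.commutator_le]
          intro g _ k _
          apply (QuotientGroup.eq_one_iff _).mp
          show π ⁅g, k⁆ = 1
          rw [map_commutatorElement]
          exact commutatorElement_eq_one_iff_mul_comm.mpr (hQab _ _)
        have hdvd2 : Nat.card (commutator G) ∣ Nat.card (Subgroup.center G) :=
          Subgroup.card_dvd_of_le hle'
        rw [hG', hZcard] at hdvd2
        have hdvd3 : p ^ (m - 2) ∣ p ^ 1 := by rw [pow_one]; exact hdvd2
        have := (Nat.pow_dvd_pow_iff_le_right hp.one_lt).mp hdvd3
        omega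
      have hAQ : ∀ a ∈ A.map π, ∀ b ∈ A.map π, a * b = b * a := by
        rintro _ ⟨a, ha, rfl⟩ _ ⟨b, hb, rfl⟩
        rw [← map_mul, ← map_mul, hab a ha b hb]
      have hker : π.ker ≤ A := by rw [hπ, QuotientGroup.ker_mk']; exact hZA
      have hAQidx : (A.map π).index = p := by
        rw [Subgroup.index_map_eq A (QuotientGroup.mk'_surjective _) hker]
        exact hidx
      have hQcomm : (commutator (G ⧸ Subgroup.center G)).index = p ^ 2 := by
        have hcq : commutator (G ⧸ Subgroup.center G) = (commutator G).map π := by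
          rw [_root_.commutator_def, _root_.commutator_def, Subgroup.map_commutator,
            Subgroup.map_top_of_surjective π (QuotientGroup.mk'_surjective _)]
        have hker2 : π.ker ≤ commutator G := by
          rw [hπ, QuotientGroup.ker_mk']; exact hZG'
        rw [hcq, Subgroup.index_map_eq _ (QuotientGroup.mk'_surjective _) hker2]
        exact hcomm
      obtain ⟨-, h1, h2⟩ := ih (m - 1) (by omega) (G ⧸ Subgroup.center G) hQp hQna
        ⟨A.map π, hAQ, hAQidx⟩ hQcomm hQcard
      have hle : Group.nilpotencyClass (G ⧸ Subgroup.center G) ≤ m - 1 - 1 :=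
        _root_.upperCentralSeries_eq_top_iff_nilpotencyClass_le.mp h1
      have hgt : ¬ Group.nilpotencyClass (G ⧸ Subgroup.center G) ≤ m - 1 - 2 := fun hc =>
        h2 (_root_.upperCentralSeries_eq_top_iff_nilpotencyClass_le.mpr hc)
      omega
  refine ⟨hm3, ?_, ?_⟩
  · apply _root_.upperCentralSeries_eq_top_iff_nilpotencyClass_le.mpr
    rw [hclass, hQclass]
    omega
  · intro htop
    have := _root_.upperCentralSeries_eq_top_iff_nilpotencyClass_le.mp htop
    rw [hclass, hQclass] at this
    omega

/-- Let `G` be a nonabelian finite `p`-group containing an abelian subgroup `A`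
of index `p`. If `|G : G'| = p ^ 2`, then `G` is of maximal class. -/
theorem stmt_17 {p : ℕ} (hp : p.Prime) (G : Type*) [Group G] [Finite G]
    (hpG : IsPGroup p G) (hna : ¬ ∀ a b : G, a * b = b * a)
    (A : Subgroup G) (hab : ∀ a ∈ A, ∀ b ∈ A, a * b = b * a) (hidx : A.index = p)
    (hcomm : (commutator G).index = p ^ 2) :
    IsMaximalClass p G := by
  haveI : Fact p.Prime := ⟨hp⟩
  obtain ⟨m, hcard⟩ := IsPGroup.iff_card.mp hpG
  obtain ⟨hm3, h1, h2⟩ := my_key hp m G hpG hna ⟨A, hab, hidx⟩ hcomm hcard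
  exact ⟨m, by omega, hcard, h1, h2⟩
end
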